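/- arXiv:0901.1104 — 14 statements merged into one kernel-verified Lean document; each statement's English description precedes it below -/
import Mathlib

section
/- For every real t > 0, the Mathieu series ∑_{k=1}^∞ 2k/(k²+t²)² is strictly less than 1/t². -/
theorem mathieu_inequality (t : ℝ) (ht : 0 < t) :
    (∑' k : ℕ, 2 * ((k : ℝ) + 1) / (((k : ℝ) + 1) ^ 2 + t ^ 2) ^ 2) < 1 / t ^ 2 := by
  set g : ℕ → ℝ := fun k => 1 / (t ^ 2 + (k : ℝ) * ((k : ℝ) + 1)) with hg
  have ht2 : 0 < t ^ 2 := by positivity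
  have hden : ∀ k : ℕ, 0 < t ^ 2 + (k : ℝ) * ((k : ℝ) + 1) := by
    intro k
    have : (0:ℝ) ≤ (k : ℝ) * ((k : ℝ) + 1) := by positivity
    linarith
  have hgle : ∀ k : ℕ, 0 ≤ g k - g (k + 1) := by
    intro k
    have h1 := hden k
    have h2 := hden (k + 1)
    have : g (k + 1) ≤ g k := by
      apply one_div_le_one_div_of_le h1
      push_cast
      nlinarith [Nat.cast_nonneg (α := ℝ) k]
    linarith
  have hgtend : Filter.Tendsto g Filter.atTop (nhds 0) := by
    have hA : Filter.Tendsto (fun k : ℕ => t ^ 2 + (k : ℝ) * ((k : ℝ) + 1))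
        Filter.atTop Filter.atTop := by
      apply Filter.tendsto_atTop_add_const_left
      exact Filter.Tendsto.atTop_mul_atTop₀ tendsto_natCast_atTop_atTop
        (Filter.tendsto_atTop_add_const_right _ _ tendsto_natCast_atTop_atTop)
    have := tendsto_inv_atTop_zero.comp hA
    simpa [hg, Function.comp_def, one_div] using this
  have hsum : HasSum (fun k : ℕ => g k - g (k + 1)) (1 / t ^ 2) := by
    rw [hasSum_iff_tendsto_nat_of_nonneg hgle]
    have hrange : ∀ n : ℕ, ∑ i ∈ Finset.range n, (g i - g (i + 1)) = g 0 - g n :=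
      fun n => Finset.sum_range_sub' g n
    simp only [hrange]
    have hg0 : g 0 = 1 / t ^ 2 := by simp [hg]
    rw [← hg0]
    simpa using Filter.Tendsto.const_sub (g 0) hgtend
  have hterm : ∀ k : ℕ, 2 * ((k : ℝ) + 1) / (((k : ℝ) + 1) ^ 2 + t ^ 2) ^ 2
      < g k - g (k + 1) := by
    intro k
    have hk0 : (0:ℝ) ≤ (k : ℝ) := Nat.cast_nonneg k
    have h1 := hden k
    have h2 := hden (k + 1)
    push_cast at h2
    rw [hg]
    simp only
    push_cast
    rw [div_sub_div _ _ (ne_of_gt h1) (ne_of_gt h2),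
      div_lt_div_iff₀ (by positivity) (mul_pos h1 h2)]
    nlinarith [pow_pos (show (0:ℝ) < (k : ℝ) + 1 by linarith) 3, mul_pos h1 h2,
      sq_nonneg ((k : ℝ) + 1)]
  have h0 : ∀ k : ℕ, 0 ≤ 2 * ((k : ℝ) + 1) / (((k : ℝ) + 1) ^ 2 + t ^ 2) ^ 2 := by
    intro k; positivity
  calc (∑' k : ℕ, 2 * ((k : ℝ) + 1) / (((k : ℝ) + 1) ^ 2 + t ^ 2) ^ 2)
      < ∑' k : ℕ, (g k - g (k + 1)) :=
        Summable.tsum_lt_tsum_of_nonneg h0 (fun k => (hterm k).le) (hterm 0) hsum.summable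
    _ = 1 / t ^ 2 := hsum.tsum_eq
end

section
/- For every natural number k ≥ 1 and every real t ≠ 0, the inequalities 1/(k(k-1)+t²+1/2) − 1/(k(k+1)+t²+1/2) < 2k/(k²+t²)² < 1/(k(k-1)+t²) − 1/(k(k+1)+t²) hold. -/
theorem makai_termwise (k : ℕ) (hk : 1 ≤ k) (t : ℝ) (ht : t ≠ 0) :
    1 / ((k : ℝ) * ((k : ℝ) - 1) + t ^ 2 + 1 / 2)
      - 1 / ((k : ℝ) * ((k : ℝ) + 1) + t ^ 2 + 1 / 2)
      < 2 * (k : ℝ) / (((k : ℝ) ^ 2 + t ^ 2) ^ 2) ∧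
    2 * (k : ℝ) / (((k : ℝ) ^ 2 + t ^ 2) ^ 2)
      < 1 / ((k : ℝ) * ((k : ℝ) - 1) + t ^ 2)
        - 1 / ((k : ℝ) * ((k : ℝ) + 1) + t ^ 2) := by
  have hK : (1:ℝ) ≤ (k:ℝ) := by exact_mod_cast hk
  have ht2 : 0 < t ^ 2 := by positivity
  have hK0 : (0:ℝ) < (k:ℝ) := by linarith
  have h1 : 0 < (k : ℝ) * ((k : ℝ) - 1) + t ^ 2 + 1 / 2 := by nlinarith
  have h2 : 0 < (k : ℝ) * ((k : ℝ) + 1) + t ^ 2 + 1 / 2 := by nlinarith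
  have h3 : 0 < (k : ℝ) * ((k : ℝ) - 1) + t ^ 2 := by nlinarith
  have h4 : 0 < (k : ℝ) * ((k : ℝ) + 1) + t ^ 2 := by nlinarith
  have h5 : 0 < ((k : ℝ) ^ 2 + t ^ 2) ^ 2 := by positivity
  constructor
  · rw [div_sub_div _ _ h1.ne' h2.ne', div_lt_div_iff₀ (by positivity) h5]
    nlinarith [mul_pos ht2 (mul_pos h5 hK0), mul_pos ht2 hK0]
  · rw [div_sub_div _ _ h3.ne' h4.ne', div_lt_div_iff₀ h5 (by positivity)]
    nlinarith [mul_pos ht2 (mul_pos h5 hK0), mul_pos ht2 hK0, mul_pos (mul_pos h3 h4) hK0]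
end

section
/- For every real t > 0, 1/(t²+1/2) < ∑_{k=1}^∞ 2k/(k²+t²)² < 1/t². -/
open Filter Topology Finset

lemma telescope_hasSum (g : ℕ → ℝ) (hmono : ∀ n, g (n+1) ≤ g n)
    (hlim : Tendsto g atTop (nhds 0)) :
    HasSum (fun n => g n - g (n+1)) (g 0) := by
  rw [hasSum_iff_tendsto_nat_of_nonneg (fun n => sub_nonneg.2 (hmono n))]
  have : (fun n : ℕ => ∑ i ∈ range n, (g i - g (i+1))) = fun n => g 0 - g n := by
    funext n; exact Finset.sum_range_sub' g n
  rw [this]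
  simpa using tendsto_const_nhds.sub hlim

lemma makai_telescope (c : ℝ) (hc : 0 < c) :
    HasSum (fun n : ℕ => (fun m : ℕ => 1/((m:ℝ)*((m:ℝ)+1)+c)) n
      - (fun m : ℕ => 1/((m:ℝ)*((m:ℝ)+1)+c)) (n+1)) (1/c) := by
  have hpos : ∀ n : ℕ, (0:ℝ) < (n:ℝ)*((n:ℝ)+1)+c := by
    intro n
    have : (0:ℝ) ≤ (n:ℝ)*((n:ℝ)+1) := by positivity
    linarith
  have h0 : (fun m : ℕ => 1/((m:ℝ)*((m:ℝ)+1)+c)) 0 = 1/c := by norm_num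
  rw [← h0]
  apply telescope_hasSum
  · intro n
    apply one_div_le_one_div_of_le (hpos n)
    push_cast; nlinarith [Nat.cast_nonneg (α := ℝ) n]
  · have h1 : Tendsto (fun n : ℕ => (n:ℝ)*((n:ℝ)+1)+c) atTop atTop := by
      apply tendsto_atTop_mono (f := fun n : ℕ => (n:ℝ))
      · intro n
        have := Nat.cast_nonneg (α := ℝ) n
        nlinarith
      · exact tendsto_natCast_atTop_atTop
    simpa [one_div, Pi.inv_def] using h1.inv_tendsto_atTop

lemma makai_diff_eq (c : ℝ) (hc : 0 < c) (n : ℕ) :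
    (fun m : ℕ => 1/((m:ℝ)*((m:ℝ)+1)+c)) n - (fun m : ℕ => 1/((m:ℝ)*((m:ℝ)+1)+c)) (n+1)
      = 2*((n:ℝ)+1) / ((((n:ℝ)+1)^2 + c)^2 - ((n:ℝ)+1)^2) := by
  have hx : (0:ℝ) ≤ (n:ℝ) := Nat.cast_nonneg n
  have h1 : (0:ℝ) < (n:ℝ)*((n:ℝ)+1)+c := by nlinarith
  have h2 : (0:ℝ) < ((n+1:ℕ):ℝ)*(((n+1:ℕ):ℝ)+1)+c := by push_cast; nlinarith
  simp only
  rw [div_sub_div _ _ (ne_of_gt h1) (ne_of_gt h2)]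
  rw [div_eq_div_iff (by positivity) (by push_cast; nlinarith)]
  push_cast; ring

theorem makai_double_inequality (t : ℝ) (ht : 0 < t) :
    1 / (t ^ 2 + 1 / 2) < (∑' k : ℕ, 2 * ((k : ℝ) + 1) / (((k : ℝ) + 1) ^ 2 + t ^ 2) ^ 2) ∧
    (∑' k : ℕ, 2 * ((k : ℝ) + 1) / (((k : ℝ) + 1) ^ 2 + t ^ 2) ^ 2) < 1 / t ^ 2 := by
  have ht2 : (0:ℝ) < t^2 := by positivity
  set f : ℕ → ℝ := fun k => 2 * ((k : ℝ) + 1) / (((k : ℝ) + 1) ^ 2 + t ^ 2) ^ 2 with hf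
  -- upper telescoping sum
  have hU := makai_telescope (t^2) ht2
  have hL := makai_telescope (t^2 + 1/2) (by linarith)
  -- termwise inequalities
  have hxpos : ∀ n : ℕ, (0:ℝ) < (n:ℝ)+1 := fun n => by positivity
  have hApos : ∀ n : ℕ, (0:ℝ) < ((n:ℝ)+1)^2 + t^2 := fun n => by positivity
  have hupper : ∀ n : ℕ, f n <
      (fun m : ℕ => 1/((m:ℝ)*((m:ℝ)+1)+t^2)) n - (fun m : ℕ => 1/((m:ℝ)*((m:ℝ)+1)+t^2)) (n+1) := by
    intro n
    rw [makai_diff_eq _ ht2 n, hf]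
    have hx := hxpos n
    have hA := hApos n
    have hn : (0:ℝ) ≤ (n:ℝ) := Nat.cast_nonneg n
    have hD : (0:ℝ) < (((n:ℝ)+1)^2 + t^2)^2 - ((n:ℝ)+1)^2 := by
      have h1 : ((n:ℝ)+1) + t^2 ≤ ((n:ℝ)+1)^2 + t^2 := by nlinarith
      nlinarith
    apply div_lt_div_of_pos_left (by linarith) hD (by nlinarith)
  have hlower : ∀ n : ℕ,
      (fun m : ℕ => 1/((m:ℝ)*((m:ℝ)+1)+(t^2+1/2))) n
        - (fun m : ℕ => 1/((m:ℝ)*((m:ℝ)+1)+(t^2+1/2))) (n+1) < f n := by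
    intro n
    rw [makai_diff_eq _ (by linarith) n, hf]
    have hx := hxpos n
    have hA := hApos n
    apply div_lt_div_of_pos_left (by linarith) (by nlinarith) (by nlinarith)

  -- summability of f
  have hfnonneg : ∀ n, 0 ≤ f n := fun n => by
    have := hxpos n; have := hApos n; positivity
  have hfsummable : Summable f :=
    Summable.of_nonneg_of_le hfnonneg (fun n => (hupper n).le) hU.summable
  constructor
  · calc 1 / (t ^ 2 + 1 / 2) = ∑' n, ((fun m : ℕ => 1/((m:ℝ)*((m:ℝ)+1)+(t^2+1/2))) n
        - (fun m : ℕ => 1/((m:ℝ)*((m:ℝ)+1)+(t^2+1/2))) (n+1)) := hL.tsum_eq.symm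
    _ < ∑' n, f n := Summable.tsum_lt_tsum (fun n => (hlower n).le) (hlower 0) hL.summable hfsummable
  · calc (∑' n, f n) < ∑' n, ((fun m : ℕ => 1/((m:ℝ)*((m:ℝ)+1)+t^2)) n
        - (fun m : ℕ => 1/((m:ℝ)*((m:ℝ)+1)+t^2)) (n+1)) :=
          Summable.tsum_lt_tsum (fun n => (hupper n).le) (hupper 0) hfsummable hU.summable
    _ = 1 / t^2 := hU.tsum_eq
end

section
/- For every μ > 0, t > 0, and natural number k ≥ 1, the inequality 2kμ/(k²+t²)^{μ+1} < 1/(k(k-1)+t²)^μ − 1/(k(k+1)+t²)^μ holds. -/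
open Set

lemma key_deriv (μ : ℝ) (hμ : 0 < μ) (x : ℝ) (h0 : 0 < 1 - x) (h1 : 0 < 1 + x) :
    HasDerivAt (fun u : ℝ => (1 - u) ^ (-μ) - (1 + u) ^ (-μ) - 2 * μ * u)
      (μ * (1 - x) ^ (-μ - 1) + μ * (1 + x) ^ (-μ - 1) - 2 * μ) x := by
  have ha : HasDerivAt (fun y : ℝ => 1 - y) (-1) x := (hasDerivAt_id x).const_sub 1
  have hb : HasDerivAt (fun y : ℝ => 1 + y) 1 x := (hasDerivAt_id x).const_add 1
  have h2 := (Real.hasDerivAt_rpow_const (x := 1 - x) (p := -μ) (Or.inl h0.ne')).comp x ha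
  have h3 := (Real.hasDerivAt_rpow_const (x := 1 + x) (p := -μ) (Or.inl h1.ne')).comp x hb
  have h4 : HasDerivAt (fun u : ℝ => 2 * μ * u) (2 * μ) x := by
    simpa using (hasDerivAt_id x).const_mul (2 * μ)
  have := (h2.sub h3).sub h4
  refine this.congr_deriv ?_
  ring

lemma key (μ : ℝ) (hμ : 0 < μ) (u : ℝ) (hu0 : 0 < u) (hu1 : u < 1) :
    2 * μ * u < (1 - u) ^ (-μ) - (1 + u) ^ (-μ) := by
  set F : ℝ → ℝ := fun u => (1 - u) ^ (-μ) - (1 + u) ^ (-μ) - 2 * μ * u with hF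
  have hmono : StrictMonoOn F (Ico (0:ℝ) 1) := by
    apply strictMonoOn_of_deriv_pos (convex_Ico 0 1)
    · intro x hx
      exact (key_deriv μ hμ x (by linarith [hx.2]) (by linarith [hx.1])).continuousAt.continuousWithinAt
    · intro x hx
      rw [interior_Ico] at hx
      have h0 : 0 < 1 - x := by linarith [hx.2]
      have h1 : 0 < 1 + x := by linarith [hx.1]
      rw [(key_deriv μ hμ x h0 h1).deriv]
      have hp : 0 < μ + 1 := by linarith
      set a := (1 - x) ^ (-μ - 1) with ha
      set b := (1 + x) ^ (-μ - 1) with hb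
      have hab : (1 : ℝ) < a * b := by
        rw [ha, hb, ← Real.mul_rpow h0.le h1.le]
        have hlt : (1 - x) * (1 + x) < 1 := by nlinarith [hx.1, hx.2]
        have hpos : 0 < (1 - x) * (1 + x) := mul_pos h0 h1
        rw [show (-μ - 1 : ℝ) = -(μ + 1) by ring, Real.rpow_neg hpos.le]
        have hlt2 : ((1 - x) * (1 + x)) ^ (μ + 1) < 1 := by
          calc ((1 - x) * (1 + x)) ^ (μ + 1) < 1 ^ (μ + 1) :=
                Real.rpow_lt_rpow hpos.le hlt hp
            _ = 1 := Real.one_rpow _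
        exact (one_lt_inv_iff₀.mpr ⟨Real.rpow_pos_of_pos hpos _, hlt2⟩)
      have hapos : 0 < a := Real.rpow_pos_of_pos h0 _
      have hbpos : 0 < b := Real.rpow_pos_of_pos h1 _
      have : 2 < a + b := by nlinarith [sq_nonneg (a - b)]
      nlinarith
  have h := hmono (left_mem_Ico.mpr one_pos) ⟨hu0.le, hu1⟩ hu0
  have hF0 : F 0 = 0 := by simp [hF, Real.one_rpow]
  rw [hF0] at h
  simp only [hF] at h
  linarith

theorem diananda_termwise (μ t : ℝ) (hμ : 0 < μ) (ht : 0 < t) (k : ℕ) (hk : 1 ≤ k) :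
    2 * (k : ℝ) * μ / (((k : ℝ) ^ 2 + t ^ 2) ^ (μ + 1))
      < 1 / (((k : ℝ) * ((k : ℝ) - 1) + t ^ 2) ^ μ)
        - 1 / (((k : ℝ) * ((k : ℝ) + 1) + t ^ 2) ^ μ) := by
  have hk1 : (1:ℝ) ≤ (k:ℝ) := by exact_mod_cast hk
  set C : ℝ := (k:ℝ) ^ 2 + t ^ 2 with hCdef
  have hC : 0 < C := by positivity
  have hkC : (k:ℝ) < C := by nlinarith
  set u : ℝ := (k:ℝ) / C with hudef
  have hu0 : 0 < u := div_pos (by linarith) hC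
  have hu1 : u < 1 := (div_lt_one hC).mpr hkC
  have hCu : C * u = (k:ℝ) := by rw [hudef]; field_simp
  have h1u : 0 < 1 - u := by linarith
  have h2u : 0 < 1 + u := by linarith
  have hA : (k:ℝ) * ((k:ℝ) - 1) + t ^ 2 = C * (1 - u) := by
    rw [hudef, hCdef]; field_simp; ring
  have hB : (k:ℝ) * ((k:ℝ) + 1) + t ^ 2 = C * (1 + u) := by
    rw [hudef, hCdef]; field_simp; ring
  have hmulA : 1 / (C * (1 - u)) ^ μ = C ^ (-μ) * (1 - u) ^ (-μ) := by
    rw [Real.mul_rpow hC.le h1u.le, Real.rpow_neg hC.le, Real.rpow_neg h1u.le,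
      one_div, mul_inv]
  have hmulB : 1 / (C * (1 + u)) ^ μ = C ^ (-μ) * (1 + u) ^ (-μ) := by
    rw [Real.mul_rpow hC.le h2u.le, Real.rpow_neg hC.le, Real.rpow_neg h2u.le,
      one_div, mul_inv]
  have hLHS : 2 * (k:ℝ) * μ / C ^ (μ + 1) = (2 * μ * u) * C ^ (-μ) := by
    rw [Real.rpow_add hC, Real.rpow_one, Real.rpow_neg hC.le, hudef]
    have hpos : (0:ℝ) < C ^ μ := Real.rpow_pos_of_pos hC μ
    field_simp
  rw [hA, hB, hmulA, hmulB, hLHS]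
  have hkey := key μ hμ u hu0 hu1
  have hpos : 0 < C ^ (-μ) := Real.rpow_pos_of_pos hC _
  nlinarith [mul_lt_mul_of_pos_right hkey hpos]
end

section
/- For every μ > 0 and t > 0, the generalized Mathieu series ∑_{k=1}^∞ 2k/(k²+t²)^{μ+1} is strictly less than 1/(μ t^{2μ}). -/
open Real Filter Finset

private lemma midpoint_aux {b x p : ℝ} (hbx : 0 < b - x) (hx : 0 < x) (hp : p < 0) :
    2 * b ^ p < (b - x) ^ p + (b + x) ^ p := by
  have hb : 0 < b := by linarith
  have hA : 0 < b - x := hbx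
  have hB : 0 < b + x := by linarith
  have hAB : 0 < (b - x) * (b + x) := mul_pos hA hB
  have hlt : Real.sqrt ((b - x) * (b + x)) < b := by
    have h1 : (b - x) * (b + x) < b ^ 2 := by nlinarith
    calc Real.sqrt ((b - x) * (b + x)) < Real.sqrt (b ^ 2) :=
          Real.sqrt_lt_sqrt hAB.le h1
      _ = b := by rw [Real.sqrt_sq hb.le]
  have hsq : 0 < Real.sqrt ((b - x) * (b + x)) := Real.sqrt_pos.mpr hAB
  have h2 : b ^ p < (Real.sqrt ((b - x) * (b + x))) ^ p :=
    Real.rpow_lt_rpow_of_neg hsq hlt hp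
  -- AM-GM: (b-x)^p + (b+x)^p ≥ 2 * (sqrt ((b-x)*(b+x)))^p
  have h3 : (Real.sqrt ((b - x) * (b + x))) ^ p
      = Real.sqrt ((b - x) ^ p * (b + x) ^ p) := by
    rw [← Real.mul_rpow hA.le hB.le, Real.sqrt_eq_rpow, Real.sqrt_eq_rpow,
      ← Real.rpow_mul hAB.le, ← Real.rpow_mul hAB.le]
    ring_nf
  have h4 : 2 * Real.sqrt ((b - x) ^ p * (b + x) ^ p) ≤ (b - x) ^ p + (b + x) ^ p := by
    have hAp : 0 ≤ (b - x) ^ p := (Real.rpow_pos_of_pos hA p).le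
    have hBp : 0 ≤ (b + x) ^ p := (Real.rpow_pos_of_pos hB p).le
    nlinarith [sq_nonneg (Real.sqrt ((b - x) ^ p) - Real.sqrt ((b + x) ^ p)),
      Real.sq_sqrt hAp, Real.sq_sqrt hBp, Real.sqrt_mul_self hAp,
      Real.sqrt_mul hAp ((b + x) ^ p), Real.sqrt_nonneg ((b - x) ^ p),
      Real.sqrt_nonneg ((b + x) ^ p)]
  calc 2 * b ^ p < 2 * (Real.sqrt ((b - x) * (b + x))) ^ p := by linarith
    _ = 2 * Real.sqrt ((b - x) ^ p * (b + x) ^ p) := by rw [h3]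
    _ ≤ (b - x) ^ p + (b + x) ^ p := h4

private lemma diananda_key {μ t m : ℝ} (hμ : 0 < μ) (ht : 0 < t) (hm : 1 ≤ m) :
    2 * m * μ * (m ^ 2 + t ^ 2) ^ (-(μ + 1))
      < (m ^ 2 - m + t ^ 2) ^ (-μ) - (m ^ 2 + m + t ^ 2) ^ (-μ) := by
  set b : ℝ := m ^ 2 + t ^ 2 with hb
  have hbm : 0 < b - m := by nlinarith
  have hb0 : 0 < b := by nlinarith
  have hm0 : 0 < m := by linarith
  set φ : ℝ → ℝ := fun x => (b - x) ^ (-μ) - (b + x) ^ (-μ) - 2 * μ * b ^ (-(μ + 1)) * x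
    with hφ
  have hder : ∀ x ∈ Set.Icc (0 : ℝ) m,
      HasDerivAt φ (μ * (b - x) ^ (-μ - 1) + μ * (b + x) ^ (-μ - 1)
        - 2 * μ * b ^ (-(μ + 1))) x := by
    intro x hx
    have hbx : 0 < b - x := by have := hx.2; linarith
    have hbx' : 0 < b + x := by have := hx.1; linarith
    have h1 : HasDerivAt (fun x : ℝ => (b - x) ^ (-μ)) (μ * (b - x) ^ (-μ - 1)) x := by
      have := ((hasDerivAt_id x).const_sub b).rpow_const (p := -μ) (Or.inl hbx.ne')
      convert this using 1
      simp only [id_eq]; ring_nf; rfl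
    have h2 : HasDerivAt (fun x : ℝ => (b + x) ^ (-μ)) (-μ * (b + x) ^ (-μ - 1)) x := by
      have := ((hasDerivAt_id x).const_add b).rpow_const (p := -μ) (Or.inl hbx'.ne')
      convert this using 1
      simp only [id_eq]; ring_nf; rfl
    have h3 : HasDerivAt (fun x : ℝ => 2 * μ * b ^ (-(μ + 1)) * x)
        (2 * μ * b ^ (-(μ + 1))) x := by
      simpa using (hasDerivAt_id x).const_mul (2 * μ * b ^ (-(μ + 1)))
    have := (h1.sub h2).sub h3
    refine this.congr_deriv ?_
    ring
  have hmono : StrictMonoOn φ (Set.Icc 0 m) := by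
    apply strictMonoOn_of_deriv_pos (convex_Icc 0 m)
    · exact fun x hx => ((hder x hx).continuousAt).continuousWithinAt
    · intro x hx
      rw [interior_Icc] at hx
      rw [(hder x ⟨hx.1.le, hx.2.le⟩).deriv]
      have hbx : 0 < b - x := by have := hx.2; linarith
      have hmid := midpoint_aux (p := -μ - 1) hbx hx.1 (by linarith)
      have : b ^ (-(μ + 1)) = b ^ (-μ - 1) := by ring_nf
      rw [this]
      nlinarith [hmid, hμ]
  have h0m : (0 : ℝ) ∈ Set.Icc (0 : ℝ) m := ⟨le_refl 0, hm0.le⟩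
  have hmm : m ∈ Set.Icc (0 : ℝ) m := ⟨hm0.le, le_refl m⟩
  have := hmono h0m hmm hm0
  have hφ0 : φ 0 = 0 := by simp [hφ]
  rw [hφ0] at this
  have : 0 < (b - m) ^ (-μ) - (b + m) ^ (-μ) - 2 * μ * b ^ (-(μ + 1)) * m := this
  have hbm1 : b - m = m ^ 2 - m + t ^ 2 := by ring
  have hbm2 : b + m = m ^ 2 + m + t ^ 2 := by ring
  rw [hbm1, hbm2] at this
  linarith

theorem diananda_inequality (μ t : ℝ) (hμ : 0 < μ) (ht : 0 < t) :
    (∑' k : ℕ, 2 * ((k : ℝ) + 1) / ((((k : ℝ) + 1) ^ 2 + t ^ 2) ^ (μ + 1)))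
      < 1 / (μ * t ^ (2 * μ)) := by
  set a : ℕ → ℝ := fun k => 2 * ((k : ℝ) + 1) / ((((k : ℝ) + 1) ^ 2 + t ^ 2) ^ (μ + 1))
    with ha
  set c : ℕ → ℝ := fun k => (((k : ℝ) + 1) ^ 2 - ((k : ℝ) + 1) + t ^ 2) ^ (-μ) with hc
  set d : ℕ → ℝ := fun k => (c k - c (k + 1)) / μ with hd
  have hcpos : ∀ k : ℕ, 0 < ((k : ℝ) + 1) ^ 2 - ((k : ℝ) + 1) + t ^ 2 := by
    intro k
    have : (0 : ℝ) ≤ (k : ℝ) := Nat.cast_nonneg k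
    nlinarith
  have hkey : ∀ k : ℕ, a k < d k := by
    intro k
    have hm : (1 : ℝ) ≤ (k : ℝ) + 1 := by
      have : (0 : ℝ) ≤ (k : ℝ) := Nat.cast_nonneg k
      linarith
    have h := diananda_key (m := (k : ℝ) + 1) hμ ht hm
    have hck1 : c (k + 1) = (((k : ℝ) + 1) ^ 2 + ((k : ℝ) + 1) + t ^ 2) ^ (-μ) := by
      simp only [hc]
      congr 1
      push_cast
      ring
    have hbpos : (0 : ℝ) < ((k : ℝ) + 1) ^ 2 + t ^ 2 := by positivity
    have haeq : a k = 2 * ((k : ℝ) + 1) * ((((k : ℝ) + 1) ^ 2 + t ^ 2) ^ (-(μ + 1))) := by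
      rw [ha]
      simp only []
      rw [Real.rpow_neg hbpos.le, div_eq_mul_inv]
    rw [hd, haeq, lt_div_iff₀ hμ, hck1]
    simp only [hc]
    calc 2 * ((k : ℝ) + 1) * (((k : ℝ) + 1) ^ 2 + t ^ 2) ^ (-(μ + 1)) * μ
        = 2 * ((k : ℝ) + 1) * μ * (((k : ℝ) + 1) ^ 2 + t ^ 2) ^ (-(μ + 1)) := by ring
      _ < _ := h
  have ha0 : ∀ k, 0 ≤ a k := by
    intro k
    have hbpos : (0 : ℝ) < ((k : ℝ) + 1) ^ 2 + t ^ 2 := by positivity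
    have : (0 : ℝ) < (((k : ℝ) + 1) ^ 2 + t ^ 2) ^ (μ + 1) := Real.rpow_pos_of_pos hbpos _
    have hk : (0 : ℝ) ≤ (k : ℝ) + 1 := by positivity
    positivity
  have hd0 : ∀ k, 0 ≤ d k := fun k => le_of_lt (lt_of_le_of_lt (ha0 k) (hkey k))
  have hcn0 : ∀ k, 0 ≤ c k := fun k => (Real.rpow_pos_of_pos (hcpos k) _).le
  have hsum_range : ∀ n, ∑ i ∈ Finset.range n, d i = (c 0 - c n) / μ := by
    intro n
    rw [hd]
    rw [← Finset.sum_div, Finset.sum_range_sub' c n]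
  have hsummable_d : Summable d := by
    apply summable_of_sum_range_le (c := c 0 / μ) hd0
    intro n
    rw [hsum_range n]
    exact (div_le_div_iff_of_pos_right hμ).mpr (by linarith [hcn0 n])
  have hctend : Tendsto c atTop (nhds 0) := by
    have hbase : Tendsto (fun k : ℕ => ((k : ℝ) + 1) ^ 2 - ((k : ℝ) + 1) + t ^ 2)
        atTop atTop := by
      apply tendsto_atTop_mono (f := fun k : ℕ => (k : ℝ))
      · intro k
        have : (0 : ℝ) ≤ (k : ℝ) := Nat.cast_nonneg k
        nlinarith
      · exact tendsto_natCast_atTop_atTop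
    exact (tendsto_rpow_neg_atTop hμ).comp hbase
  have hsum_d : ∑' k, d k = c 0 / μ := by
    have h1 : HasSum d (c 0 / μ) := by
      rw [hasSum_iff_tendsto_nat_of_nonneg hd0]
      have : Tendsto (fun n => (c 0 - c n) / μ) atTop (nhds ((c 0 - 0) / μ)) :=
        ((tendsto_const_nhds.sub hctend).div_const μ)
      simp only [sub_zero] at this
      exact this.congr (fun n => (hsum_range n).symm)
    exact h1.tsum_eq
  have hlt : (∑' k, a k) < ∑' k, d k :=
    Summable.tsum_lt_tsum_of_nonneg ha0 (fun k => (hkey k).le) (hkey 0) hsummable_d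
  rw [hsum_d] at hlt
  have hc0 : c 0 = (t ^ 2) ^ (-μ) := by
    simp [hc]
  have hfinal : c 0 / μ = 1 / (μ * t ^ (2 * μ)) := by
    rw [hc0]
    have ht2 : t ^ (2 * μ) = (t ^ 2) ^ μ := by
      rw [show (2 : ℝ) * μ = ((2 : ℕ) : ℝ) * μ by norm_num,
        Real.rpow_mul ht.le, Real.rpow_natCast]
    rw [ht2, Real.rpow_neg (by positivity)]
    have : (0 : ℝ) < (t ^ 2) ^ μ := Real.rpow_pos_of_pos (by positivity) μ
    field_simp
  rw [hfinal] at hlt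
  exact hlt
end

section
/- Let g be convex on (0,∞) with ∫_1^∞ g(x) dx convergent. Then for every u ≥ −1 and y with u²+u+y > 0, ∑_{k=1}^∞ 2(k+u)·g((k+u)²+y) ≤ ∫_{u²+u+y}^∞ g(x) dx. -/
open Set MeasureTheory

private lemma aux_not_int {g : ℝ → ℝ} {T c : ℝ} (hc : 0 < c)
    (hb : ∀ t ∈ Set.Ioi T, c ≤ |g t|)
    (hI : MeasureTheory.IntegrableOn g (Set.Ioi T)) : False := by
  have h1 : MeasureTheory.IntegrableOn (fun _ : ℝ => c) (Set.Ioi T) := by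
    refine MeasureTheory.Integrable.mono hI aestronglyMeasurable_const ?_
    refine (ae_restrict_iff' measurableSet_Ioi).2 ?_
    filter_upwards with t ht
    simpa [Real.norm_eq_abs, abs_of_pos hc] using hb t ht
  rw [MeasureTheory.integrableOn_const_iff] at h1
  rcases h1 with h | h
  · exact absurd (by simpa using h : c = 0) hc.ne'
  · simp [Real.volume_Ioi] at h

private lemma aux_anti {g : ℝ → ℝ} (hg : ConvexOn ℝ (Set.Ioi (0 : ℝ)) g)
    (hint : MeasureTheory.IntegrableOn g (Set.Ioi (1 : ℝ))) :
    ∀ x ∈ Set.Ioi (0:ℝ), ∀ z ∈ Set.Ioi (0:ℝ), x ≤ z → g z ≤ g x := by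
  by_contra hcon
  push_neg at hcon
  obtain ⟨x, hx, z, hz, hxz, hlt⟩ := hcon
  have hxz' : x < z := lt_of_le_of_ne hxz (by rintro rfl; exact lt_irrefl _ hlt)
  set s : ℝ := (g z - g x) / (z - x) with hs_def
  have hs : 0 < s := div_pos (by linarith) (by linarith)
  have hgrow : ∀ t, z < t → g z + s * (t - z) ≤ g t := by
    intro t ht
    have h := hg.slope_mono_adjacent hx (show t ∈ Set.Ioi (0:ℝ) from lt_trans hz ht) hxz' ht
    have htz : 0 < t - z := by linarith
    have hsle : s ≤ (g t - g z) / (t - z) := by rw [hs_def]; exact h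
    have h2 : s * (t - z) ≤ g t - g z := by
      calc s * (t - z) ≤ ((g t - g z) / (t - z)) * (t - z) :=
            mul_le_mul_of_nonneg_right hsle htz.le
        _ = g t - g z := div_mul_cancel₀ _ htz.ne'
    linarith
  set T : ℝ := max 1 (z + (1 + |g z|) / s) with hT_def
  refine aux_not_int (one_pos) (g := g) (T := T) ?_ (hint.mono_set fun t ht => Set.mem_Ioi.2 (lt_of_le_of_lt (le_max_left _ _) ht))
  intro t ht
  have ht1 : z + (1 + |g z|) / s < t := lt_of_le_of_lt (le_max_right _ _) ht
  have hzt : z < t := by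
    have : 0 ≤ (1 + |g z|) / s := div_nonneg (by positivity) hs.le
    linarith
  have h1 : (1 + |g z|) / s < t - z := by linarith
  have h2 : 1 + |g z| < s * (t - z) := by
    rw [div_lt_iff₀ hs] at h1; linarith
  have h3 : 1 ≤ g t := by
    have := hgrow t hzt
    have : -|g z| ≤ g z := neg_abs_le _
    nlinarith [hgrow t hzt, neg_abs_le (g z)]
  calc (1:ℝ) ≤ g t := h3
    _ ≤ |g t| := le_abs_self _

private lemma aux_nonneg {g : ℝ → ℝ} (hg : ConvexOn ℝ (Set.Ioi (0 : ℝ)) g)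
    (hint : MeasureTheory.IntegrableOn g (Set.Ioi (1 : ℝ))) :
    ∀ x ∈ Set.Ioi (0:ℝ), 0 ≤ g x := by
  by_contra hcon
  push_neg at hcon
  obtain ⟨x, hx, hlt⟩ := hcon
  refine aux_not_int (c := -g x) (T := max 1 x) (by linarith) ?_
    (hint.mono_set fun t ht => Set.mem_Ioi.2 (lt_of_le_of_lt (le_max_left _ _) ht))
  intro t ht
  have hxt : x < t := lt_of_le_of_lt (le_max_right _ _) ht
  have ht0 : t ∈ Set.Ioi (0:ℝ) := lt_trans hx hxt
  have : g t ≤ g x := aux_anti hg hint x hx t ht0 hxt.le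
  rw [abs_of_neg (by linarith)]
  linarith

private lemma aux_hh {g : ℝ → ℝ} (hg : ConvexOn ℝ (Set.Ioi (0 : ℝ)) g)
    {a b : ℝ} (ha : 0 < a) (hab : a ≤ b) :
    (b - a) * g ((a + b) / 2) ≤ ∫ x in a..b, g x := by
  have cont : ContinuousOn g (Set.Ioi 0) := hg.continuousOn isOpen_Ioi
  have hIcc : Set.Icc a b ⊆ Set.Ioi 0 := fun t ht => lt_of_lt_of_le ha ht.1
  have hrefl_maps : ∀ x ∈ Set.Icc a b, a + b - x ∈ Set.Icc a b := by
    intro x hx; exact ⟨by linarith [hx.2], by linarith [hx.1]⟩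
  have hgI : IntervalIntegrable g volume a b := by
    apply ContinuousOn.intervalIntegrable
    rw [Set.uIcc_of_le hab]
    exact cont.mono hIcc
  have hgI2 : IntervalIntegrable (fun x => g (a + b - x)) volume a b := by
    apply ContinuousOn.intervalIntegrable
    rw [Set.uIcc_of_le hab]
    exact (cont.mono hIcc).comp (by fun_prop) hrefl_maps
  have key : ∀ x ∈ Set.Icc a b, g ((a + b) / 2) ≤ (g x + g (a + b - x)) / 2 := by
    intro x hx
    have hx0 : x ∈ Set.Ioi (0:ℝ) := hIcc hx
    have hx1 : a + b - x ∈ Set.Ioi (0:ℝ) := hIcc (hrefl_maps x hx)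
    have h := hg.2 hx0 hx1 (by norm_num : (0:ℝ) ≤ 1/2) (by norm_num : (0:ℝ) ≤ 1/2)
      (by norm_num)
    simp only [smul_eq_mul] at h
    have harg : (1/2 : ℝ) * x + (1/2 : ℝ) * (a + b - x) = (a + b) / 2 := by ring
    rw [harg] at h
    linarith
  have hmono : (∫ _ in a..b, g ((a + b) / 2)) ≤ ∫ x in a..b, (g x + g (a + b - x)) / 2 := by
    apply intervalIntegral.integral_mono_on hab intervalIntegrable_const
    · exact (hgI.add hgI2).div_const 2
    · exact key
  rw [intervalIntegral.integral_const, smul_eq_mul] at hmono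
  have hrefl : (∫ x in a..b, g (a + b - x)) = ∫ x in a..b, g x := by
    have := intervalIntegral.integral_comp_sub_left g (a + b) (a := a) (b := b)
    simpa using this
  have hsplit : (∫ x in a..b, (g x + g (a + b - x)) / 2)
      = ((∫ x in a..b, g x) + ∫ x in a..b, g (a + b - x)) / 2 := by
    rw [intervalIntegral.integral_div, intervalIntegral.integral_add hgI hgI2]
  rw [hsplit, hrefl] at hmono
  linarith

theorem mathieu_upper_hermite_hadamard (g : ℝ → ℝ)
    (hg : ConvexOn ℝ (Set.Ioi (0 : ℝ)) g)
    (hint : MeasureTheory.IntegrableOn g (Set.Ioi (1 : ℝ)))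
    (u y : ℝ) (hu : -1 ≤ u) (hy : 0 < u ^ 2 + u + y) :
    (∑' k : ℕ, 2 * ((k : ℝ) + 1 + u) * g (((k : ℝ) + 1 + u) ^ 2 + y))
      ≤ ∫ x in Set.Ioi (u ^ 2 + u + y), g x := by
  have hnn := aux_nonneg hg hint
  have cont : ContinuousOn g (Set.Ioi 0) := hg.continuousOn isOpen_Ioi
  set c : ℕ → ℝ := fun k => ((k : ℝ) + u) * ((k : ℝ) + u + 1) + y with hc_def
  have hc0 : c 0 = u ^ 2 + u + y := by simp [hc_def]; ring
  have hstep : ∀ k : ℕ, c k ≤ c (k + 1) := by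
    intro k
    have hk : (0:ℝ) ≤ (k : ℝ) := Nat.cast_nonneg k
    simp only [hc_def]
    push_cast
    nlinarith
  have hmid : ∀ k : ℕ, (c k + c (k + 1)) / 2 = ((k : ℝ) + 1 + u) ^ 2 + y := by
    intro k; simp only [hc_def]; push_cast; ring
  have hlen : ∀ k : ℕ, c (k + 1) - c k = 2 * ((k : ℝ) + 1 + u) := by
    intro k; simp only [hc_def]; push_cast; ring
  clear_value c
  clear hc_def
  have hmono : Monotone c := monotone_nat_of_le_succ hstep
  have hpos : ∀ k, 0 < c k := by
    intro k
    calc (0:ℝ) < c 0 := hc0 ▸ hy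
      _ ≤ c k := hmono (Nat.zero_le k)
  have hmidpos : ∀ k : ℕ, 0 < ((k : ℝ) + 1 + u) ^ 2 + y := by
    intro k
    have h1 := hstep k
    have h2 := hpos k
    have h3 := hmid k
    nlinarith
  have htnn : ∀ k : ℕ, 0 ≤ 2 * ((k : ℝ) + 1 + u) * g (((k : ℝ) + 1 + u) ^ 2 + y) := by
    intro k
    have hk : (0:ℝ) ≤ (k : ℝ) := Nat.cast_nonneg k
    have h1 : 0 ≤ 2 * ((k : ℝ) + 1 + u) := by linarith
    exact mul_nonneg h1 (hnn _ (hmidpos k))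
  have hterm : ∀ k : ℕ, 2 * ((k : ℝ) + 1 + u) * g (((k : ℝ) + 1 + u) ^ 2 + y)
      ≤ ∫ x in c k..c (k + 1), g x := by
    intro k
    have h := aux_hh hg (hpos k) (hstep k)
    rw [hmid k, hlen k] at h
    exact h
  -- integrability on Ioi (c 0)
  have hI1 : IntegrableOn g (Set.Ioc (c 0) 1) := by
    have : IntegrableOn g (Set.Icc (c 0) 1) :=
      (cont.mono (fun x hx => lt_of_lt_of_le (hpos 0) hx.1)).integrableOn_Icc
    exact this.mono_set Set.Ioc_subset_Icc_self
  have hIoi : IntegrableOn g (Set.Ioi (c 0)) := by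
    refine (hI1.union hint).mono_set ?_
    intro x hx
    rcases le_or_gt x 1 with h | h
    · exact Or.inl ⟨hx, h⟩
    · exact Or.inr h
  have hnn_ae : 0 ≤ᵐ[volume.restrict (Set.Ioi (c 0))] g := by
    refine (ae_restrict_iff' measurableSet_Ioi).2 ?_
    filter_upwards with x hx
    exact hnn x (lt_trans (hpos 0) hx)
  have hII : ∀ k : ℕ, IntervalIntegrable g volume (c k) (c (k + 1)) := by
    intro k
    apply ContinuousOn.intervalIntegrable
    rw [Set.uIcc_of_le (hstep k)]
    exact cont.mono (fun x hx => lt_of_lt_of_le (hpos k) hx.1)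
  have hII0 : ∀ n : ℕ, IntervalIntegrable g volume (c 0) (c n) := by
    intro n
    apply ContinuousOn.intervalIntegrable
    rw [Set.uIcc_of_le (hmono (Nat.zero_le n))]
    exact cont.mono (fun x hx => lt_of_lt_of_le (hpos 0) hx.1)
  have hpartial : ∀ n : ℕ, ∑ k ∈ Finset.range n,
      2 * ((k : ℝ) + 1 + u) * g (((k : ℝ) + 1 + u) ^ 2 + y) ≤ ∫ x in (c 0)..(c n), g x := by
    intro n
    induction n with
    | zero => simp
    | succ n ih =>
        rw [Finset.sum_range_succ]
        have hadd : (∫ x in (c 0)..(c n), g x) + (∫ x in (c n)..(c (n + 1)), g x)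
            = ∫ x in (c 0)..(c (n + 1)), g x :=
          intervalIntegral.integral_add_adjacent_intervals (hII0 n) (hII n)
        linarith [hterm n]
  have hfinal : ∀ n : ℕ, ∑ k ∈ Finset.range n,
      2 * ((k : ℝ) + 1 + u) * g (((k : ℝ) + 1 + u) ^ 2 + y)
      ≤ ∫ x in Set.Ioi (c 0), g x := by
    intro n
    refine le_trans (hpartial n) ?_
    rw [intervalIntegral.integral_of_le (hmono (Nat.zero_le n))]
    exact setIntegral_mono_set hIoi hnn_ae (HasSubset.Subset.eventuallyLE Set.Ioc_subset_Ioi_self)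
  rw [← hc0]
  exact Real.tsum_le_of_sum_range_le htnn hfinal
end

section
/- Let g be convex on (0,∞) with ∫_1^∞ g(x) dx convergent. Then for every u ≥ −3/2 and y > −(1+u)², ∫_{(1+u)²+y}^∞ g(x) dx + (1/2+u)·g((1+u)²+y) ≤ ∑_{k=1}^∞ 2(k+u)·g((k+u)²+y). -/
open MeasureTheory Set Filter

lemma mlhh_not_int (g : ℝ → ℝ) (hint : IntegrableOn g (Set.Ioi (1 : ℝ)))
    {c T : ℝ} (hT : 1 ≤ T) (hc : 0 < c) (h : ∀ x, T < x → c ≤ |g x|) : False := by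
  have h1 : IntegrableOn g (Set.Ioi T) := hint.mono_set (Set.Ioi_subset_Ioi hT)
  have h2 : IntegrableOn (fun _ : ℝ => c) (Set.Ioi T) := by
    refine MeasureTheory.Integrable.mono h1 aestronglyMeasurable_const ?_
    filter_upwards [ae_restrict_mem measurableSet_Ioi] with x hx
    simpa [Real.norm_eq_abs, abs_of_pos hc] using h x hx
  rw [integrableOn_const_iff] at h2
  rcases h2 with h2 | h2
  · exact hc.ne' (by simpa using h2)
  · simp [Real.volume_Ioi] at h2

lemma mlhh_anti (g : ℝ → ℝ) (hg : ConvexOn ℝ (Set.Ioi (0 : ℝ)) g)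
    (hint : IntegrableOn g (Set.Ioi (1 : ℝ))) :
    ∀ s t : ℝ, 0 < s → s ≤ t → g t ≤ g s := by
  intro s t hs hst
  rcases eq_or_lt_of_le hst with rfl | hlt
  · exact le_refl _
  by_contra hgt
  push_neg at hgt
  set m : ℝ := (g t - g s) / (t - s) with hm
  have hm0 : 0 < m := div_pos (by linarith) (by linarith)
  have key : ∀ x, t < x → g t + m * (x - t) ≤ g x := by
    intro x hx
    have h2 := hg.slope_mono_adjacent (Set.mem_Ioi.2 hs)
      (Set.mem_Ioi.2 (by linarith : (0:ℝ) < x)) hlt hx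
    have h3 : m * (x - t) ≤ g x - g t := by
      have := (le_div_iff₀ (by linarith : (0:ℝ) < x - t)).mp h2
      linarith
    linarith
  set T : ℝ := max (max t 1) ((1 - g t) / m + t) with hT
  refine mlhh_not_int g hint (T := T) (le_trans (le_max_right t 1) (le_max_left _ _)) one_pos ?_
  intro x hx
  have hxt : t < x := lt_of_le_of_lt (le_trans (le_max_left t 1) (le_max_left _ _)) hx
  have h4 : (1 - g t) / m + t < x := lt_of_le_of_lt (le_max_right _ _) hx
  have h5 : 1 ≤ g t + m * (x - t) := by
    have : (1 - g t) / m < x - t := by linarith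
    have := (div_lt_iff₀ hm0).mp this
    linarith
  have := key x hxt
  have : (1:ℝ) ≤ g x := by linarith
  exact le_abs.2 (Or.inl this)

lemma mlhh_nonneg (g : ℝ → ℝ) (hg : ConvexOn ℝ (Set.Ioi (0 : ℝ)) g)
    (hint : IntegrableOn g (Set.Ioi (1 : ℝ))) :
    ∀ t : ℝ, 0 < t → 0 ≤ g t := by
  intro t ht
  by_contra hneg
  push_neg at hneg
  refine mlhh_not_int g hint (le_max_right t 1) (neg_pos.2 hneg) ?_
  intro x hx
  have hxt : t ≤ x := le_of_lt (lt_of_le_of_lt (le_max_left t 1) hx)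
  have := mlhh_anti g hg hint t x ht hxt
  rw [abs_of_neg (by linarith)]
  linarith

lemma mlhh_contOn (g : ℝ → ℝ) (hg : ConvexOn ℝ (Set.Ioi (0 : ℝ)) g) :
    ContinuousOn g (Set.Ioi (0 : ℝ)) :=
  hg.continuousOn isOpen_Ioi

lemma mlhh_intble (g : ℝ → ℝ) (hg : ConvexOn ℝ (Set.Ioi (0 : ℝ)) g)
    {a b : ℝ} (ha : 0 < a) (hab : a ≤ b) : IntervalIntegrable g volume a b := by
  apply ContinuousOn.intervalIntegrable
  apply (mlhh_contOn g hg).mono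
  rw [Set.uIcc_of_le hab]
  intro x hx
  exact lt_of_lt_of_le ha hx.1

lemma mlhh_trapezoid (g : ℝ → ℝ) (hg : ConvexOn ℝ (Set.Ioi (0 : ℝ)) g)
    {a b : ℝ} (ha : 0 < a) (hab : a ≤ b) :
    ∫ x in a..b, g x ≤ (b - a) * (g a + g b) / 2 := by
  rcases eq_or_lt_of_le hab with rfl | hlt
  · simp
  set m : ℝ := (g b - g a) / (b - a) with hm
  have hba : (0:ℝ) < b - a := by linarith
  have key : ∀ x ∈ Set.Icc a b, g x ≤ m * x + (g a - m * a) := by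
    intro x hx
    have hwa : (0:ℝ) ≤ (b - x) / (b - a) := div_nonneg (by linarith [hx.2]) hba.le
    have hwb : (0:ℝ) ≤ (x - a) / (b - a) := div_nonneg (by linarith [hx.1]) hba.le
    have hsum : (b - x) / (b - a) + (x - a) / (b - a) = 1 := by
      field_simp
      ring
    have h2 := hg.2 (Set.mem_Ioi.2 ha) (Set.mem_Ioi.2 (lt_of_lt_of_le ha hab)) hwa hwb hsum
    have hcomb : ((b - x) / (b - a)) • a + ((x - a) / (b - a)) • b = x := by
      simp only [smul_eq_mul]
      field_simp
      ring
    rw [hcomb] at h2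
    have heq : (b - x) / (b - a) * g a + (x - a) / (b - a) * g b
        = m * x + (g a - m * a) := by
      rw [hm]; field_simp; ring
    calc g x ≤ (b - x) / (b - a) * g a + (x - a) / (b - a) * g b := h2
      _ = m * x + (g a - m * a) := heq
  have hint1 : IntervalIntegrable g volume a b := mlhh_intble g hg ha hab
  have hint2 : IntervalIntegrable (fun x => m * x + (g a - m * a)) volume a b :=
    ((continuous_const.mul continuous_id).add continuous_const).intervalIntegrable a b
  calc ∫ x in a..b, g x ≤ ∫ x in a..b, (m * x + (g a - m * a)) :=
        intervalIntegral.integral_mono_on hab hint1 hint2 key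
    _ = m * ((b^2 - a^2)/2) + (g a - m * a) * (b - a) := by
        rw [intervalIntegral.integral_add
          (IntervalIntegrable.const_mul intervalIntegral.intervalIntegrable_id m)
          (intervalIntegrable_const),
          intervalIntegral.integral_const_mul]
        simp [integral_id, smul_eq_mul]
        ring
    _ = (b - a) * (g a + g b) / 2 := by rw [hm]; field_simp; ring

lemma mlhh_rect (g : ℝ → ℝ) (hg : ConvexOn ℝ (Set.Ioi (0 : ℝ)) g)
    (hint : IntegrableOn g (Set.Ioi (1 : ℝ)))
    {a b : ℝ} (ha : 0 < a) (hab : a ≤ b) :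
    (b - a) * g b ≤ ∫ x in a..b, g x := by
  have h := intervalIntegral.integral_mono_on (f := fun _ => g b) (g := g) hab
    intervalIntegrable_const (mlhh_intble g hg ha hab) ?_
  · simpa [smul_eq_mul] using h
  · intro x hx
    exact mlhh_anti g hg hint x b (lt_of_lt_of_le ha hx.1) hx.2

lemma mlhh_intbleOn (g : ℝ → ℝ) (hg : ConvexOn ℝ (Set.Ioi (0 : ℝ)) g)
    (hint : IntegrableOn g (Set.Ioi (1 : ℝ))) {c : ℝ} (hc : 0 < c) :
    IntegrableOn g (Set.Ioi c) := by
  rcases le_or_gt 1 c with h | h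
  · exact hint.mono_set (Set.Ioi_subset_Ioi h)
  · have : Set.Ioi c = Set.Ioc c 1 ∪ Set.Ioi 1 := (Set.Ioc_union_Ioi_eq_Ioi h.le).symm
    rw [this]
    refine MeasureTheory.IntegrableOn.union ?_ hint
    have : IntegrableOn g (Set.Icc c 1) := by
      apply ContinuousOn.integrableOn_Icc
      apply (mlhh_contOn g hg).mono
      intro x hx; exact lt_of_lt_of_le hc hx.1
    exact this.mono_set Set.Ioc_subset_Icc_self

theorem mathieu_lower_hermite_hadamard (g : ℝ → ℝ)
    (hg : ConvexOn ℝ (Set.Ioi (0 : ℝ)) g)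
    (hint : MeasureTheory.IntegrableOn g (Set.Ioi (1 : ℝ)))
    (u y : ℝ) (hu : -(3 / 2) ≤ u) (hy : -(1 + u) ^ 2 < y) :
    (∫ x in Set.Ioi ((1 + u) ^ 2 + y), g x) + (1 / 2 + u) * g ((1 + u) ^ 2 + y)
      ≤ ∑' k : ℕ, 2 * ((k : ℝ) + 1 + u) * g (((k : ℝ) + 1 + u) ^ 2 + y) := by
  set t : ℕ → ℝ := fun k => ((k : ℝ) + 1 + u) ^ 2 + y with ht
  set f : ℕ → ℝ := fun k => 2 * ((k : ℝ) + 1 + u) * g (t k) with hf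
  have ht00 : t 0 = (1 + u) ^ 2 + y := by simp [ht]
  have ht0 : 0 < t 0 := by rw [ht00]; linarith
  have htmono : ∀ k : ℕ, t k ≤ t (k + 1) := by
    intro k
    simp only [ht]
    push_cast
    nlinarith [Nat.cast_nonneg (α := ℝ) k]
  have htm : Monotone t := monotone_nat_of_le_succ htmono
  have htpos : ∀ k : ℕ, 0 < t k := fun k => lt_of_lt_of_le ht0 (htm (Nat.zero_le k))
  have hgt : ∀ k : ℕ, 0 ≤ g (t k) := fun k => mlhh_nonneg g hg hint _ (htpos k)
  have hii : ∀ k : ℕ, IntervalIntegrable g MeasureTheory.volume (t k) (t (k + 1)) :=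
    fun k => mlhh_intble g hg (htpos k) (htmono k)
  -- the key partial-sum estimate
  have Q : ∀ N : ℕ, (∫ x in (t 0)..(t N), g x) + (1 / 2 + u) * g (t 0)
      + ((N : ℝ) + 3 / 2 + u) * g (t N) ≤ ∑ k ∈ Finset.range (N + 1), f k := by
    intro N
    induction N with
    | zero =>
      have hs1 : ∑ k ∈ Finset.range 1, f k = 2 * (1 + u) * g (t 0) := by
        rw [Finset.sum_range_one]; simp [hf]
      rw [hs1, intervalIntegral.integral_same]
      push_cast
      nlinarith [hgt 0]
    | succ N ih =>
      rw [Finset.sum_range_succ]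
      have hsplit : (∫ x in (t 0)..(t N), g x) + ∫ x in (t N)..(t (N + 1)), g x
          = ∫ x in (t 0)..(t (N + 1)), g x :=
        intervalIntegral.integral_add_adjacent_intervals
          (mlhh_intble g hg ht0 (htm (Nat.zero_le N))) (hii N)
      have htrap := mlhh_trapezoid g hg (htpos N) (htmono N)
      have hdiff : t (N + 1) - t N = 2 * (N : ℝ) + 3 + 2 * u := by
        simp only [ht]; push_cast; ring
      rw [hdiff] at htrap
      have hfN : f (N + 1) = 2 * ((N : ℝ) + 1 + 1 + u) * g (t (N + 1)) := by
        simp only [hf]; push_cast; ring_nf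
      rw [hfN]
      push_cast
      linarith [ih, htrap, hsplit]
  -- summability of f
  have hf_shift : ∀ i : ℕ, f (i + 2) ≤ 2 * ∫ x in (t (i + 1))..(t (i + 2)), g x := by
    intro i
    have hrect := mlhh_rect g hg hint (htpos (i + 1)) (htmono (i + 1))
    have hdiff : t (i + 2) - t (i + 1) = 2 * (i : ℝ) + 5 + 2 * u := by
      simp only [ht]; push_cast; ring
    rw [hdiff] at hrect
    have hgpos : 0 ≤ g (t (i + 2)) := hgt (i + 2)
    have hfi : f (i + 2) = 2 * ((i : ℝ) + 3 + u) * g (t (i + 2)) := by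
      simp only [hf]; push_cast; ring_nf
    rw [hfi]
    nlinarith [mul_nonneg (by nlinarith [Nat.cast_nonneg (α := ℝ) i] : (0:ℝ) ≤ (i : ℝ) + 2 + u) hgpos,
      Nat.cast_nonneg (α := ℝ) i]
  have hbound : ∀ n : ℕ, ∑ i ∈ Finset.range n, f (i + 2)
      ≤ 2 * ∫ x in Set.Ioi (t 1), g x := by
    intro n
    have e1 : ∑ i ∈ Finset.range n, (∫ x in (t (i + 1))..(t (i + 2)), g x)
        = ∫ x in (t 1)..(t (n + 1)), g x :=
      intervalIntegral.sum_integral_adjacent_intervals (fun i _ => hii (i + 1))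
    have e2 : (∫ x in (t 1)..(t (n + 1)), g x) ≤ ∫ x in Set.Ioi (t 1), g x := by
      rw [intervalIntegral.integral_of_le (htm (by omega : 1 ≤ n + 1))]
      refine MeasureTheory.setIntegral_mono_set
        (mlhh_intbleOn g hg hint (htpos 1)) ?_ ?_
      · filter_upwards [MeasureTheory.ae_restrict_mem measurableSet_Ioi] with x hx
        exact mlhh_nonneg g hg hint x (lt_trans (htpos 1) hx)
      · exact Filter.Eventually.of_forall (fun x hx => hx.1)
    calc ∑ i ∈ Finset.range n, f (i + 2)
        ≤ ∑ i ∈ Finset.range n, 2 * ∫ x in (t (i + 1))..(t (i + 2)), g x :=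
          Finset.sum_le_sum (fun i _ => hf_shift i)
      _ = 2 * ∫ x in (t 1)..(t (n + 1)), g x := by rw [← Finset.mul_sum, e1]
      _ ≤ 2 * ∫ x in Set.Ioi (t 1), g x := by linarith [e2]
  have hfnn : ∀ i : ℕ, 1 ≤ i → 0 ≤ f i := by
    intro i hi
    refine mul_nonneg (mul_nonneg (by norm_num) ?_) (hgt i)
    have : (1 : ℝ) ≤ (i : ℝ) := by exact_mod_cast hi
    linarith
  have hsum2 : Summable (fun i => f (i + 2)) :=
    summable_of_sum_range_le (fun i => hfnn (i + 2) (by omega)) hbound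
  have hsum : Summable f := (summable_nat_add_iff 2).mp hsum2
  -- limiting argument
  have htends : Filter.Tendsto t Filter.atTop Filter.atTop := by
    have h1 : Filter.Tendsto (fun k : ℕ => ((k : ℝ) + 1 + u)) Filter.atTop Filter.atTop :=
      Filter.tendsto_atTop_add_const_right _ u
        (Filter.tendsto_atTop_add_const_right _ 1 tendsto_natCast_atTop_atTop)
    have h2 := Filter.tendsto_atTop_add_const_right Filter.atTop y (h1.atTop_mul_atTop₀ h1)
    simpa [ht, pow_two] using h2
  have hT : Filter.Tendsto (fun N : ℕ => ∫ x in (t 0)..(t N), g x) Filter.atTop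
      (nhds (∫ x in Set.Ioi (t 0), g x)) :=
    MeasureTheory.intervalIntegral_tendsto_integral_Ioi (t 0)
      (mlhh_intbleOn g hg hint ht0) htends
  have hle : ∀ N : ℕ, (∫ x in (t 0)..(t N), g x) ≤ (∑' k, f k) - (1 / 2 + u) * g (t 0) := by
    intro N
    have h2 : ∑ k ∈ Finset.range (N + 1), f k ≤ ∑' k, f k :=
      Summable.sum_le_tsum (Finset.range (N + 1)) (fun k hk => hfnn k (by
        simp [Finset.mem_range] at hk; omega)) hsum
    have h3 : 0 ≤ ((N : ℝ) + 3 / 2 + u) * g (t N) :=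
      mul_nonneg (by nlinarith [Nat.cast_nonneg (α := ℝ) N]) (hgt N)
    linarith [Q N]
  have hfin := le_of_tendsto hT (Filter.Eventually.of_forall hle)
  rw [← ht00]
  linarith [hfin]
end

section
/- For every μ > 0, u ≥ −1 with u²+u+y > 0, the inequalities 1/(μ((1+u)²+y)^μ) + (1/2+u)/((1+u)²+y)^{μ+1} < ∑_{k=1}^∞ 2(k+u)/((k+u)²+y)^{μ+1} < 1/(μ(u²+u+y)^μ) hold. -/
open Real Set Filter

private lemma bern_neg {μ x : ℝ} (hμ : 0 < μ) (hx : -1 < x) (hx0 : x ≠ 0) :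
    1 - (μ + 1) * x < (1 + x) ^ (-(μ + 1)) := by
  have h1x : (0:ℝ) < 1 + x := by linarith
  set s : ℝ := -x / (1 + x) with hs
  have hs1 : 1 + s = (1 + x)⁻¹ := by
    rw [hs]; field_simp; ring
  have hsne : s ≠ 0 := div_ne_zero (neg_ne_zero.mpr hx0) (ne_of_gt h1x)
  have hsgt : -1 ≤ s := by
    have : (0:ℝ) < 1 + s := by rw [hs1]; positivity
    linarith
  have hB := one_add_mul_self_lt_rpow_one_add hsgt hsne (by linarith : 1 < μ + 1)
  have hpow : (1 + s) ^ (μ + 1) = (1 + x) ^ (-(μ + 1)) := by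
    rw [hs1, Real.inv_rpow h1x.le, ← Real.rpow_neg h1x.le]
  have hkey : -x ≤ s := by
    rw [hs, le_div_iff₀ h1x]
    nlinarith [sq_nonneg x]
  rw [← hpow]
  have := mul_le_mul_of_nonneg_left hkey (by linarith : (0:ℝ) ≤ μ + 1)
  linarith

private lemma tangent_lt {μ a b : ℝ} (hμ : 0 < μ) (ha : 0 < a) (hb : 0 < b) (hab : a ≠ b) :
    b ^ (-(μ+1)) + (a - b) * (-(μ+1)) * b ^ (-(μ+1)-1) < a ^ (-(μ+1)) := by
  set x : ℝ := a / b - 1 with hxdef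
  have hx : -1 < x := by
    have : 0 < a / b := div_pos ha hb
    simp [hxdef]; linarith
  have hx0 : x ≠ 0 := by
    intro h
    apply hab
    rw [hxdef, sub_eq_zero, div_eq_one_iff_eq hb.ne'] at h; exact h
  have habx : a = b * (1 + x) := by rw [hxdef, add_sub_cancel, mul_div_cancel₀ _ hb.ne']
  have hB := bern_neg hμ hx hx0
  have hbp : (0:ℝ) < b ^ (-(μ+1)) := rpow_pos_of_pos hb _
  have h1 : a ^ (-(μ+1)) = b ^ (-(μ+1)) * (1 + x) ^ (-(μ+1)) := by
    rw [habx, mul_rpow hb.le (by linarith : (0:ℝ) ≤ 1 + x)]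
  have h2 : b ^ (-(μ+1)) * (1 - (μ+1)*x) < b ^ (-(μ+1)) * (1 + x) ^ (-(μ+1)) :=
    mul_lt_mul_of_pos_left hB hbp
  have h3 : b ^ (-(μ+1)-1) = b ^ (-(μ+1)) / b := by
    rw [rpow_sub hb, rpow_one]
  have hxb : x * b = a - b := by rw [hxdef, sub_mul, div_mul_cancel₀ _ hb.ne', one_mul]
  have h4 : b ^ (-(μ+1)) + (a - b) * (-(μ+1)) * b ^ (-(μ+1)-1)
      = b ^ (-(μ+1)) * (1 - (μ+1)*x) := by
    rw [h3, ← hxb]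
    field_simp
    ring
  rw [h4, h1]
  exact h2



private lemma mid_lt {μ a c : ℝ} (hμ : 0 < μ) (ha : 0 < a) (hc : 0 < c) :
    2 * c * (a + c) ^ (-(μ+1)) < (a ^ (-μ) - (a + 2*c) ^ (-μ)) / μ := by
  have hμne : μ ≠ 0 := hμ.ne'
  have he : -μ - 1 = -(μ+1) := by ring
  set φ : ℝ → ℝ := fun t => (a ^ (-μ) - (a + 2*t) ^ (-μ)) / μ - 2 * t * (a + t) ^ (-(μ+1))
    with hφdef
  have hder : ∀ t ∈ Ici (0:ℝ), HasDerivAt φ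
      (2 * (a + 2*t) ^ (-(μ+1)) -
        (2 * (a + t) ^ (-(μ+1)) + 2 * t * (-(μ+1)) * (a + t) ^ (-(μ+1)-1))) t := by
    intro t ht
    have h1 : (0:ℝ) < a + t := by simp at ht; linarith
    have h2 : (0:ℝ) < a + 2*t := by simp at ht; linarith
    have hlin2 : HasDerivAt (fun s : ℝ => a + 2*s) 2 t := by
      simpa using ((hasDerivAt_id t).const_mul (2:ℝ)).const_add a
    have hlin1 : HasDerivAt (fun s : ℝ => a + s) 1 t := by
      simpa using (hasDerivAt_id t).const_add a
    have hl2 : HasDerivAt (fun s : ℝ => 2*s) 2 t := by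
      simpa using (hasDerivAt_id t).const_mul (2:ℝ)
    have hA : HasDerivAt (fun s => (a ^ (-μ) - (a + 2*s) ^ (-μ)) / μ)
        ((0 - 2 * -μ * (a + 2*t) ^ (-μ-1)) / μ) t :=
      ((hasDerivAt_const t (a ^ (-μ))).sub (hlin2.rpow_const (Or.inl h2.ne'))).div_const μ
    have hB : HasDerivAt (fun s => 2*s*(a+s) ^ (-(μ+1)))
        (2 * (a + t) ^ (-(μ+1)) + 2*t * (1 * -(μ+1) * (a + t) ^ (-(μ+1)-1))) t :=
      hl2.mul (hlin1.rpow_const (Or.inl h1.ne'))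
    refine (hA.sub hB).congr_deriv ?_
    rw [he]
    field_simp
    ring
  have hmono : StrictMonoOn φ (Ici 0) := by
    apply strictMonoOn_of_deriv_pos (convex_Ici 0)
    · exact fun t ht => (hder t ht).continuousAt.continuousWithinAt
    · intro t ht
      rw [interior_Ici] at ht
      have ht0 : (0:ℝ) < t := ht
      rw [(hder t (le_of_lt ht0)).deriv]
      have h1 : (0:ℝ) < a + t := by linarith
      have h2 : (0:ℝ) < a + 2*t := by linarith
      have htan := tangent_lt hμ (show 0 < a + 2*t from h2) h1 (by intro h; nlinarith)
      have haux : (a + 2*t) - (a + t) = t := by ring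
      rw [haux] at htan
      nlinarith [htan]
  have h0 : φ 0 = 0 := by simp [hφdef]
  have := hmono (self_mem_Ici) (mem_Ici.mpr hc.le) hc
  rw [h0] at this
  simp only [hφdef] at this
  linarith

private lemma trap_lt {μ a b : ℝ} (hμ : 0 < μ) (ha : 0 < a) (hab : a < b) :
    (a ^ (-μ) - b ^ (-μ)) / μ < (b - a) / 2 * (a ^ (-(μ+1)) + b ^ (-(μ+1))) := by
  have hμne : μ ≠ 0 := hμ.ne'
  have he : -μ - 1 = -(μ+1) := by ring
  set ψ : ℝ → ℝ := fun x => (x - a) / 2 * (a ^ (-(μ+1)) + x ^ (-(μ+1))) - (a ^ (-μ) - x ^ (-μ)) / μ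
    with hψdef
  have hder : ∀ x ∈ Ici a, HasDerivAt ψ
      ((a ^ (-(μ+1)) + x ^ (-(μ+1))) / 2 + (x - a) / 2 * (-(μ+1)) * x ^ (-(μ+1)-1)
        - x ^ (-(μ+1))) x := by
    intro x hx
    have hxpos : (0:ℝ) < x := lt_of_lt_of_le ha hx
    have hl : HasDerivAt (fun x : ℝ => (x - a) / 2) (1 / 2) x := by
      simpa using ((hasDerivAt_id x).sub_const a).div_const 2
    have hr : HasDerivAt (fun x : ℝ => a ^ (-(μ+1)) + x ^ (-(μ+1)))
        (-(μ+1) * x ^ (-(μ+1)-1)) x :=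
      (Real.hasDerivAt_rpow_const (p := -(μ+1)) (Or.inl hxpos.ne')).const_add (a ^ (-(μ+1)))
    have hs : HasDerivAt (fun x : ℝ => (a ^ (-μ) - x ^ (-μ)) / μ)
        ((0 - -μ * x ^ (-μ-1)) / μ) x :=
      ((hasDerivAt_const x (a ^ (-μ))).sub
        (Real.hasDerivAt_rpow_const (p := -μ) (Or.inl hxpos.ne'))).div_const μ
    refine ((hl.mul hr).sub hs).congr_deriv ?_
    rw [he]
    field_simp
    ring
  have hmono : StrictMonoOn ψ (Ici a) := by
    apply strictMonoOn_of_deriv_pos (convex_Ici a)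
    · exact fun x hx => (hder x hx).continuousAt.continuousWithinAt
    · intro x hx
      rw [interior_Ici] at hx
      have hxa : a < x := hx
      have hxpos : (0:ℝ) < x := lt_trans ha hxa
      rw [(hder x (le_of_lt hxa)).deriv]
      have htan := tangent_lt hμ ha hxpos (ne_of_lt hxa)
      nlinarith [htan]
  have h0 : ψ a = 0 := by simp [hψdef]
  have := hmono (self_mem_Ici) (mem_Ici.mpr hab.le) hab
  rw [h0] at this
  simp only [hψdef] at this
  linarith


theorem generalized_mathieu_double_inequality (μ u y : ℝ) (hμ : 0 < μ)
    (hu : -1 ≤ u) (hy : 0 < u ^ 2 + u + y) :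
    1 / (μ * ((1 + u) ^ 2 + y) ^ μ) + (1 / 2 + u) / (((1 + u) ^ 2 + y) ^ (μ + 1))
      < (∑' k : ℕ, 2 * ((k : ℝ) + 1 + u) / ((((k : ℝ) + 1 + u) ^ 2 + y) ^ (μ + 1))) ∧
    (∑' k : ℕ, 2 * ((k : ℝ) + 1 + u) / ((((k : ℝ) + 1 + u) ^ 2 + y) ^ (μ + 1)))
      < 1 / (μ * (u ^ 2 + u + y) ^ μ) := by
  have hμne : μ ≠ 0 := hμ.ne'
  set c : ℕ → ℝ := fun k => (k : ℝ) + 1 + u with hcdef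
  set m : ℕ → ℝ := fun k => ((k : ℝ) + 1 + u) ^ 2 + y with hmdef
  set p : ℕ → ℝ := fun k => ((k : ℝ) + u) * ((k : ℝ) + u + 1) + y with hpdef
  have hc0 : ∀ k : ℕ, 0 ≤ c k := by
    intro k
    have : (0:ℝ) ≤ (k:ℝ) := Nat.cast_nonneg k
    simp only [hcdef]; linarith
  have hp0 : p 0 = u ^ 2 + u + y := by simp only [hpdef]; push_cast; ring
  have hppos : ∀ k : ℕ, 0 < p k := by
    intro k
    have hk01 : (k:ℝ) = 0 ∨ 1 ≤ (k:ℝ) := by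
      rcases Nat.eq_zero_or_pos k with h | h
      · left; simp [h]
      · right; exact_mod_cast h
    simp only [hpdef]
    rcases hk01 with h | h
    · rw [h]; nlinarith
    · nlinarith
  have hmp : ∀ k : ℕ, m k = p k + c k := by
    intro k; simp only [hmdef, hpdef, hcdef]; ring
  have hpsucc : ∀ k : ℕ, p (k+1) = m k + c k := by
    intro k; simp only [hmdef, hpdef, hcdef]; push_cast; ring
  have hmpos : ∀ k : ℕ, 0 < m k := by
    intro k; rw [hmp k]; have := hc0 k; have := hppos k; linarith
  have hmsucc : ∀ k : ℕ, m (k+1) = m k + (2 * c k + 1) := by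
    intro k; simp only [hmdef, hcdef]; push_cast; ring
  set f : ℕ → ℝ := fun k => 2 * c k * (m k) ^ (-(μ+1)) with hfdef
  set g : ℕ → ℝ := fun k => (m k) ^ (-(μ+1)) with hgdef
  set T : ℕ → ℝ := fun k => ((p k) ^ (-μ) - (p (k+1)) ^ (-μ)) / μ with hTdef
  set L : ℕ → ℝ := fun k => ((m k) ^ (-μ) - (m (k+1)) ^ (-μ)) / μ with hLdef
  set R : ℕ → ℝ := fun k => (c k + 1/2) * (g k + g (k+1)) with hRdef
  set h1 : ℕ → ℝ := fun k => (c k + 1/2) * g k with hh1def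
  set h2 : ℕ → ℝ := fun k => (c k - 1/2) * g k with hh2def
  -- termwise upper bound
  have hfT : ∀ k, f k ≤ T k := by
    intro k
    rcases eq_or_lt_of_le (hc0 k) with h0 | hpos
    · have hc0' : c k = 0 := h0.symm
      have he1 : p (k+1) = p k := by rw [hpsucc k, hmp k, hc0']; ring
      simp only [hfdef, hTdef, hc0', he1]
      simp
    · have h := mid_lt (a := p k) (c := c k) hμ (hppos k) hpos
      rw [show p k + c k = m k from by rw [hmp k]] at h
      rw [show p k + 2 * c k = p (k+1) from by rw [hpsucc k, hmp k]; ring] at h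
      exact h.le
  have hfT1 : f 1 < T 1 := by
    have hpos : 0 < c 1 := by simp only [hcdef]; push_cast; linarith
    have h := mid_lt (a := p 1) (c := c 1) hμ (hppos 1) hpos
    rw [show p 1 + c 1 = m 1 from by rw [hmp 1]] at h
    rw [show p 1 + 2 * c 1 = p 2 from by rw [hpsucc 1, hmp 1]; ring] at h
    exact h
  -- termwise lower bound
  have hLR : ∀ k, L k < R k := by
    intro k
    have hlt : m k < m (k+1) := by rw [hmsucc k]; have := hc0 k; linarith
    have h := trap_lt (a := m k) (b := m (k+1)) hμ (hmpos k) hlt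
    simp only [hLdef, hRdef, hgdef]
    convert h using 2
    rw [hmsucc k]; ring
  -- p and m tend to infinity
  have hptop : Tendsto p atTop atTop := by
    apply tendsto_atTop_mono (g := p) (f := fun k : ℕ => (k : ℝ) + (u^2 + u + y - 1))
    · intro k
      have hk : (0:ℝ) ≤ (k:ℝ) := Nat.cast_nonneg k
      simp only [hpdef]
      nlinarith [sq_nonneg ((k:ℝ) - 1)]
    · exact tendsto_atTop_add_const_right _ _ tendsto_natCast_atTop_atTop
  have hmtop : Tendsto m atTop atTop := by
    apply tendsto_atTop_mono (g := m) (f := p)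
    · intro k; rw [hmp k]; have := hc0 k; linarith
    · exact hptop
  -- HasSum of telescoping series
  have htel : ∀ (q : ℕ → ℝ), (∀ k, 0 < q k) → (∀ k, q k ≤ q (k+1)) → Tendsto q atTop atTop →
      HasSum (fun k => ((q k) ^ (-μ) - (q (k+1)) ^ (-μ)) / μ) ((q 0) ^ (-μ) / μ) := by
    intro q hqpos hqmono hqtop
    have hnn : ∀ k, 0 ≤ ((q k) ^ (-μ) - (q (k+1)) ^ (-μ)) / μ := by
      intro k
      have := rpow_le_rpow_of_nonpos (hqpos k) (hqmono k) (neg_nonpos.mpr hμ.le)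
      exact div_nonneg (by linarith) hμ.le
    rw [hasSum_iff_tendsto_nat_of_nonneg hnn]
    have hps : ∀ n, ∑ i ∈ Finset.range n, ((q i) ^ (-μ) - (q (i+1)) ^ (-μ)) / μ
        = ((q 0) ^ (-μ) - (q n) ^ (-μ)) / μ := by
      intro n
      rw [← Finset.sum_div, Finset.sum_range_sub' (fun i => (q i) ^ (-μ)) n]
    have hq0 : Tendsto (fun n => (q n) ^ (-μ)) atTop (nhds 0) :=
      (tendsto_rpow_neg_atTop hμ).comp hqtop
    have := (tendsto_const_nhds (x := (q 0) ^ (-μ)).sub hq0).div_const μ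
    simp only [sub_zero] at this
    exact Tendsto.congr (fun n => (hps n).symm) this
  have hT : HasSum T ((u^2+u+y) ^ (-μ) / μ) := by
    have := htel p hppos (fun k => by rw [hpsucc k, hmp k]; have := hc0 k; linarith) hptop
    rw [hp0] at this
    exact this
  have hL : HasSum L ((m 0) ^ (-μ) / μ) :=
    htel m hmpos (fun k => by rw [hmsucc k]; have := hc0 k; linarith) hmtop
  -- summability
  have hfnn : ∀ k, 0 ≤ f k := fun k =>
    mul_nonneg (by have := hc0 k; linarith) (rpow_pos_of_pos (hmpos k) _).le
  have hfsumm : Summable f := Summable.of_nonneg_of_le hfnn hfT hT.summable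
  have hgnn : ∀ k, 0 ≤ g k := fun k => (rpow_pos_of_pos (hmpos k) _).le
  have hgsumm : Summable g := by
    rw [← summable_nat_add_iff 1]
    apply Summable.of_nonneg_of_le (fun k => hgnn (k+1)) (fun k => ?_)
      ((summable_nat_add_iff 1).mpr hfsumm)
    have hc1 : 1 ≤ c (k+1) := by simp only [hcdef]; push_cast; linarith [Nat.cast_nonneg (α := ℝ) k]
    have := hgnn (k+1)
    simp only [hfdef, hgdef] at *
    nlinarith
  have hfg : ∀ k, f k = 2 * c k * g k := fun k => rfl
  have hh1summ : Summable h1 := by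
    have : h1 = fun k => f k / 2 + g k / 2 := by
      funext k; simp only [hh1def, hfdef, hgdef]; ring
    rw [this]
    exact (hfsumm.div_const 2).add (hgsumm.div_const 2)
  have hh2summ : Summable h2 := by
    have : h2 = fun k => f k / 2 - g k / 2 := by
      funext k; simp only [hh2def, hfdef, hgdef]; ring
    rw [this]
    exact (hfsumm.div_const 2).sub (hgsumm.div_const 2)
  have hRre : R = fun k => h1 k + h2 (k+1) := by
    funext k
    simp only [hRdef, hh1def, hh2def, hcdef]
    push_cast
    ring
  have hRsumm : Summable R := by
    rw [hRre]
    exact hh1summ.add ((summable_nat_add_iff 1).mpr hh2summ)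
  -- sum of R
  have hRsum : ∑' k, R k = (∑' k, f k) - (u + 1/2) * g 0 := by
    have e1 : ∑' k, R k = (∑' k, h1 k) + ∑' k, h2 (k+1) := by
      rw [hRre]
      exact Summable.tsum_add hh1summ ((summable_nat_add_iff 1).mpr hh2summ)
    have e2 : ∑' k, h2 k = h2 0 + ∑' k, h2 (k+1) := Summable.tsum_eq_zero_add hh2summ
    have e3 : (∑' k, h1 k) + ∑' k, h2 k = ∑' k, f k := by
      rw [← Summable.tsum_add hh1summ hh2summ]
      apply tsum_congr
      intro k
      simp only [hh1def, hh2def, hfdef]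
      ring
    have e4 : h2 0 = (u + 1/2) * g 0 := by
      simp only [hh2def, hcdef]
      congr 1
      push_cast
      ring
    linarith [e1, e2, e3, e4]
  -- strict inequalities between sums
  have hupper : ∑' k, f k < (u^2+u+y) ^ (-μ) / μ := by
    rw [← hT.tsum_eq]
    exact Summable.tsum_lt_tsum_of_nonneg hfnn hfT hfT1 hT.summable
  have hLnn : ∀ k, 0 ≤ L k := by
    intro k
    have hle : m k ≤ m (k+1) := by rw [hmsucc k]; have := hc0 k; linarith
    have := rpow_le_rpow_of_nonpos (hmpos k) hle (neg_nonpos.mpr hμ.le)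
    simp only [hLdef]
    exact div_nonneg (by linarith) hμ.le
  have hlower : (m 0) ^ (-μ) / μ < (∑' k, f k) - (u + 1/2) * g 0 := by
    rw [← hRsum, ← hL.tsum_eq]
    exact Summable.tsum_lt_tsum_of_nonneg hLnn (fun k => (hLR k).le) (hLR 0) hRsumm
  -- identify goal sum with ∑' f
  have hgoal : (∑' k : ℕ, 2 * ((k : ℝ) + 1 + u) / ((((k : ℝ) + 1 + u) ^ 2 + y) ^ (μ + 1)))
      = ∑' k, f k := by
    apply tsum_congr
    intro k
    simp only [hfdef, hcdef, hmdef]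
    rw [Real.rpow_neg (hmpos k).le, div_eq_mul_inv]
  have hm0 : m 0 = (1 + u) ^ 2 + y := by simp only [hmdef]; norm_num
  have hM : (0:ℝ) < (1 + u) ^ 2 + y := by rw [← hm0]; exact hmpos 0
  constructor
  · rw [hgoal]
    have id1 : (m 0) ^ (-μ) / μ = 1 / (μ * ((1 + u) ^ 2 + y) ^ μ) := by
      rw [hm0, Real.rpow_neg hM.le]
      have := (rpow_pos_of_pos hM μ).ne'
      field_simp
    have id2 : (u + 1/2) * g 0 = (1 / 2 + u) / (((1 + u) ^ 2 + y) ^ (μ + 1)) := by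
      simp only [hgdef]
      rw [hm0, Real.rpow_neg hM.le]
      ring
    rw [← id1, ← id2]
    linarith
  · rw [hgoal]
    have id3 : (u^2+u+y) ^ (-μ) / μ = 1 / (μ * (u ^ 2 + u + y) ^ μ) := by
      rw [Real.rpow_neg hy.le]
      have := (rpow_pos_of_pos hy μ).ne'
      field_simp
    rw [← id3]
    exact hupper
end

section
/- Let f_a(x) = e^{−ax}(e^x − 1) − x for x > 0. If a ≤ 1/2 then f_a(x) > 0 for all x > 0; if a ≥ 1 then f_a(x) < 0 for all x > 0. -/
theorem f_a_sign (a x : ℝ) (hx : 0 < x) :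
    (a ≤ 1 / 2 → 0 < Real.exp (-a * x) * (Real.exp x - 1) - x) ∧
    (1 ≤ a → Real.exp (-a * x) * (Real.exp x - 1) - x < 0) := by
  have hexm : (0:ℝ) < Real.exp x - 1 := by
    have := Real.add_one_lt_exp (ne_of_gt hx)
    linarith
  constructor
  · intro ha
    have h1 : Real.exp (-(x/2)) ≤ Real.exp (-a * x) := by
      apply Real.exp_le_exp.mpr
      nlinarith
    have h2 : x < Real.exp (-(x/2)) * (Real.exp x - 1) := by
      have hs : x / 2 < Real.sinh (x / 2) := Real.self_lt_sinh_iff.mpr (by linarith)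
      rw [Real.sinh_eq] at hs
      have : Real.exp (-(x/2)) * (Real.exp x - 1) = Real.exp (x/2) - Real.exp (-(x/2)) := by
        rw [mul_sub, ← Real.exp_add]
        ring_nf
      rw [this]; linarith
    nlinarith [le_of_lt hexm]
  · intro ha
    have h1 : Real.exp (-a * x) ≤ Real.exp (-x) := by
      apply Real.exp_le_exp.mpr
      nlinarith
    have h2 : Real.exp (-x) * (Real.exp x - 1) < x := by
      have : Real.exp (-x) * (Real.exp x - 1) = 1 - Real.exp (-x) := by
        rw [mul_sub, ← Real.exp_add, neg_add_cancel, Real.exp_zero]; ring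
      rw [this]
      have := Real.add_one_lt_exp (show -x ≠ 0 by linarith)
      linarith
    nlinarith [le_of_lt hexm]
end

section
/- Let f_a(x) = e^{−ax}(e^x − 1) − x. If 1/2 < a < 1, then f_a does not preserve sign on (0,∞): there exist x₁, x₂ > 0 with f_a(x₁) < 0 < f_a(x₂). -/
lemma exp_upper3 {x : ℝ} (h0 : 0 ≤ x) (h1 : x ≤ 1) :
    Real.exp x ≤ 1 + x + x ^ 2 / 2 + (2 / 9) * x ^ 3 := by
  have h := Real.exp_bound (x := x) (by rw [abs_of_nonneg h0]; exact h1) (n := 3) (by norm_num)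
  rw [abs_le] at h
  have h2 := h.2
  simp [Finset.sum_range_succ, Nat.factorial] at h2
  rw [abs_of_nonneg h0] at h2
  nlinarith [h2]

lemma exp_lower3 {x : ℝ} (h0 : 0 ≤ x) (h1 : x ≤ 1) :
    1 + x + x ^ 2 / 2 - (2 / 9) * x ^ 3 ≤ Real.exp x := by
  have h := Real.exp_bound (x := x) (by rw [abs_of_nonneg h0]; exact h1) (n := 3) (by norm_num)
  rw [abs_le] at h
  have h2 := h.1
  simp [Finset.sum_range_succ, Nat.factorial] at h2
  rw [abs_of_nonneg h0] at h2
  nlinarith [h2]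

theorem f_a_sign_change (a : ℝ) (ha1 : 1 / 2 < a) (ha2 : a < 1) :
    ∃ x₁ x₂ : ℝ, 0 < x₁ ∧ 0 < x₂ ∧
      Real.exp (-a * x₁) * (Real.exp x₁ - 1) - x₁ < 0 ∧
      0 < Real.exp (-a * x₂) * (Real.exp x₂ - 1) - x₂ := by
  have ha0 : 0 < a := by linarith
  obtain ⟨x, hxdef⟩ : ∃ x : ℝ, x = a - 1/2 := ⟨_, rfl⟩
  have hx0 : 0 < x := by rw [hxdef]; linarith
  have hx1 : x ≤ 1/2 := by rw [hxdef]; linarith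
  obtain ⟨b, hbdef⟩ : ∃ b : ℝ, b = 1 - a := ⟨_, rfl⟩
  have hb0 : 0 < b := by rw [hbdef]; linarith
  obtain ⟨y, hydef⟩ : ∃ y : ℝ, y = 4 / b ^ 2 := ⟨_, rfl⟩
  have hy0 : 0 < y := by rw [hydef]; positivity
  refine ⟨x, y, hx0, hy0, ?_, ?_⟩
  · -- negative part: exp x - 1 < x * exp (a*x)
    have hax0 : 0 ≤ a * x := by positivity
    have hax1 : a * x ≤ 1 := by nlinarith
    have hub := exp_upper3 (le_of_lt hx0) (by linarith)
    have hlb := exp_lower3 hax0 hax1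
    have hpoly : x + x ^ 2 / 2 + (2/9) * x ^ 3 <
        x * (1 + a * x + (a * x) ^ 2 / 2 - (2/9) * (a * x) ^ 3) := by
      have ha : a = x + 1/2 := by rw [hxdef]; ring
      subst ha
      nlinarith [hx0, hx1, sq_nonneg x, mul_pos hx0 hx0,
        mul_pos (mul_pos hx0 hx0) hx0, mul_pos (mul_pos (mul_pos hx0 hx0) hx0) hx0]
    have key : Real.exp x - 1 < x * Real.exp (a * x) := by
      have := mul_le_mul_of_nonneg_left hlb (le_of_lt hx0)
      linarith
    have hpos : 0 < Real.exp (-a * x) := Real.exp_pos _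
    have hmul : Real.exp (-a * x) * Real.exp (a * x) = 1 := by
      rw [← Real.exp_add]; ring_nf; exact Real.exp_zero
    have hlt := mul_lt_mul_of_pos_left key hpos
    calc Real.exp (-a * x) * (Real.exp x - 1) - x
        < Real.exp (-a * x) * (x * Real.exp (a * x)) - x := by linarith
      _ = x * (Real.exp (-a * x) * Real.exp (a * x)) - x := by ring
      _ = 0 := by rw [hmul]; ring
  · -- positive part
    have hsplit : Real.exp (-a * y) * (Real.exp y - 1)
        = Real.exp (b * y) - Real.exp (-a * y) := by
      rw [mul_sub, ← Real.exp_add, mul_one, hbdef]; ring_nf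
    have h1 : Real.exp (-a * y) < 1 := by
      apply Real.exp_lt_one_iff.mpr; nlinarith
    have h2 : (1 + b * y / 2) ^ 2 ≤ Real.exp (b * y) := by
      have he : Real.exp (b * y) = Real.exp (b * y / 2) ^ 2 := by
        rw [sq, ← Real.exp_add]; ring_nf
      rw [he]
      have hle : 1 + b * y / 2 ≤ Real.exp (b * y / 2) := by
        linarith [Real.add_one_le_exp (b * y / 2)]
      have hnn : (0:ℝ) ≤ 1 + b * y / 2 := by positivity
      nlinarith [Real.exp_pos (b * y / 2)]
    have hb2y : b ^ 2 * y = 4 := by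
      rw [hydef]; field_simp
    have h4 : b ^ 2 * y * y = 4 * y := by rw [hb2y]
    have hby : 0 < b * y := by positivity
    have h3 : 1 + y < (1 + b * y / 2) ^ 2 := by nlinarith [h4, hby]
    rw [hsplit]
    linarith
end

section
/- The third derivative of F(x) = x/(e^x − 1) is strictly negative for all x > 0; consequently F'' > 0 and F' < 0 on (0,∞). -/
open Real Set Filter

/-- Generic exponential-polynomial form used throughout:
`P a b c d k m y = (a - b y) e^{2y} - c (d+y) e^y - k y - m`. -/
noncomputable def P (a b c d k m y : ℝ) : ℝ :=
  (a - b*y) * (Real.exp y * Real.exp y) - c*(d+y)*Real.exp y - k*y - m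

lemma hdP (a b c d k m y : ℝ) :
    HasDerivAt (fun z => P a b c d k m z) (P (2*a-b) (2*b) c (1+d) 0 k y) y := by
  have he := Real.hasDerivAt_exp y
  have t2 := (((hasDerivAt_id y).const_mul b).const_sub a).mul (he.mul he)
  have t3 := (((hasDerivAt_id y).const_add d).const_mul c).mul he
  have t4 := (hasDerivAt_id y).const_mul k
  have total := ((t2.sub t3).sub t4).sub_const m
  have hval : P (2*a-b) (2*b) c (1+d) 0 k y =
      -(b * 1) * (Real.exp y * Real.exp y) +
        (a - b * id y) * (Real.exp y * Real.exp y + Real.exp y * Real.exp y) -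
        (c * 1 * Real.exp y + c * (d + id y) * Real.exp y) - k * 1 := by
    simp only [P, id]; ring
  rw [hval]
  exact total

lemma P_zero (a b c d k m : ℝ) : P a b c d k m 0 = a - c*d - m := by
  simp [P]

lemma anti_aux {f f' : ℝ → ℝ} (hd : ∀ y, HasDerivAt f (f' y) y)
    (h0 : f 0 = 0) (hneg : ∀ y, 0 < y → f' y < 0) :
    ∀ x, 0 < x → f x < 0 := by
  intro x hx
  have hdiff : Differentiable ℝ f := fun y => (hd y).differentiableAt
  have hanti : StrictAntiOn f (Ici 0) := by
    apply strictAntiOn_of_deriv_neg (convex_Ici 0) hdiff.continuous.continuousOn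
    intro y hy
    rw [interior_Ici] at hy
    rw [(hd y).deriv]
    exact hneg y hy
  have := hanti self_mem_Ici (le_of_lt hx) hx
  rwa [h0] at this

lemma mono_aux {f f' : ℝ → ℝ} (hd : ∀ y, HasDerivAt f (f' y) y)
    (h0 : f 0 = 0) (hpos : ∀ y, 0 < y → 0 < f' y) :
    ∀ x, 0 < x → 0 < f x := by
  intro x hx
  have hdiff : Differentiable ℝ f := fun y => (hd y).differentiableAt
  have hmono : StrictMonoOn f (Ici 0) := by
    apply strictMonoOn_of_deriv_pos (convex_Ici 0) hdiff.continuous.continuousOn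
    intro y hy
    rw [interior_Ici] at hy
    rw [(hd y).deriv]
    exact hpos y hy
  have := hmono self_mem_Ici (le_of_lt hx) hx
  rwa [h0] at this

/-- `g⁽⁵⁾ < 0` on `(0,∞)`. -/
lemma g5_neg : ∀ y, 0 < y → P 16 32 4 5 0 0 y < 0 := by
  intro y hy
  have he := Real.exp_pos y
  have key : (16 - 32*y) * Real.exp y < 4*(5+y) := by
    rcases le_or_gt (1/2 : ℝ) y with h | h
    · nlinarith [he]
    · have hkey : (1 - y) * Real.exp y < 1 := by
        have h1 := Real.add_one_lt_exp (show -y ≠ 0 by linarith)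
        rw [Real.exp_neg] at h1
        have h2 := mul_lt_mul_of_pos_right (show 1 - y < (Real.exp y)⁻¹ by linarith) he
        rwa [inv_mul_cancel₀ (ne_of_gt he)] at h2
      nlinarith [mul_lt_mul_of_pos_left hkey (show (0:ℝ) < 4*(1-2*y) by linarith),
        mul_pos hy hy, he, mul_pos hy he]
  have : Real.exp y * ((16 - 32*y) * Real.exp y - 4*(5+y)) < 0 :=
    mul_neg_of_pos_of_neg he (by linarith)
  simp only [P]
  nlinarith [this]

lemma g4_neg : ∀ y, 0 < y → P 16 16 4 4 0 0 y < 0 := by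
  apply anti_aux (f' := P 16 32 4 5 0 0)
  · intro y; have := hdP 16 16 4 4 0 0 y; norm_num at this ⊢; exact this
  · rw [P_zero]; norm_num
  · exact g5_neg

lemma g3_neg : ∀ y, 0 < y → P 12 8 4 3 0 0 y < 0 := by
  apply anti_aux (f' := P 16 16 4 4 0 0)
  · intro y; have := hdP 12 8 4 3 0 0 y; norm_num at this ⊢; exact this
  · rw [P_zero]; norm_num
  · exact g4_neg

lemma g2_neg : ∀ y, 0 < y → P 8 4 4 2 0 0 y < 0 := by
  apply anti_aux (f' := P 12 8 4 3 0 0)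
  · intro y; have := hdP 8 4 4 2 0 0 y; norm_num at this ⊢; exact this
  · rw [P_zero]; norm_num
  · exact g3_neg

lemma g1_neg : ∀ y, 0 < y → P 5 2 4 1 0 1 y < 0 := by
  apply anti_aux (f' := P 8 4 4 2 0 0)
  · intro y; have := hdP 5 2 4 1 0 1 y; norm_num at this ⊢; exact this
  · rw [P_zero]; norm_num
  · exact g2_neg

/-- `g < 0` on `(0,∞)` where `g y = (3-y)e^{2y} - 4y e^y - (y+3)`. -/
lemma g_neg : ∀ y, 0 < y → P 3 1 4 0 1 3 y < 0 := by
  apply anti_aux (f' := P 5 2 4 1 0 1)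
  · intro y; have := hdP 3 1 4 0 1 3 y; norm_num at this ⊢; exact this
  · rw [P_zero]; norm_num
  · exact g1_neg

lemma h2_pos : ∀ y, 0 < y → 0 < P 0 0 (-1) 0 0 0 y := by
  intro y hy
  simp only [P]
  nlinarith [mul_pos hy (Real.exp_pos y)]

lemma h1_pos : ∀ y, 0 < y → 0 < P 0 0 (-1) (-1) 0 (-1) y := by
  apply mono_aux (f' := P 0 0 (-1) 0 0 0)
  · intro y; have := hdP 0 0 (-1) (-1) 0 (-1) y; norm_num at this ⊢; exact this
  · rw [P_zero]; norm_num
  · exact h2_pos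

/-- `h > 0` on `(0,∞)` where `h y = y(e^y+1) - 2e^y + 2 = (y-2)e^y + y + 2`. -/
lemma h_pos : ∀ y, 0 < y → 0 < P 0 0 (-1) (-2) (-1) (-2) y := by
  apply mono_aux (f' := P 0 0 (-1) (-1) 0 (-1))
  · intro y; have := hdP 0 0 (-1) (-2) (-1) (-2) y; norm_num at this ⊢; exact this
  · rw [P_zero]; norm_num
  · exact h1_pos

lemma k1_neg : ∀ y, 0 < y → P 0 0 1 0 0 0 y < 0 := by
  intro y hy
  simp only [P]
  nlinarith [mul_pos hy (Real.exp_pos y)]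

/-- `k < 0` on `(0,∞)` where `k y = e^y - 1 - y e^y = (1-y)e^y - 1`. -/
lemma k_neg : ∀ y, 0 < y → P 0 0 1 (-1) 0 1 y < 0 := by
  apply anti_aux (f' := P 0 0 1 0 0 0)
  · intro y; have := hdP 0 0 1 (-1) 0 1 y; norm_num at this ⊢; exact this
  · rw [P_zero]; norm_num
  · exact k1_neg

lemma hE {y : ℝ} (hy : 0 < y) : 0 < Real.exp y - 1 := by
  have := Real.add_one_lt_exp (ne_of_gt hy); linarith

noncomputable def F1 (y : ℝ) : ℝ := (Real.exp y - 1 - y * Real.exp y) / (Real.exp y - 1)^2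
noncomputable def F2 (y : ℝ) : ℝ :=
  Real.exp y * (y * Real.exp y + y - 2*Real.exp y + 2) / (Real.exp y - 1)^3
noncomputable def F3 (y : ℝ) : ℝ :=
  Real.exp y * ((3-y)*(Real.exp y*Real.exp y) - 4*y*Real.exp y - (y+3)) / (Real.exp y - 1)^4

lemma hdF {y : ℝ} (hy : 0 < y) :
    HasDerivAt (fun z : ℝ => z / (Real.exp z - 1)) (F1 y) y := by
  have he := Real.hasDerivAt_exp y
  have hne : Real.exp y - 1 ≠ 0 := ne_of_gt (hE hy)
  have h := (hasDerivAt_id y).div (he.sub_const 1) hne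
  convert h using 1
  · rfl
  · rfl
  · rfl
  simp only [F1, id]
  ring

lemma hdF1 {y : ℝ} (hy : 0 < y) : HasDerivAt F1 (F2 y) y := by
  have he := Real.hasDerivAt_exp y
  have hne : Real.exp y - 1 ≠ 0 := ne_of_gt (hE hy)
  have hN := (he.sub_const 1).sub ((hasDerivAt_id y).mul he)
  have hD := (he.sub_const 1).pow 2
  have h := hN.div hD (pow_ne_zero 2 hne)
  convert h using 1
  · rfl
  · rfl
  · rfl
  simp only [F2, id, Pi.sub_apply, Pi.add_apply, Pi.mul_apply, Pi.pow_apply]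
  field_simp
  ring

lemma hdF2 {y : ℝ} (hy : 0 < y) : HasDerivAt F2 (F3 y) y := by
  have he := Real.hasDerivAt_exp y
  have hne : Real.exp y - 1 ≠ 0 := ne_of_gt (hE hy)
  have hInner := ((((hasDerivAt_id y).mul he).add (hasDerivAt_id y)).sub
      (he.const_mul 2)).add_const 2
  have hN := he.mul hInner
  have hD := (he.sub_const 1).pow 3
  have h := hN.div hD (pow_ne_zero 3 hne)
  convert h using 1
  · rfl
  · rfl
  · rfl
  simp only [F3, id, Pi.sub_apply, Pi.add_apply, Pi.mul_apply, Pi.pow_apply]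
  field_simp
  ring

lemma dF1 {y : ℝ} (hy : 0 < y) :
    deriv (fun z : ℝ => z / (Real.exp z - 1)) y = F1 y := (hdF hy).deriv

lemma dF2 {y : ℝ} (hy : 0 < y) :
    deriv (deriv (fun z : ℝ => z / (Real.exp z - 1))) y = F2 y := by
  have hev : deriv (fun z : ℝ => z / (Real.exp z - 1)) =ᶠ[nhds y] F1 := by
    filter_upwards [Ioi_mem_nhds hy] with z hz using dF1 hz
  rw [hev.deriv_eq, (hdF1 hy).deriv]

lemma dF3 {y : ℝ} (hy : 0 < y) :
    deriv (deriv (deriv (fun z : ℝ => z / (Real.exp z - 1)))) y = F3 y := by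
  have hev : deriv (deriv (fun z : ℝ => z / (Real.exp z - 1))) =ᶠ[nhds y] F2 := by
    filter_upwards [Ioi_mem_nhds hy] with z hz using dF2 hz
  rw [hev.deriv_eq, (hdF2 hy).deriv]

theorem third_deriv_neg (x : ℝ) (hx : 0 < x) :
    iteratedDeriv 3 (fun y : ℝ => y / (Real.exp y - 1)) x < 0 ∧
    0 < iteratedDeriv 2 (fun y : ℝ => y / (Real.exp y - 1)) x ∧
    deriv (fun y : ℝ => y / (Real.exp y - 1)) x < 0 := by
  have hEx := hE hx
  refine ⟨?_, ?_, ?_⟩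
  · have h3 : iteratedDeriv 3 (fun y : ℝ => y / (Real.exp y - 1)) x =
        deriv (deriv (deriv (fun y : ℝ => y / (Real.exp y - 1)))) x := by
      simp [iteratedDeriv_succ, iteratedDeriv_zero]
    rw [h3, dF3 hx]
    have hg := g_neg x hx
    simp only [P] at hg
    unfold F3
    apply div_neg_of_neg_of_pos
    · apply mul_neg_of_pos_of_neg (Real.exp_pos x)
      nlinarith [hg]
    · positivity
  · have h2 : iteratedDeriv 2 (fun y : ℝ => y / (Real.exp y - 1)) x =
        deriv (deriv (fun y : ℝ => y / (Real.exp y - 1))) x := by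
      simp [iteratedDeriv_succ, iteratedDeriv_zero]
    rw [h2, dF2 hx]
    have hh := h_pos x hx
    simp only [P] at hh
    unfold F2
    apply div_pos
    · apply mul_pos (Real.exp_pos x)
      nlinarith [hh]
    · positivity
  · rw [dF1 hx]
    have hk := k_neg x hx
    simp only [P] at hk
    unfold F1
    apply div_neg_of_neg_of_pos
    · nlinarith [hk]
    · positivity
end

section
/- For every μ > 0 and every (p,t) ∈ ℝ² with not (p = 0 and t ≤ 0), and every ν > μ, ∫_t^∞ y·|y²−t²|^{ν−μ−1}/(p²+y²)^ν dy = (B(ν−μ, μ)/2)·1/(p²+t²)^μ, where B is the Beta function. -/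
open MeasureTheory Set Real

lemma realBeta_integrableOn {u v : ℝ} (hu : 0 < u) (hv : 0 < v) :
    IntegrableOn (fun x : ℝ => x ^ (u - 1) * (1 - x) ^ (v - 1)) (Ioo 0 1) := by
  have hC := Complex.betaIntegral_convergent (u := (u:ℂ)) (v := (v:ℂ)) (by simpa) (by simpa)
  have h1 : IntegrableOn (fun x : ℝ => (x:ℂ) ^ ((u:ℂ) - 1) * (1 - (x:ℂ)) ^ ((v:ℂ) - 1))
      (Ioo (0:ℝ) 1) := by
    have := (intervalIntegrable_iff_integrableOn_Ioc_of_le (by norm_num : (0:ℝ) ≤ 1)).mp hC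
    exact this.mono_set Ioo_subset_Ioc_self
  have h2 : IntegrableOn (fun x : ℝ => ((x:ℂ) ^ ((u:ℂ) - 1) * (1 - (x:ℂ)) ^ ((v:ℂ) - 1)).re)
      (Ioo (0:ℝ) 1) := h1.re
  refine h2.congr_fun ?_ measurableSet_Ioo
  intro x hx
  obtain ⟨hx0, hx1⟩ := hx
  have e1 : (x:ℂ) ^ ((u:ℂ) - 1) = ((x ^ (u - 1) : ℝ) : ℂ) := by
    rw [Complex.ofReal_cpow hx0.le]; push_cast; ring_nf
  have e2 : (1 - (x:ℂ)) ^ ((v:ℂ) - 1) = (((1 - x) ^ (v - 1) : ℝ) : ℂ) := by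
    rw [Complex.ofReal_cpow (by linarith)]; push_cast; ring_nf
  simp [e1, e2, ← Complex.ofReal_mul]

lemma realBeta_value {u v : ℝ} (hu : 0 < u) (hv : 0 < v) :
    ∫ x in Ioo (0:ℝ) 1, x ^ (u - 1) * (1 - x) ^ (v - 1)
      = Real.Gamma u * Real.Gamma v / Real.Gamma (u + v) := by
  have key := Complex.Gamma_mul_Gamma_eq_betaIntegral (s := (u:ℂ)) (t := (v:ℂ))
    (by simpa) (by simpa)
  have hbeta : Complex.betaIntegral (u:ℂ) (v:ℂ)
      = ((∫ x in Ioo (0:ℝ) 1, x ^ (u - 1) * (1 - x) ^ (v - 1) : ℝ) : ℂ) := by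
    rw [Complex.betaIntegral]
    rw [show (∫ x in Ioo (0:ℝ) 1, x ^ (u - 1) * (1 - x) ^ (v - 1))
        = ∫ x in (0:ℝ)..1, x ^ (u - 1) * (1 - x) ^ (v - 1) by
      rw [intervalIntegral.integral_of_le (by norm_num), integral_Ioc_eq_integral_Ioo]]
    rw [← intervalIntegral.integral_ofReal]
    refine intervalIntegral.integral_congr fun x hx => ?_
    rw [uIcc_of_le (by norm_num)] at hx
    obtain ⟨hx0, hx1⟩ := hx
    have e1 : (x:ℂ) ^ ((u:ℂ) - 1) = ((x ^ (u - 1) : ℝ) : ℂ) := by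
      rw [Complex.ofReal_cpow hx0]; push_cast; ring_nf
    have e2 : (1 - (x:ℂ)) ^ ((v:ℂ) - 1) = (((1 - x) ^ (v - 1) : ℝ) : ℂ) := by
      rw [Complex.ofReal_cpow (by linarith)]; push_cast; ring_nf
    simp [e1, e2, ← Complex.ofReal_mul]
  rw [hbeta] at key
  have key2 : ((Real.Gamma u * Real.Gamma v : ℝ) : ℂ)
      = ((Real.Gamma (u + v) * ∫ x in Ioo (0:ℝ) 1, x ^ (u - 1) * (1 - x) ^ (v - 1) : ℝ) : ℂ) := by
    push_cast
    rw [← Complex.Gamma_ofReal, ← Complex.Gamma_ofReal, ← Complex.Gamma_ofReal]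
    push_cast
    exact key
  have key3 := Complex.ofReal_injective key2
  have hG : Real.Gamma (u + v) ≠ 0 := (Real.Gamma_pos_of_pos (by linarith)).ne'
  field_simp
  linarith [key3]


section
variable {c d a : ℝ}

lemma phi_img (ha : 0 < a) : (fun x : ℝ => a * x / (1 - x)) '' Ioo 0 1 = Ioi 0 := by
  ext u
  constructor
  · rintro ⟨x, ⟨hx0, hx1⟩, rfl⟩
    have h1x : 0 < 1 - x := by linarith
    exact div_pos (by positivity) h1x
  · intro hu
    have hu' : (0:ℝ) < u := hu
    refine ⟨u / (a + u), ⟨by positivity, ?_⟩, ?_⟩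
    · rw [div_lt_one (by positivity)]; linarith
    · field_simp
      rw [add_sub_cancel_right, div_self ha.ne']

lemma phi_inj (ha : 0 < a) : InjOn (fun x : ℝ => a * x / (1 - x)) (Ioo 0 1) := by
  intro x ⟨hx0, hx1⟩ y ⟨hy0, hy1⟩ h
  simp only at h
  have hx : (1:ℝ) - x ≠ 0 := by linarith
  have hy : (1:ℝ) - y ≠ 0 := by linarith
  field_simp at h
  nlinarith [h]

lemma phi_deriv (ha : 0 < a) : ∀ x ∈ Ioo (0:ℝ) 1,
    HasDerivWithinAt (fun x : ℝ => a * x / (1 - x)) (a / (1 - x) ^ 2) (Ioo 0 1) x := by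
  intro x ⟨hx0, hx1⟩
  have hx : (1:ℝ) - x ≠ 0 := by linarith
  have h := (((hasDerivAt_id x).const_mul a).div
    ((hasDerivAt_id x).const_sub 1) hx)
  exact (h.hasDerivWithinAt (s := Ioo 0 1)).congr_deriv (by simp only [id]; ring)

lemma phi_integrand (ha : 0 < a) (hc : 0 < c) (hd : 0 < d) :
    ∀ x ∈ Ioo (0:ℝ) 1,
    |a / (1 - x) ^ 2| • ((a * x / (1 - x)) ^ (c - 1) * (a + a * x / (1 - x)) ^ (-(c + d)))
      = a ^ (-d) * (x ^ (c - 1) * (1 - x) ^ (d - 1)) := by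
  intro x ⟨hx0, hx1⟩
  have h1x : 0 < 1 - x := by linarith
  have e0 : a + a * x / (1 - x) = a / (1 - x) := by field_simp; ring
  rw [e0, abs_of_pos (by positivity), smul_eq_mul]
  rw [Real.div_rpow (by positivity) h1x.le, Real.div_rpow ha.le h1x.le]
  rw [Real.mul_rpow ha.le hx0.le]
  have hpow : ((1 - x) ^ 2 : ℝ) = (1 - x) ^ (2:ℝ) := by
    rw [← Real.rpow_natCast (1-x) 2]; norm_num
  have hrw : ∀ (s t : ℝ), a ^ s * a ^ t = a ^ (s + t) := fun s t => (Real.rpow_add ha s t).symm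
  have hrw2 : ∀ (s t : ℝ), (1-x) ^ s * (1-x) ^ t = (1-x) ^ (s + t) :=
    fun s t => (Real.rpow_add h1x s t).symm
  rw [div_mul_div_comm, div_mul_div_comm]
  rw [div_eq_iff (show ((1-x)^2 * ((1-x)^(c-1) * (1-x)^(-(c+d)))) ≠ 0 from by positivity)]
  rw [hpow]
  have ea : a * a ^ (c-1) * a ^ (-(c+d)) = a ^ (-d) := by
    nth_rewrite 1 [← Real.rpow_one a]
    rw [hrw, hrw, show (1:ℝ) + (c-1) + -(c+d) = -d from by ring]
  have eb : (1-x) ^ (d-1) * ((1-x) ^ (2:ℝ) * ((1-x) ^ (c-1) * (1-x) ^ (-(c+d)))) = 1 := by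
    rw [hrw2, hrw2, hrw2, show d-1 + (2 + (c-1 + -(c+d))) = 0 from by ring, Real.rpow_zero]
  calc a * (a ^ (c-1) * x ^ (c-1) * a ^ (-(c+d)))
      = (a * a ^ (c-1) * a ^ (-(c+d))) * x ^ (c-1) := by ring
    _ = a ^ (-d) * x ^ (c-1) := by rw [ea]
    _ = a ^ (-d) * (x ^ (c-1) * (1-x) ^ (d-1)) * ((1-x) ^ (2:ℝ) * ((1-x) ^ (c-1) * (1-x) ^ (-(c+d)))) := by
        rw [show a ^ (-d) * (x ^ (c-1) * (1-x) ^ (d-1)) * ((1-x) ^ (2:ℝ) * ((1-x) ^ (c-1) * (1-x) ^ (-(c+d))))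
          = a ^ (-d) * x ^ (c-1) * ((1-x) ^ (d-1) * ((1-x) ^ (2:ℝ) * ((1-x) ^ (c-1) * (1-x) ^ (-(c+d))))) from by ring,
          eb, mul_one]

lemma betaIoi_integrableOn (hc : 0 < c) (hd : 0 < d) (ha : 0 < a) :
    IntegrableOn (fun u : ℝ => u ^ (c - 1) * (a + u) ^ (-(c + d))) (Ioi 0) := by
  rw [← phi_img ha]
  rw [integrableOn_image_iff_integrableOn_abs_deriv_smul measurableSet_Ioo (phi_deriv ha)
    (phi_inj ha)]
  exact (integrableOn_congr_fun (phi_integrand ha hc hd) measurableSet_Ioo).mpr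
    ((realBeta_integrableOn hc hd).const_mul _)

lemma betaIoi_value (hc : 0 < c) (hd : 0 < d) (ha : 0 < a) :
    ∫ u in Ioi (0:ℝ), u ^ (c - 1) * (a + u) ^ (-(c + d))
      = Real.Gamma c * Real.Gamma d / Real.Gamma (c + d) * a ^ (-d) := by
  rw [← phi_img ha]
  rw [integral_image_eq_integral_abs_deriv_smul measurableSet_Ioo (phi_deriv ha) (phi_inj ha)]
  rw [setIntegral_congr_fun measurableSet_Ioo (phi_integrand ha hc hd)]
  rw [integral_const_mul, realBeta_value hc hd, mul_comm]
end


lemma psi_img {s : ℝ} (hs : 0 ≤ s) : (fun y : ℝ => y ^ 2 - s ^ 2) '' Ioi s = Ioi 0 := by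
  ext u
  constructor
  · rintro ⟨y, hy, rfl⟩
    have : s < y := hy
    simp only [mem_Ioi]
    nlinarith
  · intro hu
    have hu' : (0:ℝ) < u := hu
    refine ⟨Real.sqrt (u + s ^ 2), ?_, ?_⟩
    · exact (Real.lt_sqrt hs).mpr (by linarith)
    · show Real.sqrt (u + s ^ 2) ^ 2 - s ^ 2 = u
      rw [Real.sq_sqrt (by positivity)]; ring

lemma psi_inj {s : ℝ} (hs : 0 ≤ s) : InjOn (fun y : ℝ => y ^ 2 - s ^ 2) (Ioi s) := by
  intro y hy z hz h
  simp only [mem_Ioi] at hy hz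
  simp only at h
  nlinarith

lemma psi_deriv (s : ℝ) : ∀ y ∈ Ioi s,
    HasDerivWithinAt (fun y : ℝ => y ^ 2 - s ^ 2) (2 * y) (Ioi s) y := by
  intro y _
  simpa using (((hasDerivAt_pow 2 y).sub_const (s ^ 2)).hasDerivWithinAt :
    HasDerivWithinAt (fun y : ℝ => y ^ 2 - s ^ 2) _ (Ioi s) y)

lemma half_integrand (μ ν p s : ℝ) (hμ : 0 < μ) (hν : μ < ν) (hs : 0 ≤ s)
    (ha : 0 < p ^ 2 + s ^ 2) : ∀ y ∈ Ioi s,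
    |2 * y| • ((y ^ 2 - s ^ 2) ^ (ν - μ - 1)
        * ((p ^ 2 + s ^ 2) + (y ^ 2 - s ^ 2)) ^ (-((ν - μ) + μ)))
      = 2 * (y * |y ^ 2 - s ^ 2| ^ (ν - μ - 1) / ((p ^ 2 + y ^ 2) ^ ν)) := by
  intro y hy
  have hy' : s < y := hy
  have hy0 : 0 < y := lt_of_le_of_lt hs hy'
  have hsq : 0 < y ^ 2 - s ^ 2 := by nlinarith
  have hpy : 0 < p ^ 2 + y ^ 2 := by nlinarith
  rw [abs_of_pos (by positivity), abs_of_pos hsq, smul_eq_mul]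
  rw [show (p ^ 2 + s ^ 2) + (y ^ 2 - s ^ 2) = p ^ 2 + y ^ 2 from by ring]
  rw [show -((ν - μ) + μ) = -ν from by ring, Real.rpow_neg hpy.le]
  field_simp

lemma half_value (μ ν p s : ℝ) (hμ : 0 < μ) (hν : μ < ν) (hs : 0 ≤ s)
    (ha : 0 < p ^ 2 + s ^ 2) :
    (∫ y in Ioi s, y * |y ^ 2 - s ^ 2| ^ (ν - μ - 1) / ((p ^ 2 + y ^ 2) ^ ν))
      = (Real.Gamma (ν - μ) * Real.Gamma μ / Real.Gamma ν) / 2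
          * (1 / ((p ^ 2 + s ^ 2) ^ μ)) := by
  have hc : 0 < ν - μ := by linarith
  have h := betaIoi_value (c := ν - μ) (d := μ) (a := p ^ 2 + s ^ 2) hc hμ ha
  rw [← psi_img hs, integral_image_eq_integral_abs_deriv_smul measurableSet_Ioi (psi_deriv s)
    (psi_inj hs)] at h
  rw [setIntegral_congr_fun measurableSet_Ioi (half_integrand μ ν p s hμ hν hs ha)] at h
  rw [integral_const_mul, show ν - μ + μ = ν from by ring, Real.rpow_neg ha.le] at h
  have hGν : Real.Gamma ν ≠ 0 := (Real.Gamma_pos_of_pos (by linarith)).ne'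
  have haν : ((p ^ 2 + s ^ 2) ^ μ : ℝ) ≠ 0 := by positivity
  field_simp at h ⊢
  linarith

lemma half_integrable (μ ν p s : ℝ) (hμ : 0 < μ) (hν : μ < ν) (hs : 0 ≤ s)
    (ha : 0 < p ^ 2 + s ^ 2) :
    IntegrableOn (fun y : ℝ => y * |y ^ 2 - s ^ 2| ^ (ν - μ - 1) / ((p ^ 2 + y ^ 2) ^ ν))
      (Ioi s) := by
  have hc : 0 < ν - μ := by linarith
  have h := betaIoi_integrableOn (c := ν - μ) (d := μ) (a := p ^ 2 + s ^ 2) hc hμ ha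
  rw [← psi_img hs, integrableOn_image_iff_integrableOn_abs_deriv_smul measurableSet_Ioi
    (psi_deriv s) (psi_inj hs)] at h
  have h2 := (integrableOn_congr_fun (half_integrand μ ν p s hμ hν hs ha)
    measurableSet_Ioi).mp h
  have h3 : IntegrableOn
      (fun y : ℝ => 2⁻¹ * (2 * (y * |y ^ 2 - s ^ 2| ^ (ν - μ - 1) / ((p ^ 2 + y ^ 2) ^ ν))))
      (Ioi s) := h2.const_mul (2⁻¹ : ℝ)
  refine h3.congr_fun ?_ measurableSet_Ioi
  intro y _
  simp only
  ring

section NegCase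
variable {μ ν p t : ℝ}

lemma g2_integrableOn (hμ : 0 < μ) (hν : μ < ν) (ht : t < 0) (hp : p ≠ 0) :
    IntegrableOn (fun u : ℝ => u ^ (ν - μ - 1) * (p ^ 2 + t ^ 2 - u) ^ (-ν))
      (Ioo 0 (t ^ 2)) := by
  have hp2 : 0 < p ^ 2 := by positivity
  have ht2 : 0 < t ^ 2 := by nlinarith
  have hmeas : AEStronglyMeasurable
      (fun u : ℝ => u ^ (ν - μ - 1) * (p ^ 2 + t ^ 2 - u) ^ (-ν))
      (volume.restrict (Ioo 0 (t ^ 2))) := by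
    refine ContinuousOn.aestronglyMeasurable ?_ measurableSet_Ioo
    refine ContinuousOn.mul ?_ ?_
    · exact fun u hu => (Real.continuousAt_rpow_const u _ (Or.inl hu.1.ne')).continuousWithinAt
    · refine ContinuousOn.rpow_const ((continuous_const.sub continuous_id).continuousOn)
        fun u hu => Or.inl ?_
      have := hu.2
      nlinarith
  have hb : IntegrableOn (fun u : ℝ => u ^ (ν - μ - 1)) (Ioo 0 (t ^ 2)) := by
    have h1 : IntervalIntegrable (fun u : ℝ => u ^ (ν - μ - 1)) volume 0 (t ^ 2) :=
      intervalIntegral.intervalIntegrable_rpow' (by linarith)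
    exact ((intervalIntegrable_iff_integrableOn_Ioc_of_le ht2.le).mp h1).mono_set
      Ioo_subset_Ioc_self
  refine Integrable.mono' (hb.const_mul ((p ^ 2) ^ (-ν))) hmeas ?_
  rw [ae_restrict_iff' measurableSet_Ioo]
  filter_upwards with u hu
  obtain ⟨hu0, hu1⟩ := hu
  have hbase : 0 < p ^ 2 + t ^ 2 - u := by nlinarith
  rw [Real.norm_eq_abs, abs_of_nonneg (by positivity)]
  have : (p ^ 2 + t ^ 2 - u) ^ (-ν) ≤ (p ^ 2) ^ (-ν) :=
    Real.rpow_le_rpow_of_nonpos hp2 (by nlinarith) (by linarith)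
  calc u ^ (ν - μ - 1) * (p ^ 2 + t ^ 2 - u) ^ (-ν)
      ≤ u ^ (ν - μ - 1) * (p ^ 2) ^ (-ν) :=
        mul_le_mul_of_nonneg_left this (by positivity)
    _ = (p ^ 2) ^ (-ν) * u ^ (ν - μ - 1) := by ring

lemma psi2_img (ht : t < 0) : (fun y : ℝ => t ^ 2 - y ^ 2) '' Ioo 0 (-t) = Ioo 0 (t ^ 2) := by
  ext u
  constructor
  · rintro ⟨y, ⟨hy0, hy1⟩, rfl⟩
    simp only [mem_Ioo]
    constructor <;> nlinarith
  · rintro ⟨hu0, hu1⟩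
    refine ⟨Real.sqrt (t ^ 2 - u), ⟨Real.sqrt_pos.mpr (by linarith), ?_⟩, ?_⟩
    · exact (Real.sqrt_lt' (by linarith)).mpr (by nlinarith)
    · show t ^ 2 - Real.sqrt (t ^ 2 - u) ^ 2 = u
      rw [Real.sq_sqrt (by linarith)]; ring

lemma psi2_inj : InjOn (fun y : ℝ => t ^ 2 - y ^ 2) (Ioo 0 (-t)) := by
  intro y ⟨hy0, _⟩ z ⟨hz0, _⟩ h
  simp only at h
  nlinarith

lemma psi2_deriv : ∀ y ∈ Ioo (0:ℝ) (-t),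
    HasDerivWithinAt (fun y : ℝ => t ^ 2 - y ^ 2) (-(2 * y)) (Ioo 0 (-t)) y := by
  intro y _
  simpa using (((hasDerivAt_pow 2 y).const_sub (t ^ 2)).hasDerivWithinAt :
    HasDerivWithinAt (fun y : ℝ => t ^ 2 - y ^ 2) _ (Ioo 0 (-t)) y)

lemma psi2_integrand (hμ : 0 < μ) (hν : μ < ν) (ht : t < 0) (hp : p ≠ 0) :
    ∀ y ∈ Ioo (0:ℝ) (-t),
    |-(2 * y)| • ((t ^ 2 - y ^ 2) ^ (ν - μ - 1) * (p ^ 2 + t ^ 2 - (t ^ 2 - y ^ 2)) ^ (-ν))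
      = 2 * (y * |y ^ 2 - t ^ 2| ^ (ν - μ - 1) / ((p ^ 2 + y ^ 2) ^ ν)) := by
  intro y ⟨hy0, hy1⟩
  have hpy : 0 < p ^ 2 + y ^ 2 := by positivity
  have hsq : 0 < t ^ 2 - y ^ 2 := by nlinarith
  rw [abs_neg, abs_of_pos (by positivity), smul_eq_mul]
  rw [show p ^ 2 + t ^ 2 - (t ^ 2 - y ^ 2) = p ^ 2 + y ^ 2 from by ring]
  rw [abs_sub_comm, abs_of_pos hsq, Real.rpow_neg hpy.le]
  field_simp

lemma f_ioo_pos (hμ : 0 < μ) (hν : μ < ν) (ht : t < 0) (hp : p ≠ 0) :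
    IntegrableOn (fun y : ℝ => y * |y ^ 2 - t ^ 2| ^ (ν - μ - 1) / ((p ^ 2 + y ^ 2) ^ ν))
      (Ioo 0 (-t)) := by
  have h := g2_integrableOn hμ hν ht hp
  rw [← psi2_img ht, integrableOn_image_iff_integrableOn_abs_deriv_smul measurableSet_Ioo
    psi2_deriv psi2_inj] at h
  have h2 := (integrableOn_congr_fun (psi2_integrand hμ hν ht hp) measurableSet_Ioo).mp h
  have h3 : IntegrableOn
      (fun y : ℝ => 2⁻¹ * (2 * (y * |y ^ 2 - t ^ 2| ^ (ν - μ - 1) / ((p ^ 2 + y ^ 2) ^ ν))))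
      (Ioo 0 (-t)) := h2.const_mul (2⁻¹ : ℝ)
  refine h3.congr_fun ?_ measurableSet_Ioo
  intro y _
  simp only
  ring

lemma neg_img : (fun y : ℝ => -y) '' Ioo 0 (-t) = Ioo t 0 := by
  ext y
  constructor
  · rintro ⟨x, ⟨hx0, hx1⟩, rfl⟩
    simp only [mem_Ioo]
    constructor <;> linarith
  · rintro ⟨hy0, hy1⟩
    exact ⟨-y, ⟨by linarith, by linarith⟩, by simp⟩

lemma f_odd (μ ν p t : ℝ) (x : ℝ) :
    (-x) * |(-x) ^ 2 - t ^ 2| ^ (ν - μ - 1) / ((p ^ 2 + (-x) ^ 2) ^ ν)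
      = -(x * |x ^ 2 - t ^ 2| ^ (ν - μ - 1) / ((p ^ 2 + x ^ 2) ^ ν)) := by
  rw [neg_sq, neg_mul, neg_div]

lemma f_ioo_neg (hμ : 0 < μ) (hν : μ < ν) (ht : t < 0) (hp : p ≠ 0) :
    IntegrableOn (fun y : ℝ => y * |y ^ 2 - t ^ 2| ^ (ν - μ - 1) / ((p ^ 2 + y ^ 2) ^ ν))
      (Ioo t 0) := by
  have h : IntegrableOn
      (fun y : ℝ => -(y * |y ^ 2 - t ^ 2| ^ (ν - μ - 1) / ((p ^ 2 + y ^ 2) ^ ν)))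
      (Ioo 0 (-t)) := (f_ioo_pos hμ hν ht hp).neg
  rw [← neg_img, integrableOn_image_iff_integrableOn_abs_deriv_smul measurableSet_Ioo
    (fun x _ => (hasDerivAt_neg' x).hasDerivWithinAt) (neg_injective.injOn)]
  refine h.congr_fun ?_ measurableSet_Ioo
  intro x _
  simp only [abs_neg, abs_one, one_smul]
  exact (f_odd μ ν p t x).symm

lemma f_zero (hμ : 0 < μ) (hν : μ < ν) (ht : t < 0) (hp : p ≠ 0) :
    (∫ y in Ioo t 0, y * |y ^ 2 - t ^ 2| ^ (ν - μ - 1) / ((p ^ 2 + y ^ 2) ^ ν))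
      = -∫ y in Ioo 0 (-t), y * |y ^ 2 - t ^ 2| ^ (ν - μ - 1) / ((p ^ 2 + y ^ 2) ^ ν) := by
  rw [← neg_img, integral_image_eq_integral_abs_deriv_smul measurableSet_Ioo
    (fun x _ => (hasDerivAt_neg' x).hasDerivWithinAt) (neg_injective.injOn)]
  rw [← integral_neg]
  refine setIntegral_congr_fun measurableSet_Ioo fun x _ => ?_
  simp only [abs_neg, abs_one, one_smul]
  exact f_odd μ ν p t x

end NegCase


theorem beta_integral_identity (μ ν p t : ℝ) (hμ : 0 < μ) (hν : μ < ν)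
    (hpt : ¬(p = 0 ∧ t ≤ 0)) :
    (∫ y in Set.Ioi t, y * |y ^ 2 - t ^ 2| ^ (ν - μ - 1) / ((p ^ 2 + y ^ 2) ^ ν))
      = (Real.Gamma (ν - μ) * Real.Gamma μ / Real.Gamma ν) / 2
          * (1 / ((p ^ 2 + t ^ 2) ^ μ)) := by
  rcases le_or_gt 0 t with ht | ht
  · have ha : 0 < p ^ 2 + t ^ 2 := by
      rcases ht.eq_or_lt with h | h
      · have hp : p ≠ 0 := fun hp => hpt ⟨hp, h.ge⟩
        have h2 : 0 < p ^ 2 := by positivity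
        nlinarith [sq_nonneg t]
      · nlinarith [sq_nonneg p]
    exact half_value μ ν p t hμ hν ht ha
  · have hp : p ≠ 0 := fun hp => hpt ⟨hp, ht.le⟩
    have hp2 : 0 < p ^ 2 := by positivity
    have ha : 0 < p ^ 2 + (-t) ^ 2 := by nlinarith [sq_nonneg t]
    have hnt : (0:ℝ) ≤ -t := by linarith
    have key : (∫ y in Ioi t, y * |y ^ 2 - t ^ 2| ^ (ν - μ - 1) / ((p ^ 2 + y ^ 2) ^ ν))
        = ∫ y in Ioi (-t), y * |y ^ 2 - t ^ 2| ^ (ν - μ - 1) / ((p ^ 2 + y ^ 2) ^ ν) := by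
      have hIoi : IntegrableOn
          (fun y : ℝ => y * |y ^ 2 - t ^ 2| ^ (ν - μ - 1) / ((p ^ 2 + y ^ 2) ^ ν))
          (Ioi (-t)) := by
        have := half_integrable μ ν p (-t) hμ hν hnt ha
        simpa [neg_sq] using this
      have hIocR : IntegrableOn
          (fun y : ℝ => y * |y ^ 2 - t ^ 2| ^ (ν - μ - 1) / ((p ^ 2 + y ^ 2) ^ ν))
          (Ioc 0 (-t)) := (integrableOn_Ioc_iff_integrableOn_Ioo).mpr (f_ioo_pos hμ hν ht hp)
      have hIocL : IntegrableOn
          (fun y : ℝ => y * |y ^ 2 - t ^ 2| ^ (ν - μ - 1) / ((p ^ 2 + y ^ 2) ^ ν))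
          (Ioc t 0) := (integrableOn_Ioc_iff_integrableOn_Ioo).mpr (f_ioo_neg hμ hν ht hp)
      have hIoc : IntegrableOn
          (fun y : ℝ => y * |y ^ 2 - t ^ 2| ^ (ν - μ - 1) / ((p ^ 2 + y ^ 2) ^ ν))
          (Ioc t (-t)) := by
        rw [← Ioc_union_Ioc_eq_Ioc ht.le hnt]
        exact hIocL.union hIocR
      rw [← Ioc_union_Ioi_eq_Ioi (by linarith : t ≤ -t),
        setIntegral_union Ioc_disjoint_Ioi_same measurableSet_Ioi hIoc hIoi]
      have hz : (∫ y in Ioc t (-t), y * |y ^ 2 - t ^ 2| ^ (ν - μ - 1) / ((p ^ 2 + y ^ 2) ^ ν))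
          = 0 := by
        rw [← Ioc_union_Ioc_eq_Ioc ht.le hnt,
          setIntegral_union (Ioc_disjoint_Ioc_of_le le_rfl) measurableSet_Ioc hIocL hIocR,
          integral_Ioc_eq_integral_Ioo, integral_Ioc_eq_integral_Ioo,
          f_zero hμ hν ht hp]
        ring
      rw [hz, zero_add]
    rw [key]
    have := half_value μ ν p (-t) hμ hν hnt ha
    simpa [neg_sq] using this
end

section
/- For every u ≥ 0, the function x ↦ −(ln φ_u(x))/x, where φ_u(x) = x·∑_{k=1}^∞ 2(k+u)e^{−(k+u)²x}, has limit u²+u+1/6 as x → 0⁺ and limit (u+1)² as x → +∞. -/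
open Real Filter

lemma tsum_telescope' {g : ℕ → ℝ} (hg : Summable g) :
    ∑' k, (g k - g (k + 1)) = g 0 := by
  have h1 : Summable fun k => g (k + 1) := (summable_nat_add_iff 1).2 hg
  rw [Summable.tsum_sub hg h1, Summable.tsum_eq_zero_add hg]
  ring

lemma summable_poly_exp (u x : ℝ) (hu : 0 ≤ u) (hx : 0 < x) (n : ℕ) :
    Summable fun k : ℕ => ((k : ℝ) + 1 + u) ^ n * Real.exp (-((k : ℝ) + 1 + u) ^ 2 * x) := by
  have hr : ‖Real.exp (-x)‖ < 1 := by
    rw [Real.norm_eq_abs, abs_of_pos (Real.exp_pos _)]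
    exact Real.exp_lt_one_iff.2 (by linarith)
  have hbase : Summable fun k : ℕ => (k : ℝ) ^ n * Real.exp (-x) ^ k :=
    summable_pow_mul_geometric_of_norm_lt_one n hr
  have hsh : Summable fun k : ℕ => ((k : ℝ) + 1) ^ n * Real.exp (-x) ^ (k + 1) := by
    have := (summable_nat_add_iff 1).2 hbase
    exact this.congr fun k => by push_cast; ring
  refine Summable.of_nonneg_of_le (fun k => by positivity) (fun k => ?_) (hsh.mul_left ((1+u)^n))
  · 
    have hk : (0:ℝ) ≤ (k:ℝ) := Nat.cast_nonneg k
    have h1 : ((k : ℝ) + 1 + u) ^ n ≤ ((1 + u) * ((k:ℝ) + 1)) ^ n := by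
      apply pow_le_pow_left₀ (by positivity)
      nlinarith
    have h2 : Real.exp (-((k : ℝ) + 1 + u) ^ 2 * x) ≤ Real.exp (-x) ^ (k + 1) := by
      rw [← Real.exp_nat_mul]
      apply Real.exp_le_exp.2
      push_cast
      nlinarith [mul_nonneg (mul_nonneg hk hk) hx.le, mul_nonneg (mul_nonneg hk hu) hx.le,
        mul_nonneg (mul_nonneg hu hu) hx.le, mul_nonneg hk hx.le, mul_nonneg hu hx.le]
    calc ((k : ℝ) + 1 + u) ^ n * Real.exp (-((k : ℝ) + 1 + u) ^ 2 * x)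
        ≤ ((1 + u) * ((k:ℝ) + 1)) ^ n * Real.exp (-x) ^ (k + 1) := by
          apply mul_le_mul h1 h2 (by positivity) (by positivity)
      _ = (1 + u) ^ n * (((k : ℝ) + 1) ^ n * Real.exp (-x) ^ (k + 1)) := by rw [mul_pow]; ring

lemma interval_identity (x b : ℝ) :
    2*b*x*Real.exp (-b^2*x)
      = (Real.exp (-b^2*x) - Real.exp (-(b+1)^2*x))
        + (2*b*x*Real.exp (-b^2*x) - 2*(b+1)*x*Real.exp (-(b+1)^2*x))/2
        + ((2*x - 4*(b+1)^2*x^2)*Real.exp (-(b+1)^2*x) - (2*x - 4*b^2*x^2)*Real.exp (-b^2*x))/12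
        + ∫ t in b..(b+1), ((-12*x^2 + 48*t^2*x^3 - 16*t^4*x^4) * Real.exp (-t^2*x))
            * ((t-b)^3/6 - (t-b)^2/4 + (t-b)/12) := by
  have key : ∀ t : ℝ, HasDerivAt
      (fun t => ((-12*t*x^2 + 8*t^3*x^3) * Real.exp (-t^2*x)) * ((t-b)^3/6 - (t-b)^2/4 + (t-b)/12)
        - ((2*x - 4*t^2*x^2) * Real.exp (-t^2*x)) * (((t-b)^2 - (t-b))/2 + 1/12)
        + (2*t*x*Real.exp (-t^2*x)) * (t - b - 1/2)
        + Real.exp (-t^2*x))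
      (((-12*x^2 + 48*t^2*x^3 - 16*t^4*x^4) * Real.exp (-t^2*x))
        * ((t-b)^3/6 - (t-b)^2/4 + (t-b)/12)) t := by
    intro t
    have hP : HasDerivAt (fun s : ℝ => Real.exp (-s^2*x)) (-(2*t)*x*Real.exp (-t^2*x)) t := by
      have h0 : HasDerivAt (fun s : ℝ => -s^2*x) (-(2*t)*x) t := by
        have := ((hasDerivAt_pow 2 t).neg).mul_const x
        simpa using this
      simpa [mul_comm] using h0.exp
    have hsb : HasDerivAt (fun s : ℝ => s - b) 1 t := (hasDerivAt_id t).sub_const b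
    -- polynomial pieces
    have hp2 : HasDerivAt (fun s : ℝ => -12*s*x^2 + 8*s^3*x^3) (-12*x^2 + 24*t^2*x^3) t := by
      have h1 := ((hasDerivAt_id t).const_mul (-12:ℝ)).mul_const (x^2)
      have h2 := ((hasDerivAt_pow 3 t).const_mul (8:ℝ)).mul_const (x^3)
      refine (h1.add h2).congr_deriv ?_
      ring
    have hH : HasDerivAt (fun s : ℝ => (s-b)^3/6 - (s-b)^2/4 + (s-b)/12)
        (((t-b)^2 - (t-b))/2 + 1/12) t := by
      have h1 := ((hsb.pow 3).div_const 6).sub ((hsb.pow 2).div_const 4)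
      have h2 := h1.add (hsb.div_const 12)
      refine h2.congr_deriv ?_
      ring
    have hq : HasDerivAt (fun s : ℝ => 2*x - 4*s^2*x^2) (-(8*t)*x^2) t := by
      have h1 := (hasDerivAt_const t (2*x)).sub (((hasDerivAt_pow 2 t).const_mul (4:ℝ)).mul_const (x^2))
      refine h1.congr_deriv ?_
      ring
    have hh : HasDerivAt (fun s : ℝ => (((s-b)^2 - (s-b))/2 + 1/12)) ((2*(t-b) - 1)/2) t := by
      have h1 := (((hsb.pow 2).sub hsb).div_const 2).add_const (1/12 : ℝ)
      refine h1.congr_deriv ?_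
      ring
    have hf : HasDerivAt (fun s : ℝ => 2*s*x*Real.exp (-s^2*x))
        ((2*x)*Real.exp (-t^2*x) + (2*t*x)*(-(2*t)*x*Real.exp (-t^2*x))) t := by
      have h1 : HasDerivAt (fun s : ℝ => 2*s*x) (2*x) t := by
        have := ((hasDerivAt_id t).const_mul (2:ℝ)).mul_const x
        simpa using this
      exact h1.mul hP
    have hg : HasDerivAt (fun s : ℝ => s - b - 1/2) 1 t := hsb.sub_const (1/2)
    have T1 := (hp2.mul hP).mul hH
    have T2 := (hq.mul hP).mul hh
    have T3 := hf.mul hg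
    have total := ((T1.sub T2).add T3).add hP
    refine total.congr_deriv ?_
    simp only [Pi.mul_apply]
    ring
  rw [intervalIntegral.integral_eq_sub_of_hasDerivAt (fun t _ => key t)
    (Continuous.intervalIntegrable (by fun_prop) _ _)]
  ring

noncomputable def Tk (u x : ℝ) (k : ℕ) : ℝ :=
  x * (2*((k:ℝ)+1+u) * Real.exp (-((k:ℝ)+1+u)^2*x))
noncomputable def Ek (u x : ℝ) (k : ℕ) : ℝ := Real.exp (-((k:ℝ)+1+u)^2*x)
noncomputable def Dk (u x : ℝ) (k : ℕ) : ℝ :=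
  (2*x - 4*((k:ℝ)+1+u)^2*x^2) * Real.exp (-((k:ℝ)+1+u)^2*x)
noncomputable def Ik (u x : ℝ) (k : ℕ) : ℝ :=
  ∫ t in ((k:ℝ)+1+u)..(((k:ℝ)+1+u)+1),
    ((-12*x^2 + 48*t^2*x^3 - 16*t^4*x^4) * Real.exp (-t^2*x))
      * ((t-((k:ℝ)+1+u))^3/6 - (t-((k:ℝ)+1+u))^2/4 + (t-((k:ℝ)+1+u))/12)

lemma cast_succ_aux (u : ℝ) (k : ℕ) : ((k+1:ℕ):ℝ) + 1 + u = ((k:ℝ)+1+u) + 1 := by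
  push_cast; ring

-- bound on the integrand
lemma F3H_bound (x b t : ℝ) (hx : 0 < x) (ht : t ∈ Set.Icc b (b+1)) :
    |((-12*x^2 + 48*t^2*x^3 - 16*t^4*x^4) * Real.exp (-t^2*x))
      * ((t-b)^3/6 - (t-b)^2/4 + (t-b)/12)|
    ≤ 17 * x^2 * Real.exp (-(x/2)*t^2) := by
  have hs : 0 ≤ t^2*x := by positivity
  have hsplit : Real.exp (-t^2*x) = Real.exp (-(x/2)*t^2) * Real.exp (-(x/2)*t^2) := by
    rw [← Real.exp_add]; congr 1; ring
  have he3 : (1 + t^2*x/6)^3 ≤ Real.exp ((x/2)*t^2) := by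
    have h1 : 1 + t^2*x/6 ≤ Real.exp (t^2*x/6) := by
      have := Real.add_one_le_exp (t^2*x/6); linarith
    calc (1 + t^2*x/6)^3 ≤ Real.exp (t^2*x/6)^3 :=
          pow_le_pow_left₀ (by positivity) h1 3
      _ = Real.exp ((3:ℕ) * (t^2*x/6)) := (Real.exp_nat_mul _ 3).symm
      _ = Real.exp ((x/2)*t^2) := by congr 1; push_cast; ring
  have hEle : Real.exp (-(x/2)*t^2) ≤ ((1 + t^2*x/6)^3)⁻¹ := by
    have h0 : Real.exp (-(x/2)*t^2) = (Real.exp ((x/2)*t^2))⁻¹ := by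
      rw [← Real.exp_neg]; congr 1; ring
    rw [h0]
    exact inv_anti₀ (by positivity) he3
  have hH : |(t-b)^3/6 - (t-b)^2/4 + (t-b)/12| ≤ 1/12 := by
    obtain ⟨h1, h2⟩ := ht
    have hr0 : 0 ≤ t - b := by linarith
    have hr1 : t - b ≤ 1 := by linarith
    rw [abs_le]
    constructor <;> nlinarith [mul_nonneg (mul_nonneg hr0 hr0) hr0, sq_nonneg (t-b),
      sq_nonneg (t-b-1), sq_nonneg (2*(t-b)-1), mul_nonneg hr0 (sub_nonneg.2 hr1),
      mul_nonneg (mul_nonneg hr0 hr0) (sub_nonneg.2 hr1)]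
  have hA : |(-12*x^2 + 48*t^2*x^3 - 16*t^4*x^4)| ≤ x^2*(12 + 48*(t^2*x) + 16*(t^2*x)^2) := by
    rw [abs_le]
    constructor <;> nlinarith [sq_nonneg (t^2*x), sq_nonneg x, sq_nonneg (t*x),
      mul_nonneg (mul_nonneg hs hs) hs, pow_two_nonneg ((t:ℝ)^2*x)]
  calc |((-12*x^2 + 48*t^2*x^3 - 16*t^4*x^4) * Real.exp (-t^2*x))
          * ((t-b)^3/6 - (t-b)^2/4 + (t-b)/12)|
      = |(-12*x^2 + 48*t^2*x^3 - 16*t^4*x^4)| * Real.exp (-t^2*x)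
          * |(t-b)^3/6 - (t-b)^2/4 + (t-b)/12| := by
        rw [abs_mul, abs_mul, abs_of_pos (Real.exp_pos _)]
    _ ≤ (x^2*(12 + 48*(t^2*x) + 16*(t^2*x)^2)) * Real.exp (-t^2*x) * (1/12) := by
        apply mul_le_mul _ hH (abs_nonneg _) (by positivity)
        exact mul_le_mul_of_nonneg_right hA (Real.exp_pos _).le
    _ = (x^2*(12 + 48*(t^2*x) + 16*(t^2*x)^2)/12 * Real.exp (-(x/2)*t^2))
          * Real.exp (-(x/2)*t^2) := by rw [hsplit]; ring
    _ ≤ (17 * x^2) * Real.exp (-(x/2)*t^2) := by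
        apply mul_le_mul_of_nonneg_right _ (Real.exp_pos _).le
        calc x^2*(12 + 48*(t^2*x) + 16*(t^2*x)^2)/12 * Real.exp (-(x/2)*t^2)
            ≤ x^2*(12 + 48*(t^2*x) + 16*(t^2*x)^2)/12 * ((1 + t^2*x/6)^3)⁻¹ := by
              apply mul_le_mul_of_nonneg_left hEle (by positivity)
          _ ≤ 17 * x^2 := by
              have h3 : (0:ℝ) < (1 + t^2*x/6)^3 := by positivity
              have key : x^2*(12 + 48*(t^2*x) + 16*(t^2*x)^2)/12 ≤ 17*x^2*(1 + t^2*x/6)^3 := by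
                nlinarith [mul_nonneg (mul_nonneg hs hs) hs, sq_nonneg x,
                  mul_nonneg (sq_nonneg x) hs, mul_nonneg (sq_nonneg x) (mul_nonneg hs hs),
                  mul_nonneg (sq_nonneg x) (mul_nonneg (mul_nonneg hs hs) hs)]
              calc x^2*(12 + 48*(t^2*x) + 16*(t^2*x)^2)/12 * ((1 + t^2*x/6)^3)⁻¹
                  ≤ 17*x^2*(1 + t^2*x/6)^3 * ((1 + t^2*x/6)^3)⁻¹ :=
                    mul_le_mul_of_nonneg_right key (by positivity)
                _ = 17*x^2 := by
                    rw [mul_assoc, mul_inv_cancel₀ (ne_of_gt h3), mul_one]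
    _ = 17 * x^2 * Real.exp (-(x/2)*t^2) := by ring

section Sums
variable {u x : ℝ} (hu : 0 ≤ u) (hx : 0 < x)

include hu hx

lemma Tk_summable : Summable (Tk u x) := by
  refine ((summable_poly_exp u x hu hx 1).mul_left (x*2)).congr fun k => ?_
  simp only [Tk]; ring

lemma Ek_summable : Summable (Ek u x) := by
  refine ((summable_poly_exp u x hu hx 0).congr fun k => ?_)
  simp only [Ek]; ring

lemma Dk_summable : Summable (Dk u x) := by
  refine (((summable_poly_exp u x hu hx 0).mul_left (2*x)).sub
    ((summable_poly_exp u x hu hx 2).mul_left (4*x^2))).congr fun k => ?_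
  simp only [Dk]; ring

omit hu hx in
lemma Ik_eq (k : ℕ) : Ik u x k
    = Tk u x k - ((Ek u x k - Ek u x (k+1)) + (Tk u x k - Tk u x (k+1))/2
        + (Dk u x (k+1) - Dk u x k)/12) := by
  have h := interval_identity x ((k:ℝ)+1+u)
  simp only [Tk, Ek, Dk, Ik, cast_succ_aux u k]
  linarith [h]

lemma Ik_summable : Summable (Ik u x) := by
  have hT := Tk_summable hu hx
  have hE := Ek_summable hu hx
  have hD := Dk_summable hu hx
  have hT1 : Summable fun k => Tk u x (k+1) := (summable_nat_add_iff 1).2 hT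
  have hE1 : Summable fun k => Ek u x (k+1) := (summable_nat_add_iff 1).2 hE
  have hD1 : Summable fun k => Dk u x (k+1) := (summable_nat_add_iff 1).2 hD
  exact (Summable.congr (hT.sub (((hE.sub hE1).add (((hT.sub hT1)).div_const 2)).add
    ((hD1.sub hD).div_const 12))) (fun k => (Ik_eq (u:=u) (x:=x) k).symm))

lemma phi_structure :
    ∑' k, Tk u x k = Ek u x 0 + Tk u x 0 / 2 - Dk u x 0 / 12 + ∑' k, Ik u x k := by
  have hT := Tk_summable hu hx
  have hE := Ek_summable hu hx
  have hD := Dk_summable hu hx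
  have hT1 : Summable fun k => Tk u x (k+1) := (summable_nat_add_iff 1).2 hT
  have hE1 : Summable fun k => Ek u x (k+1) := (summable_nat_add_iff 1).2 hE
  have hD1 : Summable fun k => Dk u x (k+1) := (summable_nat_add_iff 1).2 hD
  have hI := Ik_summable hu hx
  have hEd : Summable fun k => Ek u x k - Ek u x (k+1) := hE.sub hE1
  have hTd : Summable fun k => (Tk u x k - Tk u x (k+1))/2 := (hT.sub hT1).div_const 2
  have hDd : Summable fun k => (Dk u x (k+1) - Dk u x k)/12 := (hD1.sub hD).div_const 12
  have h1 : ∑' k, Tk u x k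
      = ∑' k, ((Ek u x k - Ek u x (k+1)) + (Tk u x k - Tk u x (k+1))/2
          + (Dk u x (k+1) - Dk u x k)/12 + Ik u x k) := by
    refine tsum_congr fun k => ?_
    have := Ik_eq (u:=u) (x:=x) k
    linarith
  rw [h1, Summable.tsum_add ((hEd.add hTd).add hDd) hI, Summable.tsum_add (hEd.add hTd) hDd, Summable.tsum_add hEd hTd]
  have e1 : ∑' k, (Ek u x k - Ek u x (k+1)) = Ek u x 0 := tsum_telescope' hE
  have e2 : ∑' k, (Tk u x k - Tk u x (k+1))/2 = Tk u x 0 / 2 := by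
    rw [tsum_div_const, tsum_telescope' hT]
  have e3 : ∑' k, (Dk u x (k+1) - Dk u x k)/12 = -(Dk u x 0) / 12 := by
    rw [tsum_div_const]
    congr 1
    have : ∀ k:ℕ, Dk u x (k+1) - Dk u x k = -(Dk u x k - Dk u x (k+1)) := fun k => by ring
    rw [tsum_congr this, tsum_neg, tsum_telescope' hD]
  rw [e1, e2, e3]
  ring

end Sums

section Tail
variable {u x : ℝ} (hu : 0 ≤ u) (hx : 0 < x)
include hu hx

lemma Ik_abs_le (k : ℕ) : |Ik u x k|
    ≤ ∫ t in ((k:ℝ)+1+u)..(((k:ℝ)+1+u)+1), 17*x^2*Real.exp (-(x/2)*t^2) := by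
  have hle : ((k:ℝ)+1+u) ≤ ((k:ℝ)+1+u)+1 := by linarith
  refine le_trans (intervalIntegral.abs_integral_le_integral_abs hle) ?_
  apply intervalIntegral.integral_mono_on hle
  · exact Continuous.intervalIntegrable (by fun_prop) _ _
  · exact Continuous.intervalIntegrable (by fun_prop) _ _
  · intro t ht
    exact F3H_bound x ((k:ℝ)+1+u) t hx ht

lemma sum_Ik_abs_le (n : ℕ) :
    ∑ k ∈ Finset.range n, |Ik u x k| ≤ 51 * x * Real.sqrt x := by
  have hx2 : (0:ℝ) < x/2 := by linarith
  set g : ℝ → ℝ := fun t => 17*x^2*Real.exp (-(x/2)*t^2) with hg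
  set aS : ℕ → ℝ := fun k => (k:ℝ)+1+u with haS
  have hsum : ∑ k ∈ Finset.range n, ∫ t in (aS k)..(aS (k+1)), g t
      = ∫ t in (aS 0)..(aS n), g t := by
    apply intervalIntegral.sum_integral_adjacent_intervals
    intro k _
    exact Continuous.intervalIntegrable (by fun_prop) _ _
  have step1 : ∑ k ∈ Finset.range n, |Ik u x k|
      ≤ ∑ k ∈ Finset.range n, ∫ t in (aS k)..(aS (k+1)), g t := by
    apply Finset.sum_le_sum
    intro k _
    have h1 := Ik_abs_le hu hx k
    simp only [haS, hg]
    rw [show ((k+1:ℕ):ℝ)+1+u = ((k:ℝ)+1+u)+1 from cast_succ_aux u k]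
    exact h1
  have step2 : ∫ t in (aS 0)..(aS n), g t ≤ 17*x^2*Real.sqrt (π/(x/2)) := by
    have h0n : aS 0 ≤ aS n := by
      have h00 : (0:ℝ) ≤ (n:ℝ) := Nat.cast_nonneg n
      show ((0:ℕ):ℝ)+1+u ≤ ((n:ℕ):ℝ)+1+u
      push_cast
      linarith
    rw [intervalIntegral.integral_of_le h0n]
    have hInt : MeasureTheory.Integrable (fun t : ℝ => Real.exp (-(x/2)*t^2)) := by
      exact integrable_exp_neg_mul_sq hx2
    calc ∫ t in Set.Ioc (aS 0) (aS n), g t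
        = 17*x^2 * ∫ t in Set.Ioc (aS 0) (aS n), Real.exp (-(x/2)*t^2) := by
          rw [hg]
          simp only []
          rw [MeasureTheory.integral_const_mul]
      _ ≤ 17*x^2 * ∫ t : ℝ, Real.exp (-(x/2)*t^2) := by
          apply mul_le_mul_of_nonneg_left _ (by positivity)
          apply MeasureTheory.setIntegral_le_integral hInt
          filter_upwards with t using (Real.exp_pos _).le
      _ = 17*x^2*Real.sqrt (π/(x/2)) := by rw [integral_gaussian]
  have step3 : 17*x^2*Real.sqrt (π/(x/2)) ≤ 51 * x * Real.sqrt x := by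
    have hpi : π/(x/2) ≤ 9/x := by
      rw [div_le_div_iff₀ (by positivity) hx]
      nlinarith [Real.pi_le_four]
    have h9 : Real.sqrt (9/x) = 3/Real.sqrt x := by
      rw [Real.sqrt_div (by norm_num : (0:ℝ) ≤ 9),
        show Real.sqrt 9 = 3 from by
          rw [show (9:ℝ) = 3^2 by norm_num, Real.sqrt_sq (by norm_num)]]
    calc 17*x^2*Real.sqrt (π/(x/2)) ≤ 17*x^2*Real.sqrt (9/x) := by
          apply mul_le_mul_of_nonneg_left (Real.sqrt_le_sqrt hpi) (by positivity)
      _ = 17*x^2*(3/Real.sqrt x) := by rw [h9]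
      _ = 51*(x*(x/Real.sqrt x)) := by ring
      _ = 51 * x * Real.sqrt x := by rw [Real.div_sqrt]; ring
  linarith [step1, step2, step3, hsum]

end Tail

lemma phi_approx (u x : ℝ) (hu : 0 ≤ u) (hx : 0 < x) :
    |x * (∑' k:ℕ, 2*((k:ℝ)+1+u)*Real.exp (-((k:ℝ)+1+u)^2*x))
      - Real.exp (-(1+u)^2*x) * (1 + (1+u)*x - x/6 + (1+u)^2*x^2/3)| ≤ 51*x*Real.sqrt x := by
  have hphi : x * (∑' k:ℕ, 2*((k:ℝ)+1+u)*Real.exp (-((k:ℝ)+1+u)^2*x)) = ∑' k, Tk u x k := by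
    rw [← tsum_mul_left]
    exact tsum_congr fun k => by simp only [Tk]
  have hstruct := phi_structure hu hx
  have hmain : Ek u x 0 + Tk u x 0/2 - Dk u x 0/12
      = Real.exp (-(1+u)^2*x) * (1 + (1+u)*x - x/6 + (1+u)^2*x^2/3) := by
    simp only [Ek, Tk, Dk, Nat.cast_zero, zero_add]
    ring
  have habs : Summable fun k => |Ik u x k| := by
    apply summable_of_sum_range_le (fun k => abs_nonneg _)
    exact sum_Ik_abs_le hu hx
  have hItsum : |∑' k, Ik u x k| ≤ 51*x*Real.sqrt x := by
    have h1 : ‖∑' k, Ik u x k‖ ≤ ∑' k, ‖Ik u x k‖ := by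
      apply norm_tsum_le_tsum_norm
      simpa only [Real.norm_eq_abs] using habs
    simp only [Real.norm_eq_abs] at h1
    exact h1.trans
      (Real.tsum_le_of_sum_range_le (fun k => abs_nonneg _) (sum_Ik_abs_le hu hx))
  rw [hphi, hstruct, hmain, add_sub_cancel_left]
  exact hItsum

lemma log_slope : Filter.Tendsto (fun y:ℝ => Real.log (1+y)/y)
    (nhdsWithin 0 {0}ᶜ) (nhds 1) := by
  have h := hasDerivAt_iff_tendsto_slope.mp (Real.hasDerivAt_log one_ne_zero)
  have hshift : Filter.Tendsto (fun y:ℝ => 1+y) (nhdsWithin 0 {0}ᶜ) (nhdsWithin 1 {1}ᶜ) := by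
    apply tendsto_nhdsWithin_iff.2
    constructor
    · have h2 : Filter.Tendsto (fun y:ℝ => 1+y) (nhds 0) (nhds 1) := by
        simpa using (continuous_const_add (1:ℝ)).tendsto (0:ℝ)
      exact h2.mono_left nhdsWithin_le_nhds
    · filter_upwards [self_mem_nhdsWithin] with y hy
      simp only [Set.mem_compl_iff, Set.mem_singleton_iff] at hy ⊢
      intro h'
      exact hy (by linarith)
  have h3 := h.comp hshift
  have h4 : Filter.Tendsto (fun y:ℝ => Real.log (1+y)/y) (nhdsWithin 0 {0}ᶜ) (nhds 1⁻¹) := by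
    refine h3.congr fun y => ?_
    simp only [Function.comp_apply, slope_def_field, Real.log_one]
    ring_nf
  simpa using h4

lemma limit_zero (u : ℝ) (hu : 0 ≤ u) :
    Filter.Tendsto
      (fun x : ℝ => -(Real.log (x * ∑' k : ℕ,
          2 * ((k : ℝ) + 1 + u) * Real.exp (-((k : ℝ) + 1 + u) ^ 2 * x))) / x)
      (nhdsWithin 0 (Set.Ioi 0)) (nhds (u ^ 2 + u + 1 / 6)) := by
  set φ : ℝ → ℝ := fun x => x * ∑' k : ℕ,
      2 * ((k : ℝ) + 1 + u) * Real.exp (-((k : ℝ) + 1 + u) ^ 2 * x) with hφ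
  set m : ℝ → ℝ := fun y => Real.exp (-(1+u)^2*y) * (1 + (1+u)*y - y/6 + (1+u)^2*y^2/3) with hm
  have hm0 : m 0 = 1 := by simp [hm]
  have hmd : HasDerivAt m (-(1+u)^2 * Real.exp (-(1+u)^2*0) * (1 + (1+u)*0 - 0/6 + (1+u)^2*0^2/3)
      + Real.exp (-(1+u)^2*0) * ((1+u) - 1/6 + (1+u)^2*(2*0)/3)) 0 := by
    have hP : HasDerivAt (fun y:ℝ => Real.exp (-(1+u)^2*y)) (-(1+u)^2 * Real.exp (-(1+u)^2*0)) 0 := by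
      have h0 : HasDerivAt (fun y:ℝ => -(1+u)^2*y) (-(1+u)^2) 0 := by
        simpa using (hasDerivAt_id (0:ℝ)).const_mul (-(1+u)^2)
      simpa [mul_comm] using h0.exp
    have hq : HasDerivAt (fun y:ℝ => 1 + (1+u)*y - y/6 + (1+u)^2*y^2/3)
        ((1+u) - 1/6 + (1+u)^2*(2*0)/3) 0 := by
      have h1 : HasDerivAt (fun y:ℝ => (1:ℝ) + (1+u)*y) (1+u) 0 := by
        simpa using ((hasDerivAt_id (0:ℝ)).const_mul (1+u)).const_add (1:ℝ)
      have h2 := (h1.sub ((hasDerivAt_id (0:ℝ)).div_const 6)).add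
        (((hasDerivAt_pow 2 (0:ℝ)).const_mul ((1+u)^2)).div_const 3)
      refine h2.congr_deriv ?_
      norm_num
    exact hP.mul hq
  have hslope : Filter.Tendsto (fun y => (m y - 1)/y) (nhdsWithin 0 {0}ᶜ)
      (nhds (-(1+u)^2 * Real.exp (-(1+u)^2*0) * (1 + (1+u)*0 - 0/6 + (1+u)^2*0^2/3)
        + Real.exp (-(1+u)^2*0) * ((1+u) - 1/6 + (1+u)^2*(2*0)/3))) := by
    have := hasDerivAt_iff_tendsto_slope.mp hmd
    refine this.congr fun y => ?_
    rw [slope_def_field, hm0, sub_zero]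
  have hslope' : Filter.Tendsto (fun y => (m y - 1)/y) (nhdsWithin 0 {0}ᶜ)
      (nhds (-(u^2+u+1/6))) := by
    convert hslope using 2
    norm_num
    ring
  have hmono : nhdsWithin (0:ℝ) (Set.Ioi 0) ≤ nhdsWithin 0 {0}ᶜ :=
    nhdsWithin_mono 0 (fun y hy => by simpa using ne_of_gt hy)
  have herr : Filter.Tendsto (fun x => (φ x - m x)/x) (nhdsWithin 0 (Set.Ioi 0)) (nhds 0) := by
    apply squeeze_zero_norm' (a := fun x => 51 * Real.sqrt x)
    · filter_upwards [self_mem_nhdsWithin] with x hx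
      have hx0 : (0:ℝ) < x := hx
      have hA := phi_approx u x hu hx0
      rw [Real.norm_eq_abs, abs_div, abs_of_pos hx0]
      rw [div_le_iff₀ hx0]
      calc |φ x - m x| ≤ 51*x*Real.sqrt x := hA
        _ = 51 * Real.sqrt x * x := by ring
    · have : Filter.Tendsto (fun x:ℝ => 51 * Real.sqrt x) (nhds 0) (nhds (51 * Real.sqrt 0)) :=
        (Real.continuous_sqrt.tendsto 0).const_mul 51
      simp only [Real.sqrt_zero, mul_zero] at this
      exact this.mono_left nhdsWithin_le_nhds
  have h1 : Filter.Tendsto (fun x => (φ x - 1)/x) (nhdsWithin 0 (Set.Ioi 0))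
      (nhds (-(u^2+u+1/6))) := by
    have hsum := (hslope'.mono_left hmono).add herr
    rw [show -(u^2+u+1/6) + 0 = -(u^2+u+1/6) by ring] at hsum
    refine hsum.congr fun x => ?_
    rw [← add_div, add_comm, sub_add_sub_cancel]
  have h2 : Filter.Tendsto (fun x => φ x - 1) (nhdsWithin 0 (Set.Ioi 0)) (nhds 0) := by
    have hid : Filter.Tendsto (fun x:ℝ => x) (nhdsWithin 0 (Set.Ioi 0)) (nhds 0) :=
      Filter.tendsto_id.mono_right nhdsWithin_le_nhds
    have := h1.mul hid
    rw [mul_zero] at this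
    apply this.congr'
    filter_upwards [self_mem_nhdsWithin] with x hx
    have hx0 : x ≠ 0 := ne_of_gt hx
    rw [div_mul_cancel₀ _ hx0]
  have h3 : ∀ᶠ x in nhdsWithin (0:ℝ) (Set.Ioi 0), φ x - 1 < 0 := by
    have hneg : -(u^2+u+1/6) < (0:ℝ) := by nlinarith
    have hev := h1.eventually_lt_const hneg
    filter_upwards [hev, self_mem_nhdsWithin] with x hlt hx
    have hx0 : (0:ℝ) < x := hx
    have := mul_neg_of_neg_of_pos hlt hx0
    rwa [div_mul_cancel₀ _ (ne_of_gt hx0)] at this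
  have h4 : Filter.Tendsto (fun x => φ x - 1) (nhdsWithin 0 (Set.Ioi 0))
      (nhdsWithin 0 {0}ᶜ) := by
    refine tendsto_nhdsWithin_iff.2 ⟨h2, ?_⟩
    filter_upwards [h3] with x hx
    simpa using ne_of_lt hx
  have hcomp := log_slope.comp h4
  have hfinal := (hcomp.mul h1).neg
  rw [show -(1 * -(u^2+u+1/6)) = u^2+u+1/6 by ring] at hfinal
  refine hfinal.congr' ?_
  filter_upwards [h3, self_mem_nhdsWithin] with x hψ hx
  have hx0 : (0:ℝ) < x := hx
  have hψ0 : φ x - 1 ≠ 0 := ne_of_lt hψ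
  simp only [Function.comp_apply]
  rw [show (1:ℝ) + (φ x - 1) = φ x by ring]
  rw [div_mul_div_comm, mul_comm (Real.log (φ x)) (φ x - 1), mul_div_mul_left _ _ hψ0,
    neg_div]

noncomputable def sigP (u x : ℝ) : ℝ :=
  ∑' k:ℕ, 2*((k:ℝ)+2+u)*Real.exp (-((k:ℝ)+2+u)^2*x)
noncomputable def t0P (u x : ℝ) : ℝ := 2*(1+u)*Real.exp (-(1+u)^2*x)

lemma t0P_pos (u x : ℝ) (hu : 0 ≤ u) : 0 < t0P u x := by
  unfold t0P; positivity

lemma summable_main (u x : ℝ) (hu : 0 ≤ u) (hx : 0 < x) :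
    Summable (fun k:ℕ => 2*((k:ℝ)+1+u)*Real.exp (-((k:ℝ)+1+u)^2*x)) :=
  ((summable_poly_exp u x hu hx 1).mul_left 2).congr fun k => by ring

lemma main_split (u x : ℝ) (hu : 0 ≤ u) (hx : 0 < x) :
    (∑' k:ℕ, 2*((k:ℝ)+1+u)*Real.exp (-((k:ℝ)+1+u)^2*x)) = t0P u x + sigP u x := by
  rw [Summable.tsum_eq_zero_add (summable_main u x hu hx)]
  congr 1
  · simp [t0P]
  · refine tsum_congr fun k => ?_
    rw [show ((k+1:ℕ):ℝ)+1+u = (k:ℝ)+2+u by push_cast; ring]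

lemma sig_nonneg (u x : ℝ) (hu : 0 ≤ u) : 0 ≤ sigP u x := by
  apply tsum_nonneg
  intro k
  have : (0:ℝ) ≤ (k:ℝ) := Nat.cast_nonneg k
  positivity

lemma sig_summable (u x : ℝ) (hu : 0 ≤ u) (hx : 0 < x) :
    Summable (fun k:ℕ => 2*((k:ℝ)+2+u)*Real.exp (-((k:ℝ)+2+u)^2*x)) := by
  refine ((summable_nat_add_iff 1).2 (summable_main u x hu hx)).congr fun k => ?_
  rw [show ((k+1:ℕ):ℝ)+1+u = (k:ℝ)+2+u by push_cast; ring]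

lemma sig_le (u x : ℝ) (hu : 0 ≤ u) (hx1 : 1 ≤ x) :
    sigP u x ≤ t0P u x * (2*Real.exp (-2*x)) := by
  have hx : (0:ℝ) < x := lt_of_lt_of_le one_pos hx1
  set q := Real.exp (-2*x) with hqdef
  have hq0 : 0 ≤ q := (Real.exp_pos _).le
  have hq1 : q < 1 := Real.exp_lt_one_iff.2 (by linarith)
  have hqhalf : q ≤ 1/2 := by
    have h2 : (2:ℝ) ≤ Real.exp 2 := by
      have := Real.add_one_le_exp (2:ℝ); linarith
    have hmono : Real.exp (-2*x) ≤ Real.exp (-2) := Real.exp_le_exp.2 (by linarith)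
    have : Real.exp (-2) = (Real.exp 2)⁻¹ := by rw [← Real.exp_neg]
    rw [hqdef]
    calc Real.exp (-2*x) ≤ Real.exp (-2) := hmono
      _ = (Real.exp 2)⁻¹ := this
      _ ≤ (2:ℝ)⁻¹ := inv_anti₀ (by norm_num) h2
      _ = 1/2 := by norm_num
  have ht0 := t0P_pos u x hu
  have hterm : ∀ k:ℕ, 2*((k:ℝ)+2+u)*Real.exp (-((k:ℝ)+2+u)^2*x) ≤ t0P u x * q^(k+1) := by
    intro k
    have hk : (0:ℝ) ≤ (k:ℝ) := Nat.cast_nonneg k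
    have e1 : (k:ℝ)+2+u ≤ (1+u)*Real.exp ((k:ℝ)+1) := by
      have h := Real.add_one_le_exp ((k:ℝ)+1)
      nlinarith
    have e2 : Real.exp (-((k:ℝ)+2+u)^2*x)
        ≤ Real.exp (-(1+u)^2*x) * Real.exp (-(3*((k:ℝ)+1)*x)) := by
      rw [← Real.exp_add]
      apply Real.exp_le_exp.2
      nlinarith [mul_nonneg (mul_nonneg hk hk) hx.le, mul_nonneg (mul_nonneg hk hu) hx.le,
        mul_nonneg hk hx.le, mul_nonneg hu hx.le]
    calc 2*((k:ℝ)+2+u)*Real.exp (-((k:ℝ)+2+u)^2*x)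
        ≤ 2*((1+u)*Real.exp ((k:ℝ)+1))*(Real.exp (-(1+u)^2*x) * Real.exp (-(3*((k:ℝ)+1)*x))) := by
          apply mul_le_mul (by nlinarith) e2 (Real.exp_pos _).le (by positivity)
      _ = t0P u x * (Real.exp ((k:ℝ)+1) * Real.exp (-(3*((k:ℝ)+1)*x))) := by
          unfold t0P
          ring
      _ = t0P u x * Real.exp (((k:ℝ)+1) + -(3*((k:ℝ)+1)*x)) := by
          rw [← Real.exp_add]
      _ ≤ t0P u x * Real.exp (-2*((k:ℝ)+1)*x) := by
          apply mul_le_mul_of_nonneg_left _ ht0.le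
          apply Real.exp_le_exp.2
          nlinarith
      _ = t0P u x * q^(k+1) := by
          rw [hqdef, ← Real.exp_nat_mul]
          congr 1
          push_cast
          ring
  have hgeom : Summable (fun k:ℕ => t0P u x * q^(k+1)) := by
    refine (((summable_geometric_of_lt_one hq0 hq1).mul_left q).mul_left (t0P u x)).congr
      fun k => ?_
    rw [pow_succ]
    ring
  have hσs : Summable (fun k:ℕ => 2*((k:ℝ)+2+u)*Real.exp (-((k:ℝ)+2+u)^2*x)) :=
    sig_summable u x hu hx
  have h := Summable.tsum_le_tsum hterm hσs hgeom
  calc sigP u x ≤ ∑' k:ℕ, t0P u x * q^(k+1) := h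
    _ = t0P u x * (q * (1-q)⁻¹) := by
        rw [tsum_mul_left]
        congr 1
        have : ∀ k:ℕ, q^(k+1) = q * q^k := fun k => by rw [pow_succ]; ring
        rw [tsum_congr this, tsum_mul_left, tsum_geometric_of_lt_one hq0 hq1]
    _ ≤ t0P u x * (q * 2) := by
        apply mul_le_mul_of_nonneg_left _ ht0.le
        apply mul_le_mul_of_nonneg_left _ hq0
        calc (1-q)⁻¹ ≤ ((1:ℝ)/2)⁻¹ := inv_anti₀ (by norm_num) (by linarith)
          _ = 2 := by norm_num
    _ = t0P u x * (2*q) := by ring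

lemma limit_infty (u : ℝ) (hu : 0 ≤ u) :
    Filter.Tendsto
      (fun x : ℝ => -(Real.log (x * ∑' k : ℕ,
          2 * ((k : ℝ) + 1 + u) * Real.exp (-((k : ℝ) + 1 + u) ^ 2 * x))) / x)
      Filter.atTop (nhds ((u + 1) ^ 2)) := by
  have hlogx : Filter.Tendsto (fun x:ℝ => Real.log x / x) Filter.atTop (nhds 0) :=
    Real.isLittleO_log_id_atTop.tendsto_div_nhds_zero
  have hconst : Filter.Tendsto (fun x:ℝ => Real.log (2*(1+u)) / x) Filter.atTop (nhds 0) :=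
    tendsto_const_nhds.div_atTop Filter.tendsto_id
  have h2exp : Filter.Tendsto (fun x:ℝ => 2*Real.exp (-2*x)) Filter.atTop (nhds 0) := by
    have h1 : Filter.Tendsto (fun x:ℝ => 2*x) Filter.atTop Filter.atTop :=
      Filter.Tendsto.const_mul_atTop two_pos Filter.tendsto_id
    have h2 : Filter.Tendsto (fun x:ℝ => -(2*x)) Filter.atTop Filter.atBot :=
      Filter.tendsto_neg_atTop_atBot.comp h1
    have h3 : Filter.Tendsto (fun x:ℝ => Real.exp (-(2*x))) Filter.atTop (nhds 0) :=
      Real.tendsto_exp_atBot.comp h2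
    have h4 := h3.const_mul (2:ℝ)
    rw [mul_zero] at h4
    refine h4.congr fun x => ?_
    rw [show -(2*x) = -2*x by ring]
  have hrho : Filter.Tendsto (fun x:ℝ => Real.log (1 + sigP u x / t0P u x) / x)
      Filter.atTop (nhds 0) := by
    apply tendsto_of_tendsto_of_tendsto_of_le_of_le' (g := fun _:ℝ => (0:ℝ))
      tendsto_const_nhds h2exp
    · filter_upwards [Filter.eventually_ge_atTop (1:ℝ)] with x hx1
      have hx : (0:ℝ) < x := lt_of_lt_of_le one_pos hx1
      have hρ0 : 0 ≤ sigP u x / t0P u x :=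
        div_nonneg (sig_nonneg u x hu) (t0P_pos u x hu).le
      exact div_nonneg (Real.log_nonneg (by linarith)) hx.le
    · filter_upwards [Filter.eventually_ge_atTop (1:ℝ)] with x hx1
      have hx : (0:ℝ) < x := lt_of_lt_of_le one_pos hx1
      have ht0 := t0P_pos u x hu
      have hρ0 : 0 ≤ sigP u x / t0P u x := div_nonneg (sig_nonneg u x hu) ht0.le
      have hρle : sigP u x / t0P u x ≤ 2*Real.exp (-2*x) := by
        rw [div_le_iff₀ ht0]
        calc sigP u x ≤ t0P u x * (2*Real.exp (-2*x)) := sig_le u x hu hx1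
          _ = 2*Real.exp (-2*x) * t0P u x := by ring
      have hlog1 : Real.log (1 + sigP u x / t0P u x) ≤ sigP u x / t0P u x := by
        have := Real.log_le_sub_one_of_pos (show (0:ℝ) < 1 + sigP u x / t0P u x by linarith)
        linarith
      calc Real.log (1 + sigP u x / t0P u x) / x ≤ Real.log (1 + sigP u x / t0P u x) :=
            div_le_self (Real.log_nonneg (by linarith)) hx1
        _ ≤ 2*Real.exp (-2*x) := le_trans hlog1 hρle
  have hc : Filter.Tendsto (fun _:ℝ => ((u:ℝ)+1)^2) Filter.atTop (nhds (((u:ℝ)+1)^2)) :=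
    tendsto_const_nhds
  have htot := ((hc.sub hlogx).sub hconst).sub hrho
  rw [show (u+1)^2 - 0 - 0 - 0 = (u+1)^2 by ring] at htot
  refine htot.congr' ?_
  filter_upwards [Filter.eventually_ge_atTop (1:ℝ)] with x hx1
  have hx : (0:ℝ) < x := lt_of_lt_of_le one_pos hx1
  have ht0 := t0P_pos u x hu
  have hρ0 : 0 ≤ sigP u x / t0P u x := div_nonneg (sig_nonneg u x hu) ht0.le
  have hρpos : (0:ℝ) < 1 + sigP u x / t0P u x := by linarith
  have hsplit : (∑' k:ℕ, 2*((k:ℝ)+1+u)*Real.exp (-((k:ℝ)+1+u)^2*x))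
      = t0P u x * (1 + sigP u x / t0P u x) := by
    rw [main_split u x hu hx, mul_add, mul_one, mul_div_cancel₀ _ (ne_of_gt ht0)]
  rw [hsplit]
  rw [Real.log_mul (ne_of_gt hx) (by positivity),
    Real.log_mul (ne_of_gt ht0) (ne_of_gt hρpos)]
  have hlogt0 : Real.log (t0P u x) = Real.log (2*(1+u)) + (-(1+u)^2*x) := by
    unfold t0P
    rw [Real.log_mul (by positivity) (ne_of_gt (Real.exp_pos _)), Real.log_exp]
  rw [hlogt0]
  field_simp
  ring

theorem log_phi_limits (u : ℝ) (hu : 0 ≤ u) :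
    Filter.Tendsto
      (fun x : ℝ => -(Real.log (x * ∑' k : ℕ,
          2 * ((k : ℝ) + 1 + u) * Real.exp (-((k : ℝ) + 1 + u) ^ 2 * x))) / x)
      (nhdsWithin 0 (Set.Ioi 0)) (nhds (u ^ 2 + u + 1 / 6)) ∧
    Filter.Tendsto
      (fun x : ℝ => -(Real.log (x * ∑' k : ℕ,
          2 * ((k : ℝ) + 1 + u) * Real.exp (-((k : ℝ) + 1 + u) ^ 2 * x))) / x)
      Filter.atTop (nhds ((u + 1) ^ 2)) :=
  ⟨limit_zero u hu, limit_infty u hu⟩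
end

section
/- For every μ > 0, p > 0, u > −1, and t > 0: if p − u ≤ 1/2 then |1/(μ(p²+t²)^μ) − S_μ(t,u)| < 1/(μ p^{2μ}) − S_μ(0,u), and if p − u ≥ 1 then |1/(μ(p²+t²)^μ) − S_μ(t,u)| < S_μ(0,u) − 1/(μ p^{2μ}). -/
open Real Set Filter MeasureTheory intervalIntegral Topology

noncomputable def gg (μ s x : ℝ) : ℝ := 2 * x / ((x ^ 2 + s ^ 2) ^ (μ + 1))
noncomputable def gg₁ (μ s x : ℝ) : ℝ :=
  2 * (s ^ 2 - (2 * μ + 1) * x ^ 2) / ((x ^ 2 + s ^ 2) ^ (μ + 2))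
noncomputable def gg₂ (μ s x : ℝ) : ℝ :=
  4 * (μ + 1) * x * ((2 * μ + 1) * x ^ 2 - 3 * s ^ 2) / ((x ^ 2 + s ^ 2) ^ (μ + 3))

lemma hasDerivAt_base (s x : ℝ) : HasDerivAt (fun y : ℝ => y ^ 2 + s ^ 2) (2 * x) x := by
  simpa using (hasDerivAt_pow 2 x).add_const (s ^ 2)

lemma hasDerivAt_gg (μ s : ℝ) {x : ℝ} (hx : 0 < x) :
    HasDerivAt (gg μ s) (gg₁ μ s x) x := by
  have hB : (0:ℝ) < x ^ 2 + s ^ 2 := by positivity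
  have hpow : HasDerivAt (fun y : ℝ => (y ^ 2 + s ^ 2) ^ (μ + 1))
      (2 * x * (μ + 1) * (x ^ 2 + s ^ 2) ^ (μ + 1 - 1)) x :=
    (hasDerivAt_base s x).rpow_const (Or.inl hB.ne')
  have hnum : HasDerivAt (fun y : ℝ => 2 * y) 2 x := by
    simpa using (hasDerivAt_id x).const_mul 2
  have hden_ne : ((x ^ 2 + s ^ 2) ^ (μ + 1) : ℝ) ≠ 0 := (rpow_pos_of_pos hB _).ne'
  have h := hnum.div hpow hden_ne
  refine h.congr_deriv ?_
  have e0 : μ + 1 - 1 = μ := by ring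
  have e1 : (x ^ 2 + s ^ 2) ^ (μ + 1) = (x ^ 2 + s ^ 2) ^ μ * (x ^ 2 + s ^ 2) := by
    rw [Real.rpow_add hB, Real.rpow_one]
  have e2 : (x ^ 2 + s ^ 2) ^ (μ + 2) = (x ^ 2 + s ^ 2) ^ μ * ((x ^ 2 + s ^ 2) * (x ^ 2 + s ^ 2)) := by
    rw [Real.rpow_add hB, show (2:ℝ) = ((2:ℕ):ℝ) by norm_num, Real.rpow_natCast]
    ring
  have hA : ((x ^ 2 + s ^ 2) ^ μ : ℝ) ≠ 0 := (rpow_pos_of_pos hB _).ne'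
  rw [gg₁, e0, e1, e2]
  field_simp
  ring

lemma hasDerivAt_gg₁ (μ s : ℝ) {x : ℝ} (hx : 0 < x) :
    HasDerivAt (gg₁ μ s) (gg₂ μ s x) x := by
  have hB : (0:ℝ) < x ^ 2 + s ^ 2 := by positivity
  have hpow : HasDerivAt (fun y : ℝ => (y ^ 2 + s ^ 2) ^ (μ + 2))
      (2 * x * (μ + 2) * (x ^ 2 + s ^ 2) ^ (μ + 2 - 1)) x :=
    (hasDerivAt_base s x).rpow_const (Or.inl hB.ne')
  have hnum : HasDerivAt (fun y : ℝ => 2 * (s ^ 2 - (2 * μ + 1) * y ^ 2))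
      (-(2 * (2 * μ + 1)) * (2 * x)) x := by
    have h1 : HasDerivAt (fun y : ℝ => y ^ 2) (2 * x) x := by
      simpa using hasDerivAt_pow 2 x
    have := ((h1.const_mul (2 * μ + 1)).const_sub (s ^ 2)).const_mul 2
    refine this.congr_deriv ?_
    ring
  have hden_ne : ((x ^ 2 + s ^ 2) ^ (μ + 2) : ℝ) ≠ 0 := (rpow_pos_of_pos hB _).ne'
  have h := hnum.div hpow hden_ne
  refine h.congr_deriv ?_
  have e0 : μ + 2 - 1 = μ + 1 := by ring
  have e1 : (x ^ 2 + s ^ 2) ^ (μ + 1) = (x ^ 2 + s ^ 2) ^ μ * (x ^ 2 + s ^ 2) := by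
    rw [Real.rpow_add hB, Real.rpow_one]
  have e2 : (x ^ 2 + s ^ 2) ^ (μ + 2) = (x ^ 2 + s ^ 2) ^ μ * ((x ^ 2 + s ^ 2) * (x ^ 2 + s ^ 2)) := by
    rw [Real.rpow_add hB, show (2:ℝ) = ((2:ℕ):ℝ) by norm_num, Real.rpow_natCast]
    ring
  have e3 : (x ^ 2 + s ^ 2) ^ (μ + 3)
      = (x ^ 2 + s ^ 2) ^ μ * ((x ^ 2 + s ^ 2) * (x ^ 2 + s ^ 2) * (x ^ 2 + s ^ 2)) := by
    rw [Real.rpow_add hB, show (3:ℝ) = ((3:ℕ):ℝ) by norm_num, Real.rpow_natCast]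
    ring
  have hA : ((x ^ 2 + s ^ 2) ^ μ : ℝ) ≠ 0 := (rpow_pos_of_pos hB _).ne'
  rw [gg₂, e0, e1, e3, e2]
  field_simp
  ring

lemma hasDerivAt_H (μ s : ℝ) (hμ : 0 < μ) {x : ℝ} (hx : 0 < x) :
    HasDerivAt (fun y : ℝ => -(1 / (μ * (y ^ 2 + s ^ 2) ^ μ))) (gg μ s x) x := by
  have hB : (0:ℝ) < x ^ 2 + s ^ 2 := by positivity
  have hpow : HasDerivAt (fun y : ℝ => (y ^ 2 + s ^ 2) ^ μ)
      (2 * x * μ * (x ^ 2 + s ^ 2) ^ (μ - 1)) x :=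
    (hasDerivAt_base s x).rpow_const (Or.inl hB.ne')
  have h2 : HasDerivAt (fun y : ℝ => μ * (y ^ 2 + s ^ 2) ^ μ)
      (μ * (2 * x * μ * (x ^ 2 + s ^ 2) ^ (μ - 1))) x := hpow.const_mul μ
  have hne : μ * (x ^ 2 + s ^ 2) ^ μ ≠ 0 := by positivity
  have h3 := (h2.inv hne).neg
  have e1 : (x ^ 2 + s ^ 2) ^ μ = (x ^ 2 + s ^ 2) ^ (μ - 1) * (x ^ 2 + s ^ 2) := by
    rw [← Real.rpow_add_one hB.ne' (μ - 1)]
    ring_nf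
  have e2 : (x ^ 2 + s ^ 2) ^ (μ + 1) = (x ^ 2 + s ^ 2) ^ (μ - 1) * ((x ^ 2 + s ^ 2) * (x ^ 2 + s ^ 2)) := by
    rw [Real.rpow_add hB, Real.rpow_sub hB, Real.rpow_one]
    field_simp
  have hC : ((x ^ 2 + s ^ 2) ^ (μ - 1) : ℝ) ≠ 0 := (rpow_pos_of_pos hB _).ne'
  have h4 : HasDerivAt (fun y : ℝ => -(1 / (μ * (y ^ 2 + s ^ 2) ^ μ)))
      (μ * (2 * x * μ * (x ^ 2 + s ^ 2) ^ (μ - 1)) / (μ * (x ^ 2 + s ^ 2) ^ μ) ^ 2) x := by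
    simp only [one_div]
    exact h3.congr_deriv (by rw [neg_div, neg_neg])
  convert h4 using 1
  rw [gg, e1, e2]
  field_simp

lemma bern_aux {A B e : ℝ} (hA : 0 < A) (hB : 0 ≤ B) (he : 1 ≤ e) :
    A ^ e + e * A ^ (e - 1) * B ≤ (A + B) ^ e := by
  have hs0 : (0:ℝ) ≤ B / A := by positivity
  have hs : (-1:ℝ) ≤ B / A := by linarith
  have h0 : 1 + e * (B / A) ≤ (1 + B / A) ^ e := one_add_mul_self_le_rpow_one_add hs he
  have hApow : (0:ℝ) < A ^ e := rpow_pos_of_pos hA _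
  calc A ^ e + e * A ^ (e - 1) * B = A ^ e * (1 + e * (B / A)) := by
        rw [Real.rpow_sub hA, Real.rpow_one]
        field_simp
    _ ≤ A ^ e * (1 + B / A) ^ e := by
        exact mul_le_mul_of_nonneg_left h0 hApow.le
    _ = (A * (1 + B / A)) ^ e := by
        rw [Real.mul_rpow hA.le (by positivity)]
    _ = (A + B) ^ e := by
        congr 1
        field_simp

lemma ineq1 {μ t x : ℝ} (hμ : 0 < μ) (ht : 0 < t) (hx : 0 < x) :
    |gg₁ μ t x| < -(gg₁ μ 0 x) := by
  have hB : (0:ℝ) < x ^ 2 + t ^ 2 := by positivity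
  have hx2 : (0:ℝ) < x ^ 2 := by positivity
  have hXe : (0:ℝ) < (x ^ 2) ^ (μ + 2) := rpow_pos_of_pos hx2 _
  have hBe : (0:ℝ) < (x ^ 2 + t ^ 2) ^ (μ + 2) := rpow_pos_of_pos hB _
  have hgg0 : -(gg₁ μ 0 x) = 2 * ((2 * μ + 1) * x ^ 2) / ((x ^ 2) ^ (μ + 2)) := by
    rw [gg₁]
    norm_num
    rw [neg_div]
    ring_nf
  have habs : |gg₁ μ t x| = 2 * |t ^ 2 - (2 * μ + 1) * x ^ 2| / ((x ^ 2 + t ^ 2) ^ (μ + 2)) := by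
    rw [gg₁, abs_div, abs_of_pos hBe, abs_mul]
    norm_num
  rw [hgg0, habs, div_lt_div_iff₀ hBe hXe]
  have hbern : (x ^ 2) ^ (μ + 2) + (μ + 2) * (x ^ 2) ^ (μ + 2 - 1) * t ^ 2
      ≤ (x ^ 2 + t ^ 2) ^ (μ + 2) := bern_aux hx2 (by positivity) (by linarith)
  have hXY : x ^ 2 * (x ^ 2) ^ (μ + 2 - 1) = (x ^ 2) ^ (μ + 2) := by
    rw [Real.rpow_sub hx2, Real.rpow_one]
    field_simp
  have hYpos : (0:ℝ) < (x ^ 2) ^ (μ + 2 - 1) := rpow_pos_of_pos hx2 _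
  have hN : |t ^ 2 - (2 * μ + 1) * x ^ 2| ≤ t ^ 2 + (2 * μ + 1) * x ^ 2 := by
    rw [abs_le]
    constructor <;> nlinarith
  have key : 2 * ((2 * μ + 1) * x ^ 2) * ((x ^ 2) ^ (μ + 2) + (μ + 2) * (x ^ 2) ^ (μ + 2 - 1) * t ^ 2)
      ≤ 2 * ((2 * μ + 1) * x ^ 2) * ((x ^ 2 + t ^ 2) ^ (μ + 2)) :=
    mul_le_mul_of_nonneg_left hbern (by positivity)
  have e1 : 2 * ((2 * μ + 1) * x ^ 2) * ((x ^ 2) ^ (μ + 2) + (μ + 2) * (x ^ 2) ^ (μ + 2 - 1) * t ^ 2)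
      = 2 * ((2 * μ + 1) * x ^ 2) * (x ^ 2) ^ (μ + 2)
        + 2 * (2 * μ + 1) * (μ + 2) * t ^ 2 * (x ^ 2 * (x ^ 2) ^ (μ + 2 - 1)) := by ring
  rw [e1, hXY] at key
  have h2 : 2 * |t ^ 2 - (2 * μ + 1) * x ^ 2| * (x ^ 2) ^ (μ + 2)
      ≤ 2 * (t ^ 2 + (2 * μ + 1) * x ^ 2) * (x ^ 2) ^ (μ + 2) := by nlinarith [hXe]
  have h3 : (0:ℝ) < t ^ 2 * (x ^ 2) ^ (μ + 2) := mul_pos (pow_pos ht 2) hXe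
  nlinarith [key, h2, h3, mul_pos hμ h3, mul_pos (mul_pos hμ hμ) h3]

lemma ineq2 {μ t x : ℝ} (hμ : 0 < μ) (ht : 0 < t) (hx : 0 < x) :
    |gg₂ μ t x| < gg₂ μ 0 x := by
  have hB : (0:ℝ) < x ^ 2 + t ^ 2 := by positivity
  have hx2 : (0:ℝ) < x ^ 2 := by positivity
  have hXe : (0:ℝ) < (x ^ 2) ^ (μ + 3) := rpow_pos_of_pos hx2 _
  have hBe : (0:ℝ) < (x ^ 2 + t ^ 2) ^ (μ + 3) := rpow_pos_of_pos hB _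
  have hgg0 : gg₂ μ 0 x = 4 * (μ + 1) * x * ((2 * μ + 1) * x ^ 2) / ((x ^ 2) ^ (μ + 3)) := by
    rw [gg₂]
    norm_num
  have habs : |gg₂ μ t x|
      = 4 * (μ + 1) * x * |(2 * μ + 1) * x ^ 2 - 3 * t ^ 2| / ((x ^ 2 + t ^ 2) ^ (μ + 3)) := by
    rw [gg₂, abs_div, abs_of_pos hBe, abs_mul, abs_of_pos (by positivity : (0:ℝ) < 4 * (μ + 1) * x)]
  rw [hgg0, habs, div_lt_div_iff₀ hBe hXe]
  have hbern : (x ^ 2) ^ (μ + 3) + (μ + 3) * (x ^ 2) ^ (μ + 3 - 1) * t ^ 2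
      ≤ (x ^ 2 + t ^ 2) ^ (μ + 3) := bern_aux hx2 (by positivity) (by linarith)
  have hXY : x ^ 2 * (x ^ 2) ^ (μ + 3 - 1) = (x ^ 2) ^ (μ + 3) := by
    rw [Real.rpow_sub hx2, Real.rpow_one]
    field_simp
  have hN : |(2 * μ + 1) * x ^ 2 - 3 * t ^ 2| ≤ (2 * μ + 1) * x ^ 2 + 3 * t ^ 2 := by
    rw [abs_le]
    constructor <;> nlinarith
  have hc : (0:ℝ) < 4 * (μ + 1) * x := by positivity
  have key : 4 * (μ + 1) * x * ((2 * μ + 1) * x ^ 2) * ((x ^ 2) ^ (μ + 3) + (μ + 3) * (x ^ 2) ^ (μ + 3 - 1) * t ^ 2)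
      ≤ 4 * (μ + 1) * x * ((2 * μ + 1) * x ^ 2) * ((x ^ 2 + t ^ 2) ^ (μ + 3)) :=
    mul_le_mul_of_nonneg_left hbern (by positivity)
  have e1 : 4 * (μ + 1) * x * ((2 * μ + 1) * x ^ 2) * ((x ^ 2) ^ (μ + 3) + (μ + 3) * (x ^ 2) ^ (μ + 3 - 1) * t ^ 2)
      = 4 * (μ + 1) * x * ((2 * μ + 1) * x ^ 2) * (x ^ 2) ^ (μ + 3)
        + 4 * (μ + 1) * (2 * μ + 1) * (μ + 3) * (x * t ^ 2) * (x ^ 2 * (x ^ 2) ^ (μ + 3 - 1)) := by ring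
  rw [e1, hXY] at key
  have h2 : 4 * (μ + 1) * x * |(2 * μ + 1) * x ^ 2 - 3 * t ^ 2| * (x ^ 2) ^ (μ + 3)
      ≤ 4 * (μ + 1) * x * ((2 * μ + 1) * x ^ 2 + 3 * t ^ 2) * (x ^ 2) ^ (μ + 3) := by
    have := mul_le_mul_of_nonneg_left hN hc.le
    nlinarith [hXe]
  have h3 : (0:ℝ) < x * t ^ 2 * (x ^ 2) ^ (μ + 3) := by positivity
  nlinarith [key, h2, h3, mul_pos hμ h3, mul_pos (mul_pos hμ hμ) h3]

section Core

variable {f f' f'' : ℝ → ℝ}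

lemma strictAntiOn_aux (hd : ∀ x, 0 < x → HasDerivAt f (f' x) x)
    (hneg : ∀ x, 0 < x → f' x < 0) : StrictAntiOn f (Ioi (0:ℝ)) := by
  apply strictAntiOn_of_deriv_neg (convex_Ioi 0)
  · exact fun x hx => ((hd x hx).continuousAt).continuousWithinAt
  · intro x hx
    rw [interior_Ioi] at hx
    rw [(hd x hx).deriv]
    exact hneg x hx

lemma core_mid (hd : ∀ x, 0 < x → HasDerivAt f (f' x) x)
    (hd' : ∀ x, 0 < x → HasDerivAt f' (f'' x) x)
    (hneg : ∀ x, 0 < x → f' x < 0)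
    (hpos : ∀ x, 0 < x → 0 < f'' x)
    {l a : ℝ} (hl : 0 < l) (ha : l + 1 / 2 ≤ a) :
    f a < ∫ x in l..(l + 1), f x := by
  set m : ℝ := l + 1 / 2 with hm
  have hm0 : 0 < m := by simp only [hm]; linarith
  have ha0 : 0 < a := lt_of_lt_of_le hm0 ha
  have hanti : StrictAntiOn f (Ioi (0:ℝ)) := strictAntiOn_aux hd hneg
  have hmono' : StrictMonoOn f' (Ioi (0:ℝ)) := by
    apply strictMonoOn_of_deriv_pos (convex_Ioi 0)
    · exact fun x hx => ((hd' x hx).continuousAt).continuousWithinAt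
    · intro x hx
      rw [interior_Ioi] at hx
      rw [(hd' x hx).deriv]
      exact hpos x hx
  have h_am : f a ≤ f m := by
    rcases eq_or_lt_of_le ha with h | h
    · rw [← h]
    · exact (hanti hm0 ha0 h).le
  -- tangent line function
  set φ : ℝ → ℝ := fun x => f x - (f m + f' m * (x - m)) with hφ
  have hφd : ∀ x, 0 < x → HasDerivAt φ (f' x - f' m) x := by
    intro x hx
    have hT : HasDerivAt (fun y : ℝ => f m + f' m * (y - m)) (f' m) x := by
      simpa using (((hasDerivAt_id x).sub_const m).const_mul (f' m)).const_add (f m)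
    exact (hd x hx).sub hT
  have hφm : φ m = 0 := by simp [hφ]
  have hφcont : ∀ {c d : ℝ}, 0 < c → ContinuousOn φ (Icc c d) := by
    intro c d hc
    intro x hx
    exact ((hφd x (lt_of_lt_of_le hc hx.1)).continuousAt).continuousWithinAt
  have hφ_anti : StrictAntiOn φ (Icc l m) := by
    apply strictAntiOn_of_deriv_neg (convex_Icc l m) (hφcont hl)
    intro x hx
    rw [interior_Icc] at hx
    rw [(hφd x (lt_trans hl hx.1)).deriv]
    have := hmono' (show x ∈ Ioi (0:ℝ) from lt_trans hl hx.1) (show m ∈ Ioi (0:ℝ) from hm0) hx.2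
    linarith
  have hφ_mono : StrictMonoOn φ (Icc m (l + 1)) := by
    apply strictMonoOn_of_deriv_pos (convex_Icc m (l + 1)) (hφcont hm0)
    intro x hx
    rw [interior_Icc] at hx
    rw [(hφd x (lt_trans hm0 hx.1)).deriv]
    have := hmono' (show m ∈ Ioi (0:ℝ) from hm0) (show x ∈ Ioi (0:ℝ) from lt_trans hm0 hx.1) hx.1
    linarith
  have hlm : l < m := by simp only [hm]; linarith
  have hml1 : m < l + 1 := by simp only [hm]; linarith
  have hint1 : IntervalIntegrable φ volume l m := by
    apply ContinuousOn.intervalIntegrable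
    rw [uIcc_of_le hlm.le]
    exact hφcont hl
  have hint2 : IntervalIntegrable φ volume m (l + 1) := by
    apply ContinuousOn.intervalIntegrable
    rw [uIcc_of_le hml1.le]
    exact hφcont hm0
  have I1 : 0 < ∫ x in l..m, φ x := by
    apply intervalIntegral.intervalIntegral_pos_of_pos_on hint1 _ hlm
    intro x hx
    have : φ x > φ m := hφ_anti ⟨hx.1.le, hx.2.le⟩ ⟨hlm.le, le_refl m⟩ hx.2
    rw [hφm] at this
    exact this
  have I2 : 0 < ∫ x in m..(l + 1), φ x := by
    apply intervalIntegral.intervalIntegral_pos_of_pos_on hint2 _ hml1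
    intro x hx
    have : φ m < φ x := hφ_mono ⟨le_refl m, hml1.le⟩ ⟨hx.1.le, hx.2.le⟩ hx.1
    rw [hφm] at this
    exact this
  have Itot : 0 < ∫ x in l..(l + 1), φ x := by
    rw [← intervalIntegral.integral_add_adjacent_intervals hint1 hint2]
    linarith
  -- compute ∫ f = ∫ φ + f m
  have hfc : ContinuousOn f (Icc l (l + 1)) := fun x hx =>
    ((hd x (lt_of_lt_of_le hl hx.1)).continuousAt).continuousWithinAt
  have hfint : IntervalIntegrable f volume l (l + 1) := by
    apply ContinuousOn.intervalIntegrable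
    rwa [uIcc_of_le (by linarith : l ≤ l + 1)]
  have hφint : IntervalIntegrable φ volume l (l + 1) := hint1.trans hint2
  have hTint : IntervalIntegrable (fun x : ℝ => f m + f' m * (x - m)) volume l (l + 1) := by
    exact (continuous_const.add (continuous_const.mul (continuous_id.sub continuous_const))).intervalIntegrable _ _
  have split : (∫ x in l..(l + 1), f x)
      = (∫ x in l..(l + 1), φ x) + ∫ x in l..(l + 1), (f m + f' m * (x - m)) := by
    rw [← intervalIntegral.integral_add hφint hTint]
    congr 1
    funext x
    simp [hφ]
  have hTval : (∫ x in l..(l + 1), (f m + f' m * (x - m))) = f m := by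
    have h1 : (∫ x in l..(l + 1), (f m + f' m * (x - m)))
        = (∫ x in l..(l + 1), (f m : ℝ)) + ∫ x in l..(l + 1), f' m * (x - m) := by
      exact intervalIntegral.integral_add intervalIntegrable_const
        ((continuous_const.mul (continuous_id.sub continuous_const)).intervalIntegrable _ _)
    have h2 : (∫ x in l..(l + 1), f' m * (x - m)) = f' m * ∫ x in l..(l + 1), (x - m) := by
      exact intervalIntegral.integral_const_mul _ _
    have h3 : (∫ x in l..(l + 1), (x - m)) = 0 := by
      rw [intervalIntegral.integral_sub intervalIntegrable_id intervalIntegrable_const]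
      rw [integral_id, intervalIntegral.integral_const]
      simp only [hm, smul_eq_mul]
      ring
    rw [h1, h2, h3, intervalIntegral.integral_const]
    simp
  calc f a ≤ f m := h_am
    _ < (∫ x in l..(l + 1), φ x) + f m := by linarith
    _ = ∫ x in l..(l + 1), f x := by rw [split, hTval]

lemma core_right (hd : ∀ x, 0 < x → HasDerivAt f (f' x) x)
    (hneg : ∀ x, 0 < x → f' x < 0)
    {l a : ℝ} (ha0 : 0 < a) (hal : a ≤ l) :
    (∫ x in l..(l + 1), f x) < f a := by
  have hl : 0 < l := lt_of_lt_of_le ha0 hal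
  have hanti : StrictAntiOn f (Ioi (0:ℝ)) := strictAntiOn_aux hd hneg
  have hfc : ∀ {c d : ℝ}, 0 < c → ContinuousOn f (Icc c d) := by
    intro c d hc x hx
    exact ((hd x (lt_of_lt_of_le hc hx.1)).continuousAt).continuousWithinAt
  have hfint : IntervalIntegrable f volume l (l + 1) := by
    apply ContinuousOn.intervalIntegrable
    rw [uIcc_of_le (by linarith : l ≤ l + 1)]
    exact hfc hl
  have hφint : IntervalIntegrable (fun x : ℝ => f l - f x) volume l (l + 1) :=
    intervalIntegrable_const.sub hfint
  have I1 : 0 < ∫ x in l..(l + 1), (f l - f x) := by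
    apply intervalIntegral.intervalIntegral_pos_of_pos_on hφint _ (by linarith)
    intro x hx
    have : f x < f l := hanti hl (lt_trans hl hx.1) hx.1
    linarith
  have hval : (∫ x in l..(l + 1), (f l - f x)) = f l - ∫ x in l..(l + 1), f x := by
    rw [intervalIntegral.integral_sub intervalIntegrable_const hfint,
      intervalIntegral.integral_const]
    simp
  have hfla : f l ≤ f a := by
    rcases eq_or_lt_of_le hal with h | h
    · rw [h]
    · exact (hanti ha0 hl h).le
  rw [hval] at I1
  linarith

end Core

lemma telescope_hasSum_s19 {b : ℕ → ℝ} (h0 : Tendsto b atTop (𝓝 0))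
    (hanti : ∀ k, b (k + 1) ≤ b k) : HasSum (fun k => b k - b (k + 1)) (b 0) := by
  have hA : Antitone b := antitone_nat_of_succ_le hanti
  have hnn : ∀ n, 0 ≤ b n := by
    intro n
    exact le_of_tendsto h0 (eventually_atTop.2 ⟨n, fun m hm => hA hm⟩)
  have hsum : Summable (fun k => b k - b (k + 1)) := by
    apply summable_of_sum_range_le (fun n => sub_nonneg.2 (hanti n))
    intro n
    rw [Finset.sum_range_sub' b n]
    linarith [hnn n]
  have h1 : Tendsto (fun n => ∑ k ∈ Finset.range n, (b k - b (k + 1))) atTop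
      (𝓝 (∑' k, (b k - b (k + 1)))) := hsum.hasSum.tendsto_sum_nat
  have h2 : Tendsto (fun n => ∑ k ∈ Finset.range n, (b k - b (k + 1))) atTop (𝓝 (b 0 - 0)) := by
    have hconst : Tendsto (fun _ : ℕ => b 0) atTop (𝓝 (b 0)) := tendsto_const_nhds
    apply Tendsto.congr _ (hconst.sub h0)
    intro n
    exact (Finset.sum_range_sub' b n).symm
  have : (∑' k, (b k - b (k + 1))) = b 0 := by
    have := tendsto_nhds_unique h1 h2
    simpa using this
  exact this ▸ hsum.hasSum

lemma gg_contOn (μ s : ℝ) {c d : ℝ} (hc : 0 < c) : ContinuousOn (gg μ s) (Icc c d) :=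
  fun x hx => ((hasDerivAt_gg μ s (lt_of_lt_of_le hc hx.1)).continuousAt).continuousWithinAt

lemma gg_intInt (μ s : ℝ) {c d : ℝ} (hc : 0 < c) (hcd : c ≤ d) :
    IntervalIntegrable (gg μ s) volume c d := by
  apply ContinuousOn.intervalIntegrable
  rw [uIcc_of_le hcd]
  exact gg_contOn μ s hc

lemma hasSum_integrals {μ p : ℝ} (hμ : 0 < μ) (hp : 0 < p) (s : ℝ) :
    HasSum (fun k : ℕ => ∫ x in (p + k)..(p + k + 1), gg μ s x)
      (1 / (μ * (p ^ 2 + s ^ 2) ^ μ)) := by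
  set b : ℕ → ℝ := fun k => 1 / (μ * ((p + k) ^ 2 + s ^ 2) ^ μ) with hb
  have hpk : ∀ k : ℕ, (0:ℝ) < p + k := fun k => by positivity
  have hftc : ∀ k : ℕ, (∫ x in (p + k)..(p + k + 1), gg μ s x) = b k - b (k + 1) := by
    intro k
    have hder : ∀ x ∈ uIcc (p + (k:ℝ)) (p + k + 1),
        HasDerivAt (fun y : ℝ => -(1 / (μ * (y ^ 2 + s ^ 2) ^ μ))) (gg μ s x) x := by
      intro x hx
      rw [uIcc_of_le (by linarith : p + (k:ℝ) ≤ p + k + 1)] at hx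
      exact hasDerivAt_H μ s hμ (lt_of_lt_of_le (hpk k) hx.1)
    rw [intervalIntegral.integral_eq_sub_of_hasDerivAt hder
      (gg_intInt μ s (hpk k) (by linarith))]
    simp only [hb]
    push_cast
    ring_nf
  have hb0 : Tendsto b atTop (𝓝 0) := by
    have h1 : Tendsto (fun k : ℕ => p + (k:ℝ)) atTop atTop :=
      tendsto_atTop_add_const_left _ p tendsto_natCast_atTop_atTop
    have h2 : Tendsto (fun k : ℕ => (p + (k:ℝ)) ^ 2 + s ^ 2) atTop atTop := by
      apply tendsto_atTop_add_const_right
      exact (tendsto_pow_atTop (by norm_num)).comp h1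
    have h3 : Tendsto (fun k : ℕ => μ * ((p + (k:ℝ)) ^ 2 + s ^ 2) ^ μ) atTop atTop := by
      apply Tendsto.const_mul_atTop hμ
      exact (tendsto_rpow_atTop hμ).comp h2
    refine h3.inv_tendsto_atTop.congr fun k => ?_
    simp only [hb, one_div, Pi.inv_apply]
  have hbanti : ∀ k : ℕ, b (k + 1) ≤ b k := by
    intro k
    have h1 : (0:ℝ) < μ * ((p + k) ^ 2 + s ^ 2) ^ μ := by
      have := hpk k
      positivity
    apply one_div_le_one_div_of_le h1
    apply mul_le_mul_of_nonneg_left _ hμ.le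
    apply Real.rpow_le_rpow (by positivity) _ hμ.le
    have h2 : (p + (k:ℝ)) ≤ p + ((k:ℕ) + 1 : ℕ) := by push_cast; linarith
    have h3 : (p + (k:ℝ)) ^ 2 ≤ (p + ((k:ℕ) + 1 : ℕ):ℝ) ^ 2 := by
      apply pow_le_pow_left₀ (hpk k).le h2
    linarith
  have := telescope_hasSum_s19 hb0 hbanti
  have hb0p : b 0 = 1 / (μ * (p ^ 2 + s ^ 2) ^ μ) := by simp [hb]
  rw [hb0p] at this
  have hfe : (fun k : ℕ => ∫ x in (p + k)..(p + k + 1), gg μ s x)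
      = fun k => b k - b (k + 1) := funext hftc
  rw [hfe]
  exact this

lemma summable_gg {μ u : ℝ} (hμ : 0 < μ) (hu : -1 < u) (s : ℝ) :
    Summable (fun k : ℕ => gg μ s ((k:ℝ) + 1 + u)) := by
  set c : ℝ := -(2 * μ + 1) with hc
  set d : ℝ := min 1 (1 + u) with hd
  have hd0 : 0 < d := lt_min one_pos (by linarith)
  have ha : ∀ k : ℕ, (0:ℝ) < (k:ℝ) + 1 + u := by
    intro k
    have : (0:ℝ) ≤ (k:ℝ) := Nat.cast_nonneg k
    linarith
  have hbase : Summable (fun k : ℕ => ((k:ℝ) + 1) ^ c) := by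
    have h := (Real.summable_nat_rpow (p := c)).2 (by rw [hc]; linarith)
    have h2 := (summable_nat_add_iff 1).2 h
    apply h2.congr
    intro n
    push_cast
    ring_nf
  have hnn : ∀ k : ℕ, 0 ≤ gg μ s ((k:ℝ) + 1 + u) := by
    intro k
    have hb : (0:ℝ) < (((k:ℝ) + 1 + u) ^ 2 + s ^ 2) ^ (μ + 1) := by
      have := ha k; positivity
    rw [gg]
    exact div_nonneg (by nlinarith [ha k]) hb.le
  have hbound : ∀ k : ℕ, gg μ s ((k:ℝ) + 1 + u) ≤ (2 * d ^ c) * (((k:ℝ) + 1) ^ c) := by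
    intro k
    set a : ℝ := (k:ℝ) + 1 + u with haa
    have ha0 : 0 < a := ha k
    have ha2 : (0:ℝ) < a ^ 2 := pow_pos ha0 2
    have hstep1 : gg μ s a ≤ 2 * a / ((a ^ 2) ^ (μ + 1)) := by
      rw [gg]
      have hle : ((a ^ 2 : ℝ)) ^ (μ + 1) ≤ (a ^ 2 + s ^ 2) ^ (μ + 1) :=
        Real.rpow_le_rpow ha2.le (by nlinarith [sq_nonneg s]) (by linarith)
      have hp1 : (0:ℝ) < ((a ^ 2 : ℝ)) ^ (μ + 1) := Real.rpow_pos_of_pos ha2 _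
      have hp2 : (0:ℝ) < ((a ^ 2 + s ^ 2 : ℝ)) ^ (μ + 1) := lt_of_lt_of_le hp1 hle
      rw [div_le_div_iff₀ hp2 hp1]
      nlinarith [mul_le_mul_of_nonneg_left hle (by linarith : (0:ℝ) ≤ 2 * a)]
    have e1 : ((a ^ 2 : ℝ)) ^ (μ + 1) = a ^ ((2:ℝ) * (μ + 1)) := by
      rw [← Real.rpow_natCast a 2, ← Real.rpow_mul ha0.le]
      norm_num
    have e2 : 2 * a / (a ^ ((2:ℝ) * (μ + 1))) = 2 * a ^ c := by
      rw [hc, show -(2 * μ + 1) = 1 - (2:ℝ) * (μ + 1) by ring, Real.rpow_sub ha0, Real.rpow_one]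
      ring
    have hstep2 : a ^ c ≤ (d * ((k:ℝ) + 1)) ^ c := by
      apply Real.rpow_le_rpow_of_nonpos (by positivity)
      · have hd1 : d ≤ 1 := min_le_left _ _
        have hd2 : d ≤ 1 + u := min_le_right _ _
        have hk0 : (0:ℝ) ≤ (k:ℝ) := k.cast_nonneg
        rcases le_or_gt u 0 with h | h
        · nlinarith
        · nlinarith
      · rw [hc]; linarith
    have e3 : (d * ((k:ℝ) + 1)) ^ c = d ^ c * ((k:ℝ) + 1) ^ c :=
      Real.mul_rpow hd0.le (by positivity)
    calc gg μ s a ≤ 2 * a / ((a ^ 2) ^ (μ + 1)) := hstep1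
      _ = 2 * a ^ c := by rw [e1, e2]
      _ ≤ 2 * (d ^ c * ((k:ℝ) + 1) ^ c) := by
          rw [← e3]
          have := hstep2
          nlinarith [Real.rpow_pos_of_pos (show (0:ℝ) < d * ((k:ℝ)+1) by positivity) c]
      _ = (2 * d ^ c) * (((k:ℝ) + 1) ^ c) := by ring
  exact Summable.of_nonneg_of_le hnn hbound ((hbase.mul_left (2 * d ^ c)))

lemma deriv_bounds {μ t : ℝ} (hμ : 0 < μ) (ht : 0 < t) (c : ℝ) (hc : |c| ≤ 1) :
    (∀ x, 0 < x → gg₁ μ 0 x + c * gg₁ μ t x < 0)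
      ∧ (∀ x, 0 < x → 0 < gg₂ μ 0 x + c * gg₂ μ t x) := by
  constructor
  · intro x hx
    have h1 := ineq1 hμ ht hx
    have h2 : c * gg₁ μ t x ≤ |gg₁ μ t x| := by
      calc c * gg₁ μ t x ≤ |c * gg₁ μ t x| := le_abs_self _
        _ = |c| * |gg₁ μ t x| := abs_mul _ _
        _ ≤ 1 * |gg₁ μ t x| := mul_le_mul_of_nonneg_right hc (abs_nonneg _)
        _ = |gg₁ μ t x| := one_mul _
    linarith
  · intro x hx
    have h1 := ineq2 hμ ht hx
    have h2 : -|gg₂ μ t x| ≤ c * gg₂ μ t x := by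
      have h3 : |c * gg₂ μ t x| ≤ |gg₂ μ t x| := by
        calc |c * gg₂ μ t x| = |c| * |gg₂ μ t x| := abs_mul _ _
          _ ≤ 1 * |gg₂ μ t x| := mul_le_mul_of_nonneg_right hc (abs_nonneg _)
          _ = |gg₂ μ t x| := one_mul _
      linarith [neg_abs_le (c * gg₂ μ t x)]
    linarith

lemma caseA {μ p u t : ℝ} (hμ : 0 < μ) (hp : 0 < p) (hu : -1 < u) (ht : 0 < t)
    (hpu : p ≤ u + 1 / 2) (c : ℝ) (hc : |c| ≤ 1) :
    0 < (1 / (μ * (p ^ 2 + (0:ℝ) ^ 2) ^ μ) - ∑' k : ℕ, gg μ 0 ((k:ℝ) + 1 + u))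
        + c * (1 / (μ * (p ^ 2 + t ^ 2) ^ μ) - ∑' k : ℕ, gg μ t ((k:ℝ) + 1 + u)) := by
  set F : ℝ → ℝ := fun x => gg μ 0 x + c * gg μ t x with hF
  have hd : ∀ x, 0 < x → HasDerivAt F (gg₁ μ 0 x + c * gg₁ μ t x) x := fun x hx =>
    (hasDerivAt_gg μ 0 hx).add ((hasDerivAt_gg μ t hx).const_mul c)
  have hd' : ∀ x, 0 < x → HasDerivAt (fun x => gg₁ μ 0 x + c * gg₁ μ t x)
      (gg₂ μ 0 x + c * gg₂ μ t x) x := fun x hx =>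
    (hasDerivAt_gg₁ μ 0 hx).add ((hasDerivAt_gg₁ μ t hx).const_mul c)
  obtain ⟨hneg, hpos⟩ := deriv_bounds hμ ht c hc
  have hpk : ∀ k : ℕ, (0:ℝ) < p + k := fun k => by positivity
  have key : ∀ k : ℕ, F ((k:ℝ) + 1 + u) < ∫ x in (p + k)..(p + k + 1), F x := by
    intro k
    apply core_mid hd hd' hneg hpos (hpk k)
    have : (0:ℝ) ≤ (k:ℝ) := Nat.cast_nonneg k
    linarith
  have hS0 := hasSum_integrals hμ hp 0
  have hSt := hasSum_integrals hμ hp t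
  have hsm0 := summable_gg hμ hu 0 (μ := μ)
  have hsmt := summable_gg hμ hu t (μ := μ)
  have hik : (fun k : ℕ => ∫ x in (p + k)..(p + k + 1), F x)
      = fun k : ℕ => (∫ x in (p + k)..(p + k + 1), gg μ 0 x)
        + c * ∫ x in (p + k)..(p + k + 1), gg μ t x := by
    funext k
    have h1 := gg_intInt μ 0 (hpk k) (by linarith : p + (k:ℝ) ≤ p + k + 1)
    have h2 := gg_intInt μ t (hpk k) (by linarith : p + (k:ℝ) ≤ p + k + 1)
    rw [← intervalIntegral.integral_const_mul, ← intervalIntegral.integral_add h1 (h2.const_mul c)]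
  have hsum_int : HasSum (fun k : ℕ => ∫ x in (p + k)..(p + k + 1), F x)
      (1 / (μ * (p ^ 2 + (0:ℝ) ^ 2) ^ μ) + c * (1 / (μ * (p ^ 2 + t ^ 2) ^ μ))) := by
    rw [hik]
    exact hS0.add (hSt.mul_left c)
  have hsum_a : HasSum (fun k : ℕ => F ((k:ℝ) + 1 + u))
      ((∑' k : ℕ, gg μ 0 ((k:ℝ) + 1 + u)) + c * ∑' k : ℕ, gg μ t ((k:ℝ) + 1 + u)) :=
    hsm0.hasSum.add (hsmt.hasSum.mul_left c)
  have hterm := hsum_int.sub hsum_a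
  have hpos_tsum : 0 < (1 / (μ * (p ^ 2 + (0:ℝ) ^ 2) ^ μ) + c * (1 / (μ * (p ^ 2 + t ^ 2) ^ μ)))
      - ((∑' k : ℕ, gg μ 0 ((k:ℝ) + 1 + u)) + c * ∑' k : ℕ, gg μ t ((k:ℝ) + 1 + u)) := by
    rw [← hterm.tsum_eq]
    refine Summable.tsum_pos hterm.summable (fun k => ?_) 0 ?_
    · exact sub_nonneg.2 (key k).le
    · exact sub_pos.2 (key 0)
  linarith

lemma caseB {μ p u t : ℝ} (hμ : 0 < μ) (hp : 0 < p) (hu : -1 < u) (ht : 0 < t)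
    (hpu : u + 1 ≤ p) (c : ℝ) (hc : |c| ≤ 1) :
    0 < ((∑' k : ℕ, gg μ 0 ((k:ℝ) + 1 + u)) - 1 / (μ * (p ^ 2 + (0:ℝ) ^ 2) ^ μ))
        + c * ((∑' k : ℕ, gg μ t ((k:ℝ) + 1 + u)) - 1 / (μ * (p ^ 2 + t ^ 2) ^ μ)) := by
  set F : ℝ → ℝ := fun x => gg μ 0 x + c * gg μ t x with hF
  have hd : ∀ x, 0 < x → HasDerivAt F (gg₁ μ 0 x + c * gg₁ μ t x) x := fun x hx =>
    (hasDerivAt_gg μ 0 hx).add ((hasDerivAt_gg μ t hx).const_mul c)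
  obtain ⟨hneg, _⟩ := deriv_bounds hμ ht c hc
  have hpk : ∀ k : ℕ, (0:ℝ) < p + k := fun k => by positivity
  have ha0 : ∀ k : ℕ, (0:ℝ) < (k:ℝ) + 1 + u := by
    intro k
    have : (0:ℝ) ≤ (k:ℝ) := Nat.cast_nonneg k
    linarith
  have key : ∀ k : ℕ, (∫ x in (p + k)..(p + k + 1), F x) < F ((k:ℝ) + 1 + u) := by
    intro k
    apply core_right hd hneg (ha0 k)
    linarith
  have hS0 := hasSum_integrals hμ hp 0
  have hSt := hasSum_integrals hμ hp t
  have hsm0 := summable_gg hμ hu 0 (μ := μ)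
  have hsmt := summable_gg hμ hu t (μ := μ)
  have hik : (fun k : ℕ => ∫ x in (p + k)..(p + k + 1), F x)
      = fun k : ℕ => (∫ x in (p + k)..(p + k + 1), gg μ 0 x)
        + c * ∫ x in (p + k)..(p + k + 1), gg μ t x := by
    funext k
    have h1 := gg_intInt μ 0 (hpk k) (by linarith : p + (k:ℝ) ≤ p + k + 1)
    have h2 := gg_intInt μ t (hpk k) (by linarith : p + (k:ℝ) ≤ p + k + 1)
    rw [← intervalIntegral.integral_const_mul, ← intervalIntegral.integral_add h1 (h2.const_mul c)]
  have hsum_int : HasSum (fun k : ℕ => ∫ x in (p + k)..(p + k + 1), F x)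
      (1 / (μ * (p ^ 2 + (0:ℝ) ^ 2) ^ μ) + c * (1 / (μ * (p ^ 2 + t ^ 2) ^ μ))) := by
    rw [hik]
    exact hS0.add (hSt.mul_left c)
  have hsum_a : HasSum (fun k : ℕ => F ((k:ℝ) + 1 + u))
      ((∑' k : ℕ, gg μ 0 ((k:ℝ) + 1 + u)) + c * ∑' k : ℕ, gg μ t ((k:ℝ) + 1 + u)) :=
    hsm0.hasSum.add (hsmt.hasSum.mul_left c)
  have hterm := hsum_a.sub hsum_int
  have hpos_tsum : 0 < ((∑' k : ℕ, gg μ 0 ((k:ℝ) + 1 + u)) + c * ∑' k : ℕ, gg μ t ((k:ℝ) + 1 + u))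
      - (1 / (μ * (p ^ 2 + (0:ℝ) ^ 2) ^ μ) + c * (1 / (μ * (p ^ 2 + t ^ 2) ^ μ))) := by
    rw [← hterm.tsum_eq]
    refine Summable.tsum_pos hterm.summable (fun k => ?_) 0 ?_
    · exact sub_nonneg.2 (key k).le
    · exact sub_pos.2 (key 0)
  linarith

theorem S_mu_abs_bounds (μ p u t : ℝ) (hμ : 0 < μ) (hp : 0 < p) (hu : -1 < u) (ht : 0 < t) :
    (p - u ≤ 1 / 2 →
      |1 / (μ * (p ^ 2 + t ^ 2) ^ μ)
          - ∑' k : ℕ, 2 * ((k : ℝ) + 1 + u) / ((((k : ℝ) + 1 + u) ^ 2 + t ^ 2) ^ (μ + 1))|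
        < 1 / (μ * p ^ (2 * μ))
          - ∑' k : ℕ, 2 * ((k : ℝ) + 1 + u) / ((((k : ℝ) + 1 + u) ^ 2 + (0:ℝ) ^ 2) ^ (μ + 1))) ∧
    (1 ≤ p - u →
      |1 / (μ * (p ^ 2 + t ^ 2) ^ μ)
          - ∑' k : ℕ, 2 * ((k : ℝ) + 1 + u) / ((((k : ℝ) + 1 + u) ^ 2 + t ^ 2) ^ (μ + 1))|
        < (∑' k : ℕ, 2 * ((k : ℝ) + 1 + u) / ((((k : ℝ) + 1 + u) ^ 2 + (0:ℝ) ^ 2) ^ (μ + 1)))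
          - 1 / (μ * p ^ (2 * μ))) := by
  have e2μ : (p:ℝ) ^ (2 * μ) = (p ^ 2 + (0:ℝ) ^ 2) ^ μ := by
    rw [show p ^ 2 + (0:ℝ) ^ 2 = p ^ 2 by norm_num, ← Real.rpow_natCast p 2,
      ← Real.rpow_mul hp.le]
    norm_num
  constructor
  · intro hpu
    have h1 := caseA hμ hp hu ht (by linarith) 1 (by norm_num)
    have h2 := caseA hμ hp hu ht (by linarith) (-1) (by norm_num)
    simp only [gg] at h1 h2
    rw [abs_lt, e2μ]
    constructor <;> linarith
  · intro hpu
    have h1 := caseB hμ hp hu ht (by linarith) 1 (by norm_num)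
    have h2 := caseB hμ hp hu ht (by linarith) (-1) (by norm_num)
    simp only [gg] at h1 h2
    rw [abs_lt, e2μ]
    constructor <;> linarith
end
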